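/- arXiv:2204.10924 — 10 statements merged into one kernel-verified Lean document; each statement's English description precedes it below -/
import Mathlib

section
/- Let K be a nonarchimedean local field with ring of integers O_K, and let O be an order in a finite-rank étale K-algebra L. Then a fractional O-ideal is invertible if and only if it is principal. -/
universe v
open IsLocalRing in
lemma auxFiniteQuot (O_K O : Type*) [CommRing O_K] [IsLocalRing O_K]
    [Finite (ResidueField O_K)] [CommRing O] [Algebra O_K O] [Module.Finite O_K O] :
    Finite (O ⧸ Ideal.map (algebraMap O_K O) (maximalIdeal O_K)) := by
  classical
  set I := Ideal.map (algebraMap O_K O) (maximalIdeal O_K) with hI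
  obtain ⟨s, hs⟩ := Module.Finite.fg_top (R := O_K) (M := O)
  have key : ∀ (c : O_K), c ∈ maximalIdeal O_K → ∀ g : O, c • g ∈ I := by
    intro c hc g
    rw [Algebra.smul_def]
    exact Ideal.mul_mem_right _ _ (Ideal.mem_map_of_mem _ hc)
  refine Finite.of_surjective
    (fun c : ↥s → ResidueField O_K =>
      Ideal.Quotient.mk I (∑ i ∈ s.attach, (Quotient.out (c i)) • (i : O))) ?_
  intro q
  obtain ⟨r, rfl⟩ := Ideal.Quotient.mk_surjective q
  have hr : r ∈ Submodule.span O_K (↑s : Set O) := hs ▸ Submodule.mem_top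
  obtain ⟨f, -, hf⟩ := Submodule.mem_span_finset.mp hr
  refine ⟨fun i => residue O_K (f i), ?_⟩
  rw [Ideal.Quotient.eq]
  have : (∑ i ∈ s.attach, (Quotient.out (residue O_K (f i))) • (i : O)) - r
      = ∑ i ∈ s.attach, ((Quotient.out (residue O_K (f i))) - f i) • (i : O) := by
    rw [← hf, ← Finset.sum_attach s (fun i => f i • i), ← Finset.sum_sub_distrib]
    simp [sub_smul]
  rw [this]
  refine Submodule.sum_mem _ fun i _ => key _ ?_ _
  have : residue O_K (Quotient.out (residue O_K (f i))) = residue O_K (f i) := by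
    exact Quotient.out_eq _
  exact Ideal.Quotient.eq.mp this

open IsLocalRing in
lemma auxFiniteMax (O_K O : Type*) [CommRing O_K] [IsLocalRing O_K]
    [Finite (ResidueField O_K)] [CommRing O] [Algebra O_K O] [Module.Finite O_K O] :
    Finite {I : Ideal O | I.IsMaximal} := by
  classical
  set I := Ideal.map (algebraMap O_K O) (maximalIdeal O_K) with hIdef
  have hQ : Finite (O ⧸ I) := auxFiniteQuot O_K O
  have hIdeals : Finite (Ideal (O ⧸ I)) :=
    Finite.of_injective (fun J : Ideal (O ⧸ I) => (J : Set (O ⧸ I))) SetLike.coe_injective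
  have hle : ∀ M : Ideal O, M.IsMaximal → I ≤ M := by
    intro M hM
    haveI := hM
    haveI : Algebra.IsIntegral O_K O := Algebra.IsIntegral.of_finite _ _
    have h1 := Ideal.isMaximal_comap_of_isIntegral_of_isMaximal (R := O_K) M
    rw [hIdef, Ideal.map_le_iff_le_comap, IsLocalRing.eq_maximalIdeal h1]
  apply Finite.of_injective
    (fun m : {I : Ideal O | I.IsMaximal} => Ideal.map (Ideal.Quotient.mk I) m.1)
  intro m m' h
  have hm := congrArg (Ideal.comap (Ideal.Quotient.mk I)) h
  rw [Ideal.comap_map_of_surjective _ Ideal.Quotient.mk_surjective,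
      Ideal.comap_map_of_surjective _ Ideal.Quotient.mk_surjective,
      ← RingHom.ker_eq_comap_bot, Ideal.mk_ker,
      sup_eq_left.mpr (hle _ m.2), sup_eq_left.mpr (hle _ m'.2)] at hm
  exact Subtype.ext hm


/-- Let `K` be a nonarchimedean local field with ring of integers `O_K`
(a complete discrete valuation ring with finite residue field), and let `O` be an order in a
finite-rank étale `K`-algebra `L`.  Then a fractional `O`-ideal (a finitely generated full
`O`-submodule of `L`) is invertible if and only if it is principal (generated by a unit of `L`). -/
theorem stmt_0
    (O_K O : Type*) (K L : Type v)
    [CommRing O_K] [IsDomain O_K] [IsDiscreteValuationRing O_K]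
    [IsAdicComplete (IsLocalRing.maximalIdeal O_K) O_K]
    [Finite (IsLocalRing.ResidueField O_K)]
    [Field K] [Algebra O_K K] [IsFractionRing O_K K]
    [CommRing L] [Algebra K L] [Module.Finite K L] [Algebra.Etale K L]
    [CommRing O] [Algebra O_K O] [Algebra O L] [Algebra O_K L]
    [IsScalarTower O_K O L] [IsScalarTower O_K K L]
    (hOinj : Function.Injective (algebraMap O L))
    [Module.Finite O_K O]
    (hOfull : Submodule.span K (Set.range (algebraMap O L)) = ⊤)
    (a : Submodule O L) (haFG : a.FG)
    (hafull : Submodule.span K (a : Set L) = ⊤) :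
    (∃ b : Submodule O L, a * b = 1) ↔ ∃ α : Lˣ, a = Submodule.span O {(α : L)} := by
  constructor
  · rintro ⟨b, hab⟩
    classical
    haveI : Finite {I : Ideal O | I.IsMaximal} := auxFiniteMax O_K O
    haveI : Fintype {I : Ideal O | I.IsMaximal} := Fintype.ofFinite _
    have key : ∀ m : {I : Ideal O | I.IsMaximal},
        ∃ x ∈ a, ∃ y ∈ b, ∃ c : O, c ∉ m.1 ∧ algebraMap O L c = x * y := by
      intro m
      by_contra hcon
      push_neg at hcon
      have hle : a * b ≤ Submodule.map (Algebra.linearMap O L) m.1 := by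
        rw [Submodule.mul_le]
        intro x hx y hy
        have hxy : x * y ∈ (1 : Submodule O L) := by
          rw [← hab]; exact Submodule.mul_mem_mul hx hy
        rw [Submodule.one_eq_range] at hxy
        obtain ⟨c, hc⟩ := hxy
        refine Submodule.mem_map.mpr ⟨c, ?_, hc⟩
        by_contra hcmem
        exact (hcon x hx y hy c hcmem) hc
      rw [hab] at hle
      have h1 : (1 : L) ∈ Submodule.map (Algebra.linearMap O L) m.1 :=
        hle (Submodule.one_le.mp le_rfl)
      obtain ⟨c, hcmem, hc⟩ := h1
      have hc1 : c = 1 := hOinj (by simpa using hc)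
      exact m.2.ne_top (Ideal.eq_top_of_isUnit_mem _ (hc1 ▸ hcmem) isUnit_one)
    choose x hxa y hyb c hcm hfc using key
    have hcop : Pairwise fun (m m' : {I : Ideal O | I.IsMaximal}) => IsCoprime m.1 m'.1 :=
      fun m m' hne =>
        Ideal.isCoprime_iff_sup_eq.mpr (m.2.coprime_of_ne m'.2 fun h => hne (Subtype.ext h))
    have hE : ∀ m : {I : Ideal O | I.IsMaximal},
        ∃ e : O, e - 1 ∈ m.1 ∧ ∀ m', m' ≠ m → e ∈ m'.1 := by
      intro m
      obtain ⟨e, he⟩ := Ideal.exists_forall_sub_mem_ideal hcop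
        (fun m' => if m' = m then 1 else 0)
      exact ⟨e, by simpa using he m, fun m' hm' => by simpa [hm'] using he m'⟩
    choose e he1 he0 using hE
    set α : L := ∑ m : {I : Ideal O | I.IsMaximal}, e m • x m with hα
    have hαa : α ∈ a := Submodule.sum_mem _ fun m _ => Submodule.smul_mem _ _ (hxa m)
    have hJle : Submodule.span O {α} * b ≤ 1 := by
      rw [← hab]
      exact mul_le_mul' (Submodule.span_le.mpr
        (Set.singleton_subset_iff.mpr hαa)) le_rfl
    have hJ : Submodule.span O {α} * b = 1 := by
      refine le_antisymm hJle ?_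
      rw [Submodule.one_le]
      have hIJ : Submodule.comap (Algebra.linearMap O L) (Submodule.span O {α} * b) = ⊤ := by
        by_contra hne
        obtain ⟨M, hM, hMle⟩ := Ideal.exists_le_maximal _ hne
        set m : {I : Ideal O | I.IsMaximal} := ⟨M, hM⟩ with hmdef
        have hd : ∀ m', ∃ dd : O, algebraMap O L dd = x m' * y m := by
          intro m'
          have hmem1 : x m' * y m ∈ (1 : Submodule O L) := by
            rw [← hab]; exact Submodule.mul_mem_mul (hxa m') (hyb m)
          rw [Submodule.one_eq_range] at hmem1
          obtain ⟨dd, hdd⟩ := hmem1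
          exact ⟨dd, hdd⟩
        choose d hdm using hd
        have hz : algebraMap O L (∑ m', e m' * d m') = α * y m := by
          rw [map_sum, hα, Finset.sum_mul]
          refine Finset.sum_congr rfl fun m' _ => ?_
          rw [map_mul, hdm m', Algebra.smul_def, mul_assoc]
        have hmem : (∑ m', e m' * d m') ∈ M := by
          apply hMle
          simp only [Submodule.mem_comap, Algebra.linearMap_apply]
          rw [hz]
          exact Submodule.mul_mem_mul (Submodule.mem_span_singleton_self α) (hyb m)
        have hsplit : e m * d m ∈ M := by
          have hsum := Finset.add_sum_erase Finset.univ (fun m' => e m' * d m')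
            (Finset.mem_univ m)
          have hrest : (∑ m' ∈ Finset.univ.erase m, e m' * d m') ∈ M :=
            Submodule.sum_mem _ fun m' hm' =>
              Ideal.mul_mem_right _ _ (he0 m' m (Ne.symm (Finset.ne_of_mem_erase hm')))
          have : e m * d m = (∑ m', e m' * d m') - ∑ m' ∈ Finset.univ.erase m, e m' * d m' := by
            rw [← hsum]; ring
          rw [this]
          exact Ideal.sub_mem _ hmem hrest
        have hdM : d m ∈ M := by
          have h1 : (e m - 1) * d m ∈ M := Ideal.mul_mem_right _ _ (he1 m)
          have : d m = e m * d m - (e m - 1) * d m := by ring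
          rw [this]
          exact Ideal.sub_mem _ hsplit h1
        have hdc : d m = c m := hOinj (by rw [hdm m, hfc m])
        exact hcm m (hdc ▸ hdM)
      have h1m : (1 : O) ∈ Submodule.comap (Algebra.linearMap O L)
          (Submodule.span O {α} * b) := hIJ ▸ Submodule.mem_top
      simpa using h1m
    have h1J : (1 : L) ∈ Submodule.span O {α} * b := by
      rw [hJ]; exact Submodule.one_le.mp le_rfl
    obtain ⟨β, hβb, hβ⟩ := Submodule.mem_span_singleton_mul.mp h1J
    refine ⟨⟨α, β, hβ, by rw [mul_comm]; exact hβ⟩, ?_⟩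
    calc a = a * 1 := (mul_one a).symm
      _ = a * (Submodule.span O {α} * b) := by rw [hJ]
      _ = Submodule.span O {α} * (a * b) := mul_left_comm a _ b
      _ = Submodule.span O {α} * 1 := by rw [hab]
      _ = Submodule.span O {α} := mul_one _
  · rintro ⟨α, rfl⟩
    refine ⟨Submodule.span O {((α⁻¹ : Lˣ) : L)}, ?_⟩
    rw [Submodule.span_mul_span, Set.singleton_mul_singleton, Units.mul_inv,
      Submodule.one_eq_span]
end

section
/- Let K be a nonarchimedean local field and let O be an order in a finite-rank étale K-algebra L. Then L decomposes as a product L = L_1 × ⋯ × L_s of products of its field factors, such that O = O_1 × ⋯ × O_s is the product of orders O_i ⊆ L_i, where each O_i has a unique maximal ideal lying over the maximal ideal of O_K (so every element of O_i not in that maximal ideal is a unit). -/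
universe v


section Aux
open Submodule

variable {R A : Type*} [CommRing R] [CommRing A] [Algebra R A]

lemma aux_mem_map_iff {ι : Type*} (b : Module.Basis ι R A) (I : Ideal R) (x : A) :
    x ∈ I.map (algebraMap R A) ↔ ∀ i, b.repr x i ∈ I := by
  have h : x ∈ I.map (algebraMap R A) ↔ x ∈ (I • (⊤ : Submodule R A) : Submodule R A) := by
    rw [Ideal.smul_top_eq_map]; rfl
  rw [h, ← b.span_eq, Submodule.mem_ideal_smul_span_iff_exists_sum]
  constructor
  · rintro ⟨a, ha, rfl⟩
    have : b.repr (a.sum fun i c => c • b i) = a := by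
      rw [← Finsupp.linearCombination_apply, b.repr_linearCombination]
    rw [this]; exact ha
  · intro h
    exact ⟨b.repr x, h, by rw [← Finsupp.linearCombination_apply, b.linearCombination_repr]⟩

lemma aux_smul_top_iff {ι : Type*} (b : Module.Basis ι R A) (I : Ideal R) (n : ℕ) (x : A) :
    x ∈ ((I.map (algebraMap R A)) ^ n • (⊤ : Submodule A A) : Submodule A A) ↔
      ∀ i, b.repr x i ∈ I ^ n := by
  rw [Ideal.smul_top_eq_map, Submodule.restrictScalars_mem, Algebra.algebraMap_self, Ideal.map_id,
    ← Ideal.map_pow, aux_mem_map_iff]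

lemma aux_smul_top_iff_self (I : Ideal R) (n : ℕ) (x : R) :
    x ∈ ((I : Ideal R) ^ n • (⊤ : Submodule R R) : Submodule R R) ↔ x ∈ I ^ n := by
  rw [Ideal.smul_top_eq_map, Submodule.restrictScalars_mem, Algebra.algebraMap_self, Ideal.map_id]

lemma aux_isAdicComplete {ι : Type*} [Fintype ι] (b : Module.Basis ι R A) (I : Ideal R)
    [IsAdicComplete I R] : IsAdicComplete (I.map (algebraMap R A)) A := by
  refine { toIsHausdorff := ⟨?_⟩, toIsPrecomplete := ⟨?_⟩ }
  · intro x hx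
    have hco : ∀ i, b.repr x i = 0 := by
      intro i
      refine IsHausdorff.haus (IsAdicComplete.toIsHausdorff (I := I) (M := R)) _ fun n => ?_
      rw [SModEq.zero, aux_smul_top_iff_self]
      exact (aux_smul_top_iff b I n x).mp ((SModEq.zero).mp (hx n)) i
    have : b.repr x = 0 := Finsupp.ext hco
    simpa using congrArg b.repr.symm this
  · intro f hf
    have hcau : ∀ i, ∃ L, ∀ n, b.repr (f n) i ≡ L [SMOD (I ^ n • ⊤ : Submodule R R)] := by
      intro i
      refine IsPrecomplete.prec (IsAdicComplete.toIsPrecomplete (I := I) (M := R)) ?_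
      intro m n hmn
      have h2 : f m - f n ∈ ((I.map (algebraMap R A)) ^ m • (⊤ : Submodule A A) : Submodule A A) :=
        (SModEq.sub_mem).mp (hf hmn)
      have h3 := (aux_smul_top_iff b I m _).mp h2 i
      rw [SModEq.sub_mem, aux_smul_top_iff_self]
      simpa using h3
    choose L hL using hcau
    refine ⟨b.equivFun.symm L, fun n => ?_⟩
    rw [SModEq.sub_mem, aux_smul_top_iff b]
    intro i
    have h1 : b.repr (f n - b.equivFun.symm L) i = b.repr (f n) i - L i := by
      rw [map_sub, Finsupp.sub_apply, ← Module.Basis.equivFun_apply, ← Module.Basis.equivFun_apply,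
        b.equivFun.apply_symm_apply]
    rw [h1]
    have := (hL i n)
    rw [SModEq.sub_mem, aux_smul_top_iff_self] at this
    exact this
end Aux

section Idem
open Polynomial
variable {R : Type*} [CommRing R]

lemma aux_idem_eq {e f : R} (he : IsIdempotentElem e) (hf : IsIdempotentElem f)
    (h : e - f ∈ Ideal.jacobson (⊥ : Ideal R)) : e = f := by
  have h3 : (e - f) ^ 3 = e - f := by
    linear_combination (e + 1 - 3 * f) * he.eq + (3 * e - f - 1) * hf.eq
  have hx2 : (e - f) * (e - f) ∈ Ideal.jacobson (⊥ : Ideal R) := Ideal.mul_mem_left _ _ h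
  have hu : IsUnit (1 - (e - f) * (e - f)) := by
    have := Ideal.mem_jacobson_bot.mp hx2 (-1)
    rwa [mul_neg_one, neg_add_eq_sub] at this
  have h0 : (e - f) * (1 - (e - f) * (e - f)) = 0 := by linear_combination -h3
  exact sub_eq_zero.mp (hu.mul_left_eq_zero.mp h0)

lemma aux_lift_idem (I : Ideal R) [HenselianRing R I] {eb : R ⧸ I} (heb : IsIdempotentElem eb) :
    ∃ e : R, IsIdempotentElem e ∧ Ideal.Quotient.mk I e = eb := by
  obtain ⟨a₀, rfl⟩ := Ideal.Quotient.mk_surjective eb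
  cases subsingleton_or_nontrivial R
  · exact ⟨a₀, Subsingleton.elim _ _, rfl⟩
  have hmonic : (X ^ 2 - X : R[X]).Monic := by
    apply (Polynomial.monic_X_pow 2).sub_of_left
    rw [Polynomial.degree_X_pow, Polynomial.degree_X]
    norm_num
  have heval : (X ^ 2 - X : R[X]).eval a₀ ∈ I := by
    rw [← Ideal.Quotient.eq_zero_iff_mem]
    have : ((X ^ 2 - X : R[X]).eval a₀) = a₀ ^ 2 - a₀ := by simp
    rw [this, map_sub, map_pow]
    have := heb.eq
    rw [sq, this, sub_self]
  have hderiv : IsUnit (Ideal.Quotient.mk I ((derivative (X ^ 2 - X : R[X])).eval a₀)) := by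
    have hd : (derivative (X ^ 2 - X : R[X])).eval a₀ = 2 * a₀ - 1 := by
      simp [Polynomial.derivative_sub, Polynomial.derivative_X_pow]
      ring
    have h1 : Ideal.Quotient.mk I ((derivative (X ^ 2 - X : R[X])).eval a₀)
        = 2 * Ideal.Quotient.mk I a₀ - 1 := by
      rw [hd, map_sub, map_mul, map_one, map_ofNat]
    rw [h1]
    refine IsUnit.of_mul_eq_one (2 * Ideal.Quotient.mk I a₀ - 1) ?_
    have := heb.eq
    linear_combination 4 * this
  obtain ⟨a, ha, haI⟩ := HenselianRing.is_henselian (X ^ 2 - X : R[X]) hmonic a₀ heval hderiv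
  refine ⟨a, ?_, ?_⟩
  · have : a ^ 2 - a = 0 := by simpa using ha
    unfold IsIdempotentElem
    linear_combination this
  · rwa [Ideal.Quotient.mk_eq_mk_iff_sub_mem]

lemma aux_lift_coi {n : ℕ} (I : Ideal R) [HenselianRing R I] {eb : Fin n → R ⧸ I}
    (heb : CompleteOrthogonalIdempotents eb) :
    ∃ e : Fin n → R, CompleteOrthogonalIdempotents e ∧
      ∀ i, Ideal.Quotient.mk I (e i) = eb i := by
  have hjac : I ≤ Ideal.jacobson ⊥ := HenselianRing.jac
  choose e hidem hmk using fun i => aux_lift_idem I (heb.idem i)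
  have hortho : Pairwise fun i j => e i * e j = 0 := by
    intro i j hij
    have hij' : IsIdempotentElem (e i * e j) := by
      unfold IsIdempotentElem
      rw [mul_mul_mul_comm, hidem i, hidem j]
    refine aux_idem_eq hij' IsIdempotentElem.zero (hjac ?_)
    rw [sub_zero, ← Ideal.Quotient.eq_zero_iff_mem, map_mul, hmk, hmk]
    exact heb.ortho hij
  have hOI : OrthogonalIdempotents e := ⟨hidem, hortho⟩
  have hsum : (∑ i, e i) = 1 := by
    refine aux_idem_eq hOI.isIdempotentElem_sum IsIdempotentElem.one (hjac ?_)
    rw [← Ideal.Quotient.eq_zero_iff_mem, map_sub, map_sum, map_one]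
    simp_rw [hmk]
    rw [heb.complete, sub_self]
  exact ⟨e, ⟨hOI, hsum⟩, hmk⟩

end Idem

section PiUnit

lemma aux_pi_isUnit {ι : Type*} {R : ι → Type*} [∀ i, CommRing (R i)] {x : ∀ i, R i}
    (h : ∀ i, IsUnit (x i)) : IsUnit x := by
  choose u hu using h
  exact IsUnit.of_mul_eq_one (fun i => ↑(u i)⁻¹)
    (funext fun i => by show x i * _ = 1; rw [← hu i, Units.mul_inv])

lemma aux_isUnit_of_map {R S : Type*} [CommRing R] [CommRing S] (f : R →+* S)
    (hsurj : Function.Surjective f) (hker : ∀ x, f x = 0 → x ∈ Ideal.jacobson (⊥ : Ideal R))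
    (b : R) (hb : IsUnit (f b)) : IsUnit b := by
  obtain ⟨u, hu⟩ := hb
  obtain ⟨c, hc⟩ := hsurj (↑u⁻¹)
  have h0 : f (b * c - 1) = 0 := by
    rw [map_sub, map_mul, ← hu, hc, map_one, Units.mul_inv, sub_self]
  have := Ideal.mem_jacobson_bot.mp (hker _ h0) 1
  rw [mul_one, sub_add_cancel] at this
  exact isUnit_of_mul_isUnit_left this

end PiUnit

set_option maxHeartbeats 2000000
set_option synthInstance.maxHeartbeats 1000000

/-- Let `K` be a nonarchimedean local field and `O` an order in a finite-rank
étale `K`-algebra `L`.  Then `L` decomposes as a finite product `L = L₁ × ⋯ × Lₛ` of étale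
`K`-algebras (products of the field factors of `L`) in such a way that `O = O₁ × ⋯ × Oₛ` is the
product of orders `Oᵢ ⊆ Lᵢ`, where each `Oᵢ` is a local ring (it has a unique maximal ideal, so
every element of `Oᵢ` outside that ideal is a unit).  The decomposition is expressed here via a
complete system of nonzero orthogonal idempotents `e i ∈ O`. -/
theorem stmt_1
    (O_K O : Type*) (K L : Type v)
    [CommRing O_K] [IsDomain O_K] [IsDiscreteValuationRing O_K]
    [IsAdicComplete (IsLocalRing.maximalIdeal O_K) O_K]
    [Finite (IsLocalRing.ResidueField O_K)]
    [Field K] [Algebra O_K K] [IsFractionRing O_K K]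
    [CommRing L] [Algebra K L] [Module.Finite K L] [Algebra.Etale K L]
    [CommRing O] [Algebra O_K O] [Algebra O L] [Algebra O_K L]
    [IsScalarTower O_K O L] [IsScalarTower O_K K L]
    (hOinj : Function.Injective (algebraMap O L))
    [Module.Finite O_K O]
    (hOfull : Submodule.span K (Set.range (algebraMap O L)) = ⊤) :
    ∃ (s : ℕ) (e : Fin s → O),
      (∀ i, e i * e i = e i) ∧
      (∀ i j, i ≠ j → e i * e j = 0) ∧
      (∑ i, e i) = 1 ∧
      (∀ i, e i ≠ 0) ∧
      Function.Bijective
        (fun (x : O) => fun i : Fin s => Ideal.Quotient.mk (Ideal.span {1 - e i}) x) ∧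
      (∀ i, IsLocalRing (O ⧸ Ideal.span {1 - e i})) ∧
      Function.Bijective
        (fun (x : L) => fun i : Fin s =>
          Ideal.Quotient.mk (Ideal.span {1 - algebraMap O L (e i)}) x) ∧
      (∀ i, Algebra.Etale K (L ⧸ Ideal.span {1 - algebraMap O L (e i)})) := by

  classical
  rcases subsingleton_or_nontrivial O with hsub | hnontriv
  · have hL : Subsingleton L := by
      have h01 : (0 : L) = 1 := by
        have h1 : (1 : O) = 0 := Subsingleton.elim _ _
        calc (0 : L) = algebraMap O L 0 := (map_zero _).symm
          _ = algebraMap O L 1 := by rw [h1]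
          _ = 1 := map_one _
      exact subsingleton_of_zero_eq_one h01
    refine ⟨0, Fin.elim0, fun i => i.elim0, fun i _ _ => i.elim0, Subsingleton.elim _ _,
      fun i => i.elim0, ⟨fun a b _ => Subsingleton.elim a b, fun y => ⟨1, Subsingleton.elim _ _⟩⟩,
      fun i => i.elim0, ⟨fun a b _ => Subsingleton.elim a b, fun y => ⟨1, Subsingleton.elim _ _⟩⟩,
      fun i => i.elim0⟩
  -- main case
  haveI hNZ : NoZeroSMulDivisors O_K O := by
    refine ⟨fun {a x} h => ?_⟩
    by_cases ha : a = 0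
    · exact Or.inl ha
    · refine Or.inr (hOinj ?_)
      rw [map_zero]
      have h1 : algebraMap O L (a • x) = 0 := by rw [h, map_zero]
      rw [Algebra.smul_def, map_mul, ← IsScalarTower.algebraMap_apply O_K O L,
        IsScalarTower.algebraMap_apply O_K K L] at h1
      have hu : IsUnit (algebraMap K L (algebraMap O_K K a)) := by
        refine IsUnit.map _ (isUnit_iff_ne_zero.mpr ?_)
        exact fun hz => ha (IsFractionRing.injective O_K K (by rw [hz, map_zero]))
      exact (hu.mul_right_eq_zero).mp h1
  haveI : Module.Free O_K O := Module.free_of_finite_type_torsion_free'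
  let b : Module.Basis (Module.Free.ChooseBasisIndex O_K O) O_K O := Module.Free.chooseBasis O_K O
  set p := IsLocalRing.maximalIdeal O_K with hpdef
  set J : Ideal O := p.map (algebraMap O_K O) with hJdef
  haveI : IsAdicComplete J O := aux_isAdicComplete b p
  haveI hHens : HenselianRing O J := inferInstance
  have hJjac : J ≤ Ideal.jacobson ⊥ := IsAdicComplete.le_jacobson_bot J
  -- O/J is finite
  haveI hfinres : Finite (O_K ⧸ p) := inferInstanceAs (Finite (IsLocalRing.ResidueField O_K))
  haveI hfin : Finite (O ⧸ J) := by
    have hmk : ∀ y : O_K ⧸ p, ∃ z, Ideal.Quotient.mk p z = y := Ideal.Quotient.mk_surjective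
    choose σp hσp using hmk
    refine Finite.of_surjective
      (fun c : Module.Free.ChooseBasisIndex O_K O → O_K ⧸ p =>
        Ideal.Quotient.mk J (b.equivFun.symm (fun i => σp (c i)))) ?_
    intro y
    obtain ⟨x, rfl⟩ := Ideal.Quotient.mk_surjective y
    refine ⟨fun i => Ideal.Quotient.mk p (b.repr x i), ?_⟩
    rw [Ideal.Quotient.mk_eq_mk_iff_sub_mem]
    refine (aux_mem_map_iff b p _).mpr fun i => ?_
    have h1 : b.repr (b.equivFun.symm (fun j => σp (Ideal.Quotient.mk p (b.repr x j))) - x) i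
        = σp (Ideal.Quotient.mk p (b.repr x i)) - b.repr x i := by
      rw [map_sub, Finsupp.sub_apply, ← Module.Basis.equivFun_apply, b.equivFun.apply_symm_apply]
    rw [h1]
    exact (Ideal.Quotient.mk_eq_mk_iff_sub_mem _ _).mp (hσp _)
  haveI : IsArtinianRing (O ⧸ J) := inferInstance
  haveI : Nontrivial (O ⧸ J) := by
    refine Ideal.Quotient.nontrivial_iff.mpr fun htop => ?_
    have h1 : (⊤ : Submodule O_K O) ≤ p • (⊤ : Submodule O_K O) := by
      rw [Ideal.smul_top_eq_map, ← hJdef, htop]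
      intro x _
      exact Submodule.mem_top
    have h2 := Submodule.eq_bot_of_le_smul_of_le_jacobson_bot p ⊤ Module.Finite.fg_top h1
      (IsLocalRing.maximalIdeal_le_jacobson ⊥)
    have h3 : (1 : O) ∈ (⊥ : Submodule O_K O) := h2 ▸ Submodule.mem_top
    exact one_ne_zero ((Submodule.mem_bot _).mp h3)
  haveI hmaxfin : Finite (MaximalSpectrum (O ⧸ J)) := inferInstance
  haveI : Fintype (MaximalSpectrum (O ⧸ J)) := Fintype.ofFinite _
  let E := IsArtinianRing.quotNilradicalEquivPi (O ⧸ J)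
  set s := Fintype.card (MaximalSpectrum (O ⧸ J)) with hsdef
  let σ : Fin s ≃ MaximalSpectrum (O ⧸ J) := (Fintype.equivFin _).symm
  have hsingle : CompleteOrthogonalIdempotents
      (fun i : Fin s => (Pi.single (M := fun I : MaximalSpectrum (O ⧸ J) =>
        (O ⧸ J) ⧸ I.asIdeal) (σ i) 1)) :=
    (CompleteOrthogonalIdempotents.equiv σ).mpr (CompleteOrthogonalIdempotents.single _)
  have hstep1 : CompleteOrthogonalIdempotents
      (fun i : Fin s => E.symm (Pi.single (σ i) 1)) :=
    hsingle.map E.symm.toRingHom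
  obtain ⟨e₁, he₁, hmk₁⟩ := CompleteOrthogonalIdempotents.lift_of_isNilpotent_ker
    (Ideal.Quotient.mk (nilradical (O ⧸ J)))
    (fun x hx => by
      rwa [RingHom.mem_ker, Ideal.Quotient.eq_zero_iff_mem, mem_nilradical] at hx)
    hstep1 (fun i => Ideal.Quotient.mk_surjective _)
  obtain ⟨e, he, hmk⟩ := aux_lift_coi J he₁
  let π : O →+* ∀ I : MaximalSpectrum (O ⧸ J), (O ⧸ J) ⧸ I.asIdeal :=
    (E : ((O ⧸ J) ⧸ nilradical (O ⧸ J)) →+* _).comp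
      ((Ideal.Quotient.mk (nilradical (O ⧸ J))).comp (Ideal.Quotient.mk J))
  have hπe : ∀ i, π (e i) = Pi.single (σ i) 1 := by
    intro i
    show E (Ideal.Quotient.mk _ (Ideal.Quotient.mk J (e i))) = _
    rw [hmk i]
    exact (congrArg E (congrFun hmk₁ i)).trans (E.apply_symm_apply _)
  have hπsurj : Function.Surjective π :=
    E.surjective.comp (Ideal.Quotient.mk_surjective.comp Ideal.Quotient.mk_surjective)
  have hπjac : ∀ x : O, π x = 0 → x ∈ Ideal.jacobson (⊥ : Ideal O) := by
    intro x hx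
    have hnil : IsNilpotent (Ideal.Quotient.mk J x) := by
      rw [← mem_nilradical, ← Ideal.Quotient.eq_zero_iff_mem]
      exact E.injective (by rw [map_zero]; exact hx)
    rw [Ideal.mem_jacobson_bot]
    intro y
    have hunit : IsUnit (Ideal.Quotient.mk J (x * y + 1)) := by
      rw [map_add, map_mul, map_one]
      obtain ⟨n, hn⟩ := hnil
      exact IsNilpotent.isUnit_add_one ⟨n, by rw [mul_pow, hn, zero_mul]⟩
    exact (isLocalHom_of_le_jacobson_bot J hJjac).map_nonunit _ hunit
  have hunit_comp : ∀ (c : MaximalSpectrum (O ⧸ J)) (v : (O ⧸ J) ⧸ c.asIdeal),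
      v ≠ 0 → IsUnit v := by
    intro c v hv
    haveI : c.asIdeal.IsMaximal := c.isMaximal
    letI := Ideal.Quotient.field c.asIdeal
    exact isUnit_iff_ne_zero.mpr hv
  have hne : ∀ i : Fin s, e i ≠ 0 := by
    intro i h0
    have h1 := hπe i
    rw [h0, map_zero] at h1
    have h2 : (1 : (O ⧸ J) ⧸ ((σ i).asIdeal : Ideal (O ⧸ J))) = 0 := by
      have h3 := congrFun h1.symm (σ i)
      rwa [Pi.single_eq_same, Pi.zero_apply] at h3
    haveI hmax : ((σ i).asIdeal : Ideal (O ⧸ J)).IsMaximal := (σ i).isMaximal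
    haveI := Ideal.Quotient.nontrivial_iff.mpr hmax.ne_top
    exact one_ne_zero h2
  have key : ∀ (i : Fin s) (z : O), π z (σ i) ≠ 0 →
      IsUnit (Ideal.Quotient.mk (Ideal.span {1 - e i}) z) := by
    intro i z hz
    have hb : IsUnit (z * e i + (1 - e i)) := by
      apply aux_isUnit_of_map π hπsurj hπjac
      apply aux_pi_isUnit
      intro c
      have hval : π (z * e i + (1 - e i)) c
          = π z c * (Pi.single (σ i) 1 : ∀ I : MaximalSpectrum (O ⧸ J),
              (O ⧸ J) ⧸ I.asIdeal) c + (1 - (Pi.single (σ i) 1 : ∀ I : MaximalSpectrum (O ⧸ J), (O ⧸ J) ⧸ I.asIdeal) c) := by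
        rw [map_add, map_mul, map_sub, map_one, hπe i]
        rfl
      rw [show π (z * e i + (1 - e i)) c = _ from hval]
      by_cases hcs : c = σ i
      · subst hcs
        rw [Pi.single_eq_same]
        simpa using hunit_comp _ _ hz
      · rw [Pi.single_eq_of_ne hcs]
        simpa using isUnit_one
    have hmkeq : Ideal.Quotient.mk (Ideal.span {1 - e i}) (z * e i + (1 - e i))
        = Ideal.Quotient.mk (Ideal.span {1 - e i}) z := by
      rw [Ideal.Quotient.mk_eq_mk_iff_sub_mem]
      exact Ideal.mem_span_singleton'.mpr ⟨1 - z, by ring⟩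
    exact hmkeq ▸ hb.map (Ideal.Quotient.mk (Ideal.span {1 - e i}))
  have hloc : ∀ i : Fin s, IsLocalRing (O ⧸ Ideal.span {1 - e i}) := by
    intro i
    haveI : Nontrivial (O ⧸ Ideal.span {1 - e i}) := by
      refine Ideal.Quotient.nontrivial_iff.mpr fun htop => ?_
      have h1 : (1 : O) ∈ Ideal.span {1 - e i} := htop ▸ Submodule.mem_top
      obtain ⟨c, hc⟩ := Ideal.mem_span_singleton'.mp h1
      refine hne i ?_
      calc e i = (c * (1 - e i)) * e i := by rw [hc, one_mul]
        _ = c * (e i - e i * e i) := by ring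
        _ = 0 := by rw [he.idem i, sub_self, mul_zero]
    refine IsLocalRing.of_isUnit_or_isUnit_one_sub_self ?_
    intro a
    obtain ⟨x, rfl⟩ := Ideal.Quotient.mk_surjective a
    by_cases hx0 : π x (σ i) = 0
    · right
      have h1 : π (1 - x) (σ i) ≠ 0 := by
        rw [map_sub, map_one, Pi.sub_apply, Pi.one_apply, hx0, sub_zero]
        haveI : (σ i).asIdeal.IsMaximal := (σ i).isMaximal
        haveI := Ideal.Quotient.nontrivial_iff.mpr (this.ne_top)
        exact one_ne_zero
      have h2 := key i _ h1
      rwa [map_sub, map_one] at h2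
    · exact Or.inl (key i _ hx0)
  refine ⟨s, e, fun i => he.idem i, fun i j hij => he.ortho hij, he.complete, hne,
    he.bijective_pi, hloc, ?_, ?_⟩
  · exact (he.map (algebraMap O L)).bijective_pi
  · intro i
    have hf : IsIdempotentElem (algebraMap O L (e i)) := by
      unfold IsIdempotentElem
      rw [← map_mul, he.idem i]
    haveI : IsLocalization.Away (algebraMap O L (e i))
        (L ⧸ Ideal.span {1 - algebraMap O L (e i)}) :=
      IsLocalization.Away.quotient_of_isIdempotentElem hf
    haveI : Algebra.Etale L (L ⧸ Ideal.span {1 - algebraMap O L (e i)}) :=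
      Algebra.Etale.of_isLocalizationAway (algebraMap O L (e i))
    exact Algebra.Etale.comp K L (L ⧸ Ideal.span {1 - algebraMap O L (e i)})
end

section
/- A finite-dimensional vector space over a finite field k cannot be written as the union of fewer than |k| + 1 proper subspaces. -/
open scoped Pointwise
/-- A (nontrivial) finite-dimensional vector space over a finite field `k`
cannot be written as the union of fewer than `|k| + 1` proper subspaces. -/
theorem stmt_3
    (k V : Type*) [Field k] [Fintype k]
    [AddCommGroup V] [Module k V] [FiniteDimensional k V] [Nontrivial V]
    (s : Finset (Submodule k V))
    (hproper : ∀ W ∈ s, W ≠ ⊤)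
    (hcard : s.card ≤ Fintype.card k) :
    (⋃ W ∈ s, (W : Set V)) ≠ Set.univ := by
  classical
  intro hcovers
  have hVfin : Finite V := Module.finite_of_finite k
  have hcovers' : ⋃ W ∈ s, (0 : V) +ᵥ ((Submodule.toAddSubgroup W) : Set V) = Set.univ := by
    simpa only [zero_vadd, Submodule.coe_toAddSubgroup] using hcovers
  -- each proper subspace has additive index ≥ |k|
  have hindex : ∀ W ∈ s, Fintype.card k ≤ (Submodule.toAddSubgroup W).index := by
    intro W hW
    have : Nontrivial (V ⧸ W) :=
      Submodule.Quotient.nontrivial_iff.mpr (lt_top_iff_ne_top.mpr (hproper W hW)).ne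
    have : Finite (V ⧸ W) := Quotient.finite _
    obtain ⟨x, hx⟩ := exists_ne (0 : V ⧸ W)
    have hinj : Function.Injective (fun c : k => c • x) :=
      smul_left_injective k hx
    have hle : Nat.card k ≤ Nat.card (V ⧸ W) := Nat.card_le_card_of_injective _ hinj
    rw [Nat.card_eq_fintype_card] at hle
    exact hle
  have hcardk : (0 : ℚ) < Fintype.card k := by positivity
  have hsum := AddSubgroup.one_le_sum_inv_index_of_leftCoset_cover hcovers'
  -- the sum is ≤ s.card / |k| ≤ 1
  have hbound : ∀ W ∈ s, ((Submodule.toAddSubgroup W).index : ℚ)⁻¹ ≤ (Fintype.card k : ℚ)⁻¹ := by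
    intro W hW
    exact inv_anti₀ hcardk (by exact_mod_cast hindex W hW)
  have hsumle : ∑ W ∈ s, ((Submodule.toAddSubgroup W).index : ℚ)⁻¹ ≤
      s.card * (Fintype.card k : ℚ)⁻¹ := by
    calc ∑ W ∈ s, ((Submodule.toAddSubgroup W).index : ℚ)⁻¹
        ≤ ∑ _W ∈ s, (Fintype.card k : ℚ)⁻¹ := Finset.sum_le_sum hbound
      _ = s.card * (Fintype.card k : ℚ)⁻¹ := by rw [Finset.sum_const, nsmul_eq_mul]
  have hone : (s.card : ℚ) * (Fintype.card k : ℚ)⁻¹ ≤ 1 := by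
    rw [mul_inv_le_iff₀ hcardk, one_mul]
    exact_mod_cast hcard
  have hsumeq : ∑ W ∈ s, ((Submodule.toAddSubgroup W).index : ℚ)⁻¹ = 1 :=
    le_antisymm (hsumle.trans hone) hsum
  -- hence pairwise disjoint cosets
  have hdisj := AddSubgroup.pairwiseDisjoint_leftCoset_cover_of_sum_neg_index_eq_zero
    hcovers' hsumeq
  -- s.card ≥ |k| ≥ 2
  have hcard2 : 2 ≤ s.card := by
    by_contra h
    push_neg at h
    have : (s.card : ℚ) < 2 := by exact_mod_cast h
    have h2 : (2 : ℚ) ≤ Fintype.card k := by exact_mod_cast Fintype.one_lt_card (α := k)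
    have h4 : (1 : ℚ) ≤ s.card * (Fintype.card k : ℚ)⁻¹ := hsumeq ▸ hsumle
    have h5 : (Fintype.card k : ℚ) ≤ s.card := by
      have := mul_le_mul_of_nonneg_right h4 (le_of_lt hcardk)
      rwa [one_mul, mul_assoc, inv_mul_cancel₀ (ne_of_gt hcardk), mul_one] at this
    linarith
  obtain ⟨W₁, hW₁, W₂, hW₂, hne⟩ := Finset.one_lt_card.mp hcard2
  have hfi : ∀ W ∈ s, (Submodule.toAddSubgroup W).FiniteIndex := by
    intro W hW
    constructor
    intro h0
    have := hindex W hW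
    rw [h0] at this
    have := Fintype.card_pos (α := k)
    omega
  have hmem : ∀ W ∈ s, W ∈ s.filter (fun W => (Submodule.toAddSubgroup W).FiniteIndex) := by
    intro W hW
    exact Finset.mem_filter.mpr ⟨hW, hfi W hW⟩
  have := hdisj (hmem W₁ hW₁) (hmem W₂ hW₂) hne
  exact Set.not_disjoint_iff.mpr
    ⟨0, by simp [AddSubgroup.zero_mem], by simp [AddSubgroup.zero_mem]⟩ this
end

section
/- Every integer symmetric 3×3 matrix A with det A = 1 is GL_3(Z)-congruent (A ↦ UAU^T for U ∈ GL_3(Z)) either to the matrix with rows (0,0,1),(0,−1,0),(1,0,0) or to the identity matrix. -/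
open Matrix
namespace Stmt4


abbrev M3 := Matrix (Fin 3) (Fin 3) ℤ
abbrev M2 := Matrix (Fin 2) (Fin 2) ℤ

def q3 (A : M3) (v : Fin 3 → ℤ) : ℤ := v ⬝ᵥ A.mulVec v
def q2 (D : M2) (w : Fin 2 → ℤ) : ℤ := w ⬝ᵥ D.mulVec w

def Cong3 (A B : M3) : Prop := ∃ U : M3, IsUnit U.det ∧ U * A * Uᵀ = B
def Cong2 (A B : M2) : Prop := ∃ U : M2, IsUnit U.det ∧ U * A * Uᵀ = B

lemma cong3_refl (A : M3) : Cong3 A A :=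
  ⟨1, by simp, by simp⟩

lemma cong3_trans {A B C : M3} (h1 : Cong3 A B) (h2 : Cong3 B C) : Cong3 A C := by
  obtain ⟨U, hU, rfl⟩ := h1
  obtain ⟨V, hV, rfl⟩ := h2
  exact ⟨V * U, by simp [hU.mul hV, mul_comm], by simp [Matrix.mul_assoc, Matrix.transpose_mul]⟩

lemma cong2_trans {A B C : M2} (h1 : Cong2 A B) (h2 : Cong2 B C) : Cong2 A C := by
  obtain ⟨U, hU, rfl⟩ := h1
  obtain ⟨V, hV, rfl⟩ := h2
  exact ⟨V * U, by simp [hU.mul hV, mul_comm], by simp [Matrix.mul_assoc, Matrix.transpose_mul]⟩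

lemma cong3_entry (U A : M3) (i j : Fin 3) :
    (U * A * Uᵀ) i j = (U i) ⬝ᵥ A.mulVec (U j) := by
  simp [Matrix.mul_apply, Matrix.mulVec, dotProduct, Matrix.transpose_apply,
    Fin.sum_univ_three, Finset.mul_sum, Finset.sum_mul]
  ring

lemma cong2_entry (U A : M2) (i j : Fin 2) :
    (U * A * Uᵀ) i j = (U i) ⬝ᵥ A.mulVec (U j) := by
  simp [Matrix.mul_apply, Matrix.mulVec, dotProduct, Matrix.transpose_apply,
    Fin.sum_univ_two, Finset.mul_sum, Finset.sum_mul]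
  ring

lemma q3_congr (U A : M3) (v : Fin 3 → ℤ) :
    q3 (U * A * Uᵀ) v = q3 A (v ᵥ* U) := by
  simp [q3, Matrix.mul_apply, Matrix.mulVec, Matrix.vecMul, dotProduct,
    Matrix.transpose_apply, Fin.sum_univ_three, Finset.mul_sum, Finset.sum_mul]
  ring

lemma q2_congr (U A : M2) (v : Fin 2 → ℤ) :
    q2 (U * A * Uᵀ) v = q2 A (v ᵥ* U) := by
  simp [q2, Matrix.mul_apply, Matrix.mulVec, Matrix.vecMul, dotProduct,
    Matrix.transpose_apply, Fin.sum_univ_two, Finset.mul_sum, Finset.sum_mul]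
  ring

lemma cong3_det {A B : M3} (h : Cong3 A B) : B.det = A.det := by
  obtain ⟨U, hU, rfl⟩ := h
  have h2 : U.det = 1 ∨ U.det = -1 := Int.isUnit_iff.mp hU
  rcases h2 with h2 | h2 <;> simp [Matrix.det_mul, h2]

lemma cong2_det {A B : M2} (h : Cong2 A B) : B.det = A.det := by
  obtain ⟨U, hU, rfl⟩ := h
  have h2 : U.det = 1 ∨ U.det = -1 := Int.isUnit_iff.mp hU
  rcases h2 with h2 | h2 <;> simp [Matrix.det_mul, h2]

lemma cong3_symm_mat {A B : M3} (h : Cong3 A B) (hs : A.IsSymm) : B.IsSymm := by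
  obtain ⟨U, hU, rfl⟩ := h
  unfold Matrix.IsSymm at *
  simp [Matrix.transpose_mul, Matrix.mul_assoc, hs]

lemma cong2_symm_mat {A B : M2} (h : Cong2 A B) (hs : A.IsSymm) : B.IsSymm := by
  obtain ⟨U, hU, rfl⟩ := h
  unfold Matrix.IsSymm at *
  simp [Matrix.transpose_mul, Matrix.mul_assoc, hs]

-- vecMul by an invertible matrix preserves nonzero-ness
lemma vecMul_ne_zero3 {U : M3} (hU : IsUnit U.det) {v : Fin 3 → ℤ} (hv : v ≠ 0) :
    v ᵥ* U ≠ 0 := by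
  intro h
  apply hv
  have : v ᵥ* (U * U⁻¹) = (v ᵥ* U) ᵥ* U⁻¹ := (Matrix.vecMul_vecMul v U U⁻¹).symm
  rw [h, Matrix.mul_nonsing_inv U hU] at this
  simpa using this

lemma vecMul_ne_zero2 {U : M2} (hU : IsUnit U.det) {v : Fin 2 → ℤ} (hv : v ≠ 0) :
    v ᵥ* U ≠ 0 := by
  intro h
  apply hv
  have : v ᵥ* (U * U⁻¹) = (v ᵥ* U) ᵥ* U⁻¹ := (Matrix.vecMul_vecMul v U U⁻¹).symm
  rw [h, Matrix.mul_nonsing_inv U hU] at this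
  simpa using this



-- rounding lemma
lemma round_pos (a b : ℤ) (hb : 0 < b) : ∃ k : ℤ, 2 * |a + k * b| ≤ b := by
  have hb' : b ≠ 0 := hb.ne'
  have h0 : 0 ≤ a % b := Int.emod_nonneg a hb'
  have h1 : a % b < b := Int.emod_lt_of_pos a hb
  have key : a + -(a / b) * b = a % b := by
    have := Int.mul_ediv_add_emod a b
    linarith
  rcases le_or_gt (2 * (a % b)) b with h | h
  · exact ⟨-(a / b), by rw [key, abs_of_nonneg h0]; exact h⟩
  · refine ⟨-(a / b) - 1, ?_⟩
    have : a + (-(a / b) - 1) * b = a % b - b := by linarith [key]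
    rw [this, abs_of_nonpos (by linarith)]
    linarith

lemma round_lemma (a b : ℤ) (hb : b ≠ 0) : ∃ k : ℤ, 2 * |a + k * b| ≤ |b| := by
  rcases hb.lt_or_gt with h | h
  · obtain ⟨k, hk⟩ := round_pos a (-b) (by linarith)
    refine ⟨-k, ?_⟩
    rw [abs_of_neg h]
    have : a + -k * b = a + k * -b := by ring
    rw [this]; exact hk
  · obtain ⟨k, hk⟩ := round_pos a b h
    exact ⟨k, by rwa [abs_of_pos h]⟩

def g2 (w : Fin 2 → ℤ) : ℕ := Int.gcd (w 0) (w 1)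
def g3 (v : Fin 3 → ℤ) : ℕ := Int.gcd (Int.gcd (v 0) (v 1) : ℤ) (v 2)

lemma completion2 (w : Fin 2 → ℤ) (h : g2 w = 1) :
    ∃ V : Matrix (Fin 2) (Fin 2) ℤ, IsUnit V.det ∧ V 0 = w := by
  set a := w 0; set b := w 1
  have hbez : (Int.gcd a b : ℤ) = a * Int.gcdA a b + b * Int.gcdB a b := Int.gcd_eq_gcd_ab a b
  rw [show Int.gcd a b = g2 w from rfl, h] at hbez
  refine ⟨!![a, b; -(Int.gcdB a b), Int.gcdA a b], ?_, ?_⟩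
  · rw [Matrix.det_fin_two_of, Int.isUnit_iff]
    left; push_cast at hbez; linarith [hbez]
  · funext i
    fin_cases i <;> simp <;> rfl

lemma completion3 (v : Fin 3 → ℤ) (h : g3 v = 1) :
    ∃ U : Matrix (Fin 3) (Fin 3) ℤ, IsUnit U.det ∧ U 0 = v := by
  set a := v 0 with ha0; set b := v 1 with hb0; set c := v 2 with hc0
  by_cases hg : Int.gcd a b = 0
  · -- a = b = 0, c = ±1
    obtain ⟨hA, hB⟩ := Int.gcd_eq_zero_iff.mp hg
    have hc : c.natAbs = 1 := by
      have : g3 v = Int.gcd ((Int.gcd a b : ℤ)) c := rfl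
      rw [this, hg] at h
      simpa [Int.gcd] using h
    have hA' : v 0 = 0 := by rw [← ha0]; exact hA
    have hB' : v 1 = 0 := by rw [← hb0]; exact hB
    refine ⟨!![0, 0, c; 0, 1, 0; c, 0, 0], ?_, ?_⟩
    · rw [Int.isUnit_iff]
      rcases Int.natAbs_eq_iff.mp hc with h1 | h1 <;> rw [h1] <;> simp [Matrix.det_fin_three]
    · funext i
      fin_cases i <;> simp [hA', hB'] <;> rfl
  · -- main case
    have hgz : (Int.gcd a b : ℤ) ≠ 0 := by exact_mod_cast hg
    set G : ℤ := (Int.gcd a b : ℤ) with hG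
    set x := Int.gcdA a b; set y := Int.gcdB a b
    have e0 : G = a * x + b * y := Int.gcd_eq_gcd_ab a b
    have hda : G ∣ a := Int.gcd_dvd_left _ _
    have hdb : G ∣ b := Int.gcd_dvd_right _ _
    set a' := a / G with ha'
    set b' := b / G with hb'
    have e1 : a = G * a' := (Int.mul_ediv_cancel' hda).symm
    have e2 : b = G * b' := (Int.mul_ediv_cancel' hdb).symm
    have hbez2 : (1 : ℤ) = G * Int.gcdA G c + c * Int.gcdB G c := by
      have := Int.gcd_eq_gcd_ab G c
      rw [show Int.gcd G c = g3 v from rfl, h] at this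
      exact_mod_cast this
    set p := Int.gcdA G c; set q := Int.gcdB G c
    have e4 : a' * x + b' * y = 1 := by
      have : G * (a' * x + b' * y) = G * 1 := by
        rw [mul_one]; nth_rewrite 2 [e0]; rw [e1, e2]; ring
      exact mul_left_cancel₀ hgz this
    refine ⟨!![a, b, c; -y, x, 0; -(q * a'), -(q * b'), p], ?_, ?_⟩
    · rw [Int.isUnit_iff]
      left
      simp only [Matrix.det_fin_three]
      simp
      linear_combination x * p * e1 + y * p * e2 + (-1 : ℤ) * hbez2 + (G * p + c * q) * e4
    · funext i
      fin_cases i <;> simp <;> rfl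

lemma decomp2 (w : Fin 2 → ℤ) (hw : w ≠ 0) :
    ∃ (d : ℤ) (u : Fin 2 → ℤ), d ≠ 0 ∧ w = d • u ∧ g2 u = 1 := by
  set G : ℤ := (g2 w : ℤ) with hG
  have hGz : G ≠ 0 := by
    simp only [hG, ne_eq, Int.natCast_eq_zero]
    intro h0
    obtain ⟨h1, h2⟩ := Int.gcd_eq_zero_iff.mp h0
    exact hw (funext fun i => by fin_cases i <;> assumption)
  have hda : G ∣ w 0 := Int.gcd_dvd_left _ _
  have hdb : G ∣ w 1 := Int.gcd_dvd_right _ _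
  refine ⟨G, fun i => w i / G, hGz, ?_, ?_⟩
  · funext i
    fin_cases i
    · exact (Int.mul_ediv_cancel' hda).symm
    · exact (Int.mul_ediv_cancel' hdb).symm
  · have h1 : 0 < Int.gcd (w 0) (w 1) := Nat.pos_of_ne_zero (by
      intro h0; apply hGz; simp [hG, g2, h0])
    exact Int.gcd_div_gcd_div_gcd h1

lemma decomp3 (v : Fin 3 → ℤ) (hv : v ≠ 0) :
    ∃ (d : ℤ) (u : Fin 3 → ℤ), d ≠ 0 ∧ v = d • u ∧ g3 u = 1 := by
  set G : ℤ := (g3 v : ℤ) with hG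
  have hGz : G ≠ 0 := by
    simp only [hG, ne_eq, Int.natCast_eq_zero]
    intro h0
    have h1 := Int.gcd_eq_zero_iff.mp h0
    obtain ⟨h2, h3⟩ := h1
    have h4 := Int.gcd_eq_zero_iff.mp (by exact_mod_cast h2)
    exact hv (funext fun i => by fin_cases i <;> simp [h3, h4.1, h4.2])
  have hd01 : G ∣ (Int.gcd (v 0) (v 1) : ℤ) := Int.gcd_dvd_left _ _
  have hda : G ∣ v 0 := hd01.trans (Int.gcd_dvd_left _ _)
  have hdb : G ∣ v 1 := hd01.trans (Int.gcd_dvd_right _ _)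
  have hdc : G ∣ v 2 := Int.gcd_dvd_right _ _
  refine ⟨G, fun i => v i / G, hGz, ?_, ?_⟩
  · funext i
    fin_cases i
    · exact (Int.mul_ediv_cancel' hda).symm
    · exact (Int.mul_ediv_cancel' hdb).symm
    · exact (Int.mul_ediv_cancel' hdc).symm
  · -- g3 of divided vector = 1
    have e1 : v 0 = G * (v 0 / G) := (Int.mul_ediv_cancel' hda).symm
    have e2 : v 1 = G * (v 1 / G) := (Int.mul_ediv_cancel' hdb).symm
    have e3 : v 2 = G * (v 2 / G) := (Int.mul_ediv_cancel' hdc).symm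
    have hNat : (g3 v : ℤ) = G := hG.symm
    have hGabs : (G.natAbs : ℤ) = G := Int.natAbs_of_nonneg (by rw [hG]; positivity)
    have hGnat : G.natAbs = g3 v := by rw [hG]; exact Int.natAbs_natCast _
    have key : g3 v = (g3 v) * g3 (fun i => v i / G) := by
      unfold g3
      conv_lhs => rw [e1, e2, e3]
      rw [Int.gcd_mul_left]
      have step : ((G.natAbs * Int.gcd (v 0 / G) (v 1 / G) : ℕ) : ℤ) =
          G * (Int.gcd (v 0 / G) (v 1 / G) : ℤ) := by push_cast [hGabs]; ring
      rw [step, Int.gcd_mul_left, hGnat]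
      rfl
    have hpos : 0 < g3 v := Nat.pos_of_ne_zero (by
      intro h0; apply hGz; simp [hG, h0])
    nth_rewrite 1 [show g3 v = g3 v * 1 from (mul_one _).symm] at key
    exact (Nat.eq_of_mul_eq_mul_left hpos key.symm)


lemma q3_smul (A : M3) (d : ℤ) (v : Fin 3 → ℤ) : q3 A (d • v) = d ^ 2 * q3 A v := by
  simp [q3, Matrix.mulVec, dotProduct, Fin.sum_univ_three]
  ring

lemma q2_smul (D : M2) (d : ℤ) (v : Fin 2 → ℤ) : q2 D (d • v) = d ^ 2 * q2 D v := by
  simp [q2, Matrix.mulVec, dotProduct, Fin.sum_univ_two]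
  ring

lemma q3_zero (A : M3) : q3 A 0 = 0 := by simp [q3]
lemma q2_zero (D : M2) : q2 D 0 = 0 := by simp [q2]

lemma ne_zero_of_q3 {A : M3} {v : Fin 3 → ℤ} (h : q3 A v ≠ 0) : v ≠ 0 := by
  intro h0; rw [h0, q3_zero] at h; exact h rfl

lemma q3_all_zero {A : M3} (hs : A.IsSymm) (h : ∀ v, q3 A v = 0) : A = 0 := by
  have h00 := h ![1,0,0]; have h11 := h ![0,1,0]; have h22 := h ![0,0,1]
  have h01 := h ![1,1,0]; have h02 := h ![1,0,1]; have h12 := h ![0,1,1]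
  simp [q3, Matrix.mulVec, dotProduct, Fin.sum_univ_three] at h00 h11 h22 h01 h02 h12
  have s01 : A 1 0 = A 0 1 := hs.apply 0 1
  have s02 : A 2 0 = A 0 2 := hs.apply 0 2
  have s12 : A 2 1 = A 1 2 := hs.apply 1 2
  ext i j
  fin_cases i <;> fin_cases j <;> simp <;> linarith

lemma q2_all_zero {D : M2} (hs : D.IsSymm) (h : ∀ v, q2 D v = 0) : D = 0 := by
  have h00 := h ![1,0]; have h11 := h ![0,1]; have h01 := h ![1,1]
  simp [q2, Matrix.mulVec, dotProduct, Fin.sum_univ_two] at h00 h11 h01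
  have s01 : D 1 0 = D 0 1 := hs.apply 0 1
  ext i j
  fin_cases i <;> fin_cases j <;> simp <;> linarith

lemma exists_min3 (A : M3) (hs : A.IsSymm) (hA : A ≠ 0) :
    ∃ v : Fin 3 → ℤ, g3 v = 1 ∧ q3 A v ≠ 0 ∧
      ∀ u, q3 A u ≠ 0 → (q3 A v).natAbs ≤ (q3 A u).natAbs := by
  have hex : ∃ v, q3 A v ≠ 0 := by
    by_contra hc
    push_neg at hc
    exact hA (q3_all_zero hs hc)
  set S : Set ℕ := {n | 0 < n ∧ ∃ v, (q3 A v).natAbs = n} with hS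
  have hne : S.Nonempty := by
    obtain ⟨v, hv⟩ := hex
    exact ⟨(q3 A v).natAbs, by positivity, v, rfl⟩
  obtain ⟨hpos, v0, hv0⟩ := Nat.sInf_mem hne
  have hmin : ∀ u, q3 A u ≠ 0 → sInf S ≤ (q3 A u).natAbs := fun u hu =>
    Nat.sInf_le ⟨by positivity, u, rfl⟩
  have hv0ne : q3 A v0 ≠ 0 := by
    intro h0; rw [h0] at hv0; simp at hv0; omega
  obtain ⟨d, u, hd, rfl, hprim⟩ := decomp3 v0 (ne_zero_of_q3 hv0ne)
  have hq : q3 A (d • u) = d ^ 2 * q3 A u := q3_smul A d u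
  have hune : q3 A u ≠ 0 := by
    intro h0; rw [hq, h0, mul_zero] at hv0ne; exact hv0ne rfl
  refine ⟨u, hprim, hune, fun w hw => ?_⟩
  have h1 : (q3 A u).natAbs ≤ (q3 A (d • u)).natAbs := by
    rw [hq, Int.natAbs_mul]
    have : 1 ≤ (d ^ 2).natAbs := by
      have : d ^ 2 ≠ 0 := pow_ne_zero _ hd
      omega
    nlinarith [Nat.zero_le (q3 A u).natAbs]
  calc (q3 A u).natAbs ≤ (q3 A (d • u)).natAbs := h1
    _ = sInf S := hv0
    _ ≤ (q3 A w).natAbs := hmin w hw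

lemma exists_min2 (D : M2) (hs : D.IsSymm) (hD : D ≠ 0) :
    ∃ v : Fin 2 → ℤ, g2 v = 1 ∧ q2 D v ≠ 0 ∧
      ∀ u, q2 D u ≠ 0 → (q2 D v).natAbs ≤ (q2 D u).natAbs := by
  have hex : ∃ v, q2 D v ≠ 0 := by
    by_contra hc
    push_neg at hc
    exact hD (q2_all_zero hs hc)
  set S : Set ℕ := {n | 0 < n ∧ ∃ v, (q2 D v).natAbs = n} with hS
  have hne : S.Nonempty := by
    obtain ⟨v, hv⟩ := hex
    exact ⟨(q2 D v).natAbs, by positivity, v, rfl⟩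
  obtain ⟨hpos, v0, hv0⟩ := Nat.sInf_mem hne
  have hmin : ∀ u, q2 D u ≠ 0 → sInf S ≤ (q2 D u).natAbs := fun u hu =>
    Nat.sInf_le ⟨by positivity, u, rfl⟩
  have hv0ne : q2 D v0 ≠ 0 := by
    intro h0; rw [h0] at hv0; simp at hv0; omega
  have hv0nz : v0 ≠ 0 := by
    intro h0; rw [h0, q2_zero] at hv0ne; exact hv0ne rfl
  obtain ⟨d, u, hd, rfl, hprim⟩ := decomp2 v0 hv0nz
  have hq : q2 D (d • u) = d ^ 2 * q2 D u := q2_smul D d u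
  have hune : q2 D u ≠ 0 := by
    intro h0; rw [hq, h0, mul_zero] at hv0ne; exact hv0ne rfl
  refine ⟨u, hprim, hune, fun w hw => ?_⟩
  have h1 : (q2 D u).natAbs ≤ (q2 D (d • u)).natAbs := by
    rw [hq, Int.natAbs_mul]
    have : 1 ≤ (d ^ 2).natAbs := by
      have : d ^ 2 ≠ 0 := pow_ne_zero _ hd
      omega
    nlinarith [Nat.zero_le (q2 D u).natAbs]
  calc (q2 D u).natAbs ≤ (q2 D (d • u)).natAbs := h1
    _ = sInf S := hv0
    _ ≤ (q2 D w).natAbs := hmin w hw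


lemma abs_natAbs_le {a b : ℤ} (h : a.natAbs ≤ b.natAbs) : |a| ≤ |b| := by
  rw [Int.abs_eq_natAbs, Int.abs_eq_natAbs]
  exact_mod_cast h

lemma q2_explicit (d e f x y : ℤ) :
    q2 !![d, e; e, f] ![x, y] = d * x ^ 2 + 2 * e * x * y + f * y ^ 2 := by
  simp [q2, Matrix.mulVec, dotProduct, Fin.sum_univ_two]
  ring

lemma binary_reduce (D : M2) (hs : D.IsSymm) (hD : D ≠ 0) :
    ∃ (V : M2) (d e f : ℤ), IsUnit V.det ∧ V * D * Vᵀ = !![d, e; e, f] ∧ d ≠ 0 ∧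
      2 * |e| ≤ |d| ∧ (∀ w, q2 D w ≠ 0 → |d| ≤ |q2 D w|) := by
  obtain ⟨v, hprim, hvne, hmin⟩ := exists_min2 D hs hD
  obtain ⟨V₁, hV₁, hV₁0⟩ := completion2 v hprim
  set d := q2 D v with hd
  have hdne : d ≠ 0 := hvne
  set E₁ := V₁ * D * V₁ᵀ with hE₁
  have hE₁00 : E₁ 0 0 = d := by
    rw [hE₁, cong2_entry, hV₁0]; rfl
  have hE₁symm : E₁.IsSymm := cong2_symm_mat ⟨V₁, hV₁, rfl⟩ hs
  obtain ⟨k, hk⟩ := round_lemma (E₁ 0 1) d hdne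
  set V₂ : M2 := !![1, 0; k, 1] with hV₂
  have hV₂det : IsUnit V₂.det := by
    rw [hV₂, Matrix.det_fin_two_of]; norm_num
  set E₂ := V₂ * E₁ * V₂ᵀ with hE₂
  have hE₂symm : E₂.IsSymm := cong2_symm_mat ⟨V₂, hV₂det, rfl⟩ hE₁symm
  have h00 : E₂ 0 0 = d := by
    rw [hE₂, cong2_entry]
    simp [hV₂, Matrix.mulVec, dotProduct, Fin.sum_univ_two]
    linarith [hE₁00]
  have h01 : E₂ 0 1 = E₁ 0 1 + k * d := by
    rw [hE₂, cong2_entry]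
    simp [hV₂, Matrix.mulVec, dotProduct, Fin.sum_univ_two]
    linear_combination k * hE₁00
  have hVdet : IsUnit (V₂ * V₁).det := by
    rw [Matrix.det_mul]; exact hV₂det.mul hV₁
  refine ⟨V₂ * V₁, E₂ 0 0, E₂ 0 1, E₂ 1 1, hVdet, ?_, ?_, ?_, ?_⟩
  · have : (V₂ * V₁) * D * (V₂ * V₁)ᵀ = E₂ := by
      rw [Matrix.transpose_mul, hE₂, hE₁]
      simp [Matrix.mul_assoc]
    rw [this]
    ext i j
    fin_cases i <;> fin_cases j <;> simp
    exact hE₂symm.apply 0 1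
  · rw [h00]; exact hdne
  · rw [h00, h01]; exact hk
  · intro w hw
    rw [h00]
    exact abs_natAbs_le (hmin w hw)

lemma values_transfer2 (D V : M2) (w : Fin 2 → ℤ) :
    q2 (V * D * Vᵀ) w = q2 D (w ᵥ* V) := q2_congr V D w

lemma binary_small (D : M2) (hs : D.IsSymm) (hdet : D.det ≠ 0) :
    ∃ w : Fin 2 → ℤ, q2 D w ≠ 0 ∧ (q2 D w) ^ 2 ≤ 4 * |D.det| := by
  have hD : D ≠ 0 := by rintro rfl; simp at hdet
  obtain ⟨V, d, e, f, hV, hVeq, hdne, he, hmin⟩ := binary_reduce D hs hD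
  have hdetE : d * f - e * e = D.det := by
    have h1 : (V * D * Vᵀ).det = D.det := cong2_det ⟨V, hV, rfl⟩
    rw [hVeq, Matrix.det_fin_two_of] at h1
    exact h1
  -- value realization
  have hval : ∀ x y : ℤ, q2 D (![x, y] ᵥ* V) = d * x ^ 2 + 2 * e * x * y + f * y ^ 2 := by
    intro x y
    rw [← values_transfer2, hVeq, q2_explicit]
  have h4e : 4 * e ^ 2 ≤ d ^ 2 := by nlinarith [abs_nonneg e, abs_nonneg d, sq_abs e, sq_abs d]
  by_cases hf : f = 0
  · -- det = -e^2
    subst hf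
    have hdet2 : D.det = -(e * e) := by linarith [hdetE]
    have hene : e ≠ 0 := by rintro rfl; rw [hdet2] at hdet; simp at hdet
    have habs : |D.det| = e ^ 2 := by
      rw [hdet2, abs_neg, abs_of_nonneg (mul_self_nonneg e)]; ring
    by_cases hcase : d ^ 2 ≤ 4 * e ^ 2
    · have hv : q2 D (![1, 0] ᵥ* V) = d := by rw [hval]; ring
      refine ⟨![1, 0] ᵥ* V, by rw [hv]; exact hdne, ?_⟩
      rw [hv, habs]; exact hcase
    · exfalso
      push_neg at hcase
      have hs1 : q2 D (![1, -1] ᵥ* V) = d - 2 * e := by rw [hval]; ring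
      have hs2 : q2 D (![1, 1] ᵥ* V) = d + 2 * e := by rw [hval]; ring
      have hprod : (d - 2 * e) * (d + 2 * e) = d ^ 2 - 4 * e ^ 2 := by ring
      have hppos : 0 < (d - 2 * e) * (d + 2 * e) := by rw [hprod]; linarith
      have hs1ne : d - 2 * e ≠ 0 := fun h0 => by rw [h0, zero_mul] at hppos; exact lt_irrefl _ hppos
      have hs2ne : d + 2 * e ≠ 0 := fun h0 => by rw [h0, mul_zero] at hppos; exact lt_irrefl _ hppos
      have hm1 : |d| ≤ |d - 2 * e| := by rw [← hs1]; exact hmin _ (by rw [hs1]; exact hs1ne)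
      have hm2 : |d| ≤ |d + 2 * e| := by rw [← hs2]; exact hmin _ (by rw [hs2]; exact hs2ne)
      have hmm : |d| * |d| ≤ |d - 2 * e| * |d + 2 * e| :=
        mul_le_mul hm1 hm2 (abs_nonneg d) (abs_nonneg _)
      rw [← abs_mul, ← abs_mul, hprod] at hmm
      rw [abs_of_nonneg (mul_self_nonneg d),
        abs_of_pos (by linarith : (0:ℤ) < d ^ 2 - 4 * e ^ 2)] at hmm
      have hepos : 0 < e ^ 2 := by positivity
      nlinarith [hmm, hepos]
  · -- |f| >= |d|
    have hfv : q2 D (![0, 1] ᵥ* V) = f := by rw [hval]; ring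
    have hfd : |d| ≤ |f| := by rw [← hfv]; exact hmin _ (by rw [hfv]; exact hf)
    have hv : q2 D (![1, 0] ᵥ* V) = d := by rw [hval]; ring
    refine ⟨![1, 0] ᵥ* V, by rw [hv]; exact hdne, ?_⟩
    rw [hv]
    have hd2 : d ^ 2 ≤ |d * f| := by
      rw [abs_mul]
      nlinarith [abs_nonneg d, sq_abs d]
    rcases lt_trichotomy (d * f) 0 with hdf | hdf | hdf
    · have : |D.det| = e * e - d * f := by
        rw [← hdetE, abs_of_nonpos (by nlinarith [sq_nonneg e])]
        ring
      rw [this]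
      rw [abs_of_neg hdf] at hd2
      nlinarith
    · rcases mul_eq_zero.mp hdf with h0 | h0
      · exact absurd h0 hdne
      · exact absurd h0 hf
    · rw [abs_of_pos hdf] at hd2
      have h5 : d * f - e * e ≤ |D.det| := by rw [← hdetE]; exact le_abs_self _
      nlinarith [h4e, hd2, h5]
lemma binary_unit (C : M2) (hs : C.IsSymm) (hdet : C.det = 1) :
    Cong2 C 1 ∨ Cong2 C (-1) := by
  have hC : C ≠ 0 := by rintro rfl; simp at hdet
  obtain ⟨V, d, e, f, hV, hVeq, hdne, he, hmin⟩ := binary_reduce C hs hC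
  have hdetE : d * f - e * e = 1 := by
    have h1 : (V * C * Vᵀ).det = C.det := cong2_det ⟨V, hV, rfl⟩
    rw [hVeq, Matrix.det_fin_two_of, hdet] at h1
    exact h1
  have hval : ∀ x y : ℤ, q2 C (![x, y] ᵥ* V) = d * x ^ 2 + 2 * e * x * y + f * y ^ 2 := by
    intro x y
    rw [← q2_congr, hVeq, q2_explicit]
  have h4e : 4 * e ^ 2 ≤ d ^ 2 := by nlinarith [abs_nonneg e, abs_nonneg d, sq_abs e, sq_abs d]
  have hfne : f ≠ 0 := by rintro rfl; nlinarith [mul_self_nonneg e]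
  have hfv : q2 C (![0, 1] ᵥ* V) = f := by rw [hval]; ring
  have hfd : |d| ≤ |f| := by rw [← hfv]; exact hmin _ (by rw [hfv]; exact hfne)
  have hdfpos : 0 < d * f := by nlinarith [mul_self_nonneg e]
  have hd2 : d ^ 2 ≤ d * f := by
    have : d ^ 2 = |d| * |d| := by rw [← abs_mul, abs_of_nonneg (mul_self_nonneg d)]; ring
    rw [this, ← abs_of_pos hdfpos, abs_mul]
    exact mul_le_mul_of_nonneg_left hfd (abs_nonneg d)
  have hd1 : d ^ 2 ≤ 1 := by nlinarith
  have he0 : e = 0 := by nlinarith [sq_nonneg e]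
  have hdd : d = 1 ∨ d = -1 := by
    have : d ^ 2 = 1 := by nlinarith [sq_nonneg d, sq_pos_of_ne_zero hdne]
    rcases Int.isUnit_iff.mp (IsUnit.of_mul_eq_one (a := d) d (by nlinarith)) with h | h
    · exact Or.inl h
    · exact Or.inr h
  rcases hdd with rfl | rfl
  · left
    refine ⟨V, hV, ?_⟩
    rw [hVeq, he0]
    have hf1 : f = 1 := by linarith [hdetE]
    rw [hf1]
    ext i j; fin_cases i <;> fin_cases j <;> simp
  · right
    refine ⟨V, hV, ?_⟩
    rw [hVeq, he0]
    have hf1 : f = -1 := by linarith [hdetE]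
    rw [hf1]
    ext i j; fin_cases i <;> fin_cases j <;> simp
def blockM (a : ℤ) (C : M2) : M3 := !![a, 0, 0; 0, C 0 0, C 0 1; 0, C 1 0, C 1 1]

lemma blockM_det (a : ℤ) (C : M2) : (blockM a C).det = a * C.det := by
  rw [blockM, Matrix.det_fin_three, Matrix.det_fin_two]
  simp
  ring

lemma lift2 (a : ℤ) (C : M2) (W : M2) :
    (blockM 1 W) * (blockM a C) * (blockM 1 W)ᵀ = blockM a (W * C * Wᵀ) := by
  ext i j
  fin_cases i <;> fin_cases j <;>
    simp [blockM, Matrix.mul_apply, Matrix.transpose_apply, Fin.sum_univ_three,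
      Fin.sum_univ_two, Matrix.vecHead, Matrix.vecTail] <;> ring

lemma lift2_det (W : M2) : (blockM 1 W).det = W.det := by
  rw [blockM, Matrix.det_fin_three, Matrix.det_fin_two]
  simp

lemma cong3_block_of_cong2 {a : ℤ} {C E : M2} (h : Cong2 C E) :
    Cong3 (blockM a C) (blockM a E) := by
  obtain ⟨W, hW, rfl⟩ := h
  refine ⟨blockM 1 W, ?_, lift2 a C W⟩
  rw [lift2_det]; exact hW

lemma split_off (B : M3) (hs : B.IsSymm) (a : ℤ) (ha : a * a = 1) (h00 : B 0 0 = a) :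
    ∃ C : M2, C.IsSymm ∧ Cong3 B (blockM a C) ∧ a * C.det = B.det := by
  have s10 : B 1 0 = B 0 1 := hs.apply 0 1
  have s20 : B 2 0 = B 0 2 := hs.apply 0 2
  have s21 : B 2 1 = B 1 2 := hs.apply 1 2
  set U : M3 := !![1, 0, 0; -(a * B 0 1), 1, 0; -(a * B 0 2), 0, 1] with hU
  have hUdet : IsUnit U.det := by
    rw [hU]
    simp [Matrix.det_fin_three]
  set B' := U * B * Uᵀ with hB'
  have hsymm' : B'.IsSymm := cong3_symm_mat ⟨U, hUdet, rfl⟩ hs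
  set C : M2 := !![B' 1 1, B' 1 2; B' 2 1, B' 2 2] with hC
  have hCs : C.IsSymm := by
    have := hsymm'.apply 1 2
    rw [hC]
    unfold Matrix.IsSymm
    ext i j
    fin_cases i <;> fin_cases j <;> simp [this]
  have ha2 : a ^ 2 = 1 := by nlinarith
  have hBeq : B' = blockM a C := by
    have expand : ∀ i j, (U * B * Uᵀ) i j = (U i) ⬝ᵥ B.mulVec (U j) := cong3_entry U B
    ext i j
    fin_cases i <;> fin_cases j
    · rw [hB', expand]
      simp [hU, blockM, Matrix.mulVec, dotProduct, Fin.sum_univ_three,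
        Matrix.vecHead, Matrix.vecTail, h00]
    · rw [hB', expand]
      simp [hU, blockM, Matrix.mulVec, dotProduct, Fin.sum_univ_three,
        Matrix.vecHead, Matrix.vecTail, h00, s10, s20, s21]
      linear_combination (-(B 0 1)) * ha
    · rw [hB', expand]
      simp [hU, blockM, Matrix.mulVec, dotProduct, Fin.sum_univ_three,
        Matrix.vecHead, Matrix.vecTail, h00, s10, s20, s21]
      linear_combination (-(B 0 2)) * ha
    · rw [hB', expand]
      simp [hU, blockM, Matrix.mulVec, dotProduct, Fin.sum_univ_three,
        Matrix.vecHead, Matrix.vecTail, h00, s10, s20, s21]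
      linear_combination (-(B 0 1)) * ha
    · simp [blockM, hC]
    · simp [blockM, hC]
    · rw [hB', expand]
      simp [hU, blockM, Matrix.mulVec, dotProduct, Fin.sum_univ_three,
        Matrix.vecHead, Matrix.vecTail, h00, s10, s20, s21]
      linear_combination (-(B 0 2)) * ha
    · simp [blockM, hC]
    · simp [blockM, hC]
  have hcong : Cong3 B (blockM a C) := ⟨U, hUdet, by rw [← hBeq]⟩
  have hdet : a * C.det = B.det := by
    have h1 : B'.det = B.det := cong3_det ⟨U, hUdet, rfl⟩
    rw [hBeq, blockM_det] at h1
    exact h1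
  exact ⟨C, hCs, hcong, hdet⟩
def target3 : M3 := !![0, 0, 1; 0, -1, 0; 1, 0, 0]

lemma M0_target : Cong3 !![0,1,0;1,0,0;0,0,-1] target3 := by
  refine ⟨!![1,0,0;0,0,1;0,1,0], ?_, ?_⟩
  · rw [Int.isUnit_iff, Matrix.det_fin_three]
    simp
  · ext i j
    fin_cases i <;> fin_cases j <;>
      simp [target3, Matrix.mul_apply, Fin.sum_univ_three, Matrix.vecHead, Matrix.vecTail]

lemma M1_target : Cong3 !![0,1,0;1,1,0;0,0,-1] target3 := by
  refine ⟨!![1,0,0;1,0,1;0,1,1], ?_, ?_⟩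
  · rw [Int.isUnit_iff, Matrix.det_fin_three]
    simp
  · ext i j
    fin_cases i <;> fin_cases j <;>
      simp [target3, Matrix.mul_apply, Fin.sum_univ_three, Matrix.vecHead, Matrix.vecTail]

lemma diag_target : Cong3 !![1,0,0;0,-1,0;0,0,-1] target3 := by
  refine ⟨!![1,1,0;1,1,1;1,0,1], ?_, ?_⟩
  · rw [Int.isUnit_iff, Matrix.det_fin_three]
    simp
  · ext i j
    fin_cases i <;> fin_cases j <;>
      simp [target3, Matrix.mul_apply, Fin.sum_univ_three, Matrix.vecHead, Matrix.vecTail]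

lemma iso_target (A : M3) (hs : A.IsSymm) (hdet : A.det = 1)
    (v : Fin 3 → ℤ) (hv : v ≠ 0) (hq : q3 A v = 0) : Cong3 A target3 := by
  obtain ⟨d, u, hd, rfl, hprim⟩ := decomp3 v hv
  rw [q3_smul] at hq
  have hqu : q3 A u = 0 := by
    rcases mul_eq_zero.mp hq with h | h
    · exact absurd h (pow_ne_zero _ hd)
    · exact h
  obtain ⟨U₁, hU₁, hU₁0⟩ := completion3 u hprim
  set B := U₁ * A * U₁ᵀ with hB
  have hcongAB : Cong3 A B := ⟨U₁, hU₁, rfl⟩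
  have hBs : B.IsSymm := cong3_symm_mat hcongAB hs
  have hBdet : B.det = 1 := by rw [cong3_det hcongAB, hdet]
  have h00 : B 0 0 = 0 := by rw [hB, cong3_entry, hU₁0]; exact hqu
  have s10 : B 1 0 = B 0 1 := hBs.apply 0 1
  have s20 : B 2 0 = B 0 2 := hBs.apply 0 2
  have s21 : B 2 1 = B 1 2 := hBs.apply 1 2
  set p := B 0 1 with hp
  set q := B 0 2 with hqdef
  have hdetB : -(p * p) * B 2 2 + 2 * (p * q) * B 1 2 - q * q * B 1 1 = 1 := by
    have h := (Matrix.det_fin_three B).symm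
    rw [hBdet, h00, s10, s20, s21] at h
    linear_combination h
  have hgcd : Int.gcd p q = 1 := by
    set g : ℤ := (Int.gcd p q : ℤ) with hg
    have hgp : g ∣ p := Int.gcd_dvd_left _ _
    have hgq : g ∣ q := Int.gcd_dvd_right _ _
    obtain ⟨p0, hp0⟩ := hgp
    obtain ⟨q0, hq0⟩ := hgq
    have hdvd : g * g ∣ 1 :=
      ⟨-(p0 * p0) * B 2 2 + 2 * (p0 * q0) * B 1 2 - q0 * q0 * B 1 1, by
        rw [← hdetB, hp0, hq0]; ring⟩
    have h1 : g * g = 1 := by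
      rcases Int.isUnit_iff.mp (isUnit_of_dvd_one hdvd) with h | h
      · exact h
      · nlinarith [mul_self_nonneg g]
    have h2 : g = 1 := by
      rcases mul_self_eq_one_iff.mp h1 with h | h
      · exact h
      · exfalso
        have : (0:ℤ) ≤ g := by rw [hg]; positivity
        omega
    exact_mod_cast hg ▸ h2
  have hbez : (1:ℤ) = p * Int.gcdA p q + q * Int.gcdB p q := by
    have h := Int.gcd_eq_gcd_ab p q
    rw [hgcd] at h
    exact_mod_cast h
  set x := Int.gcdA p q with hx
  set y := Int.gcdB p q with hy
  set U₂ : M3 := !![1,0,0; 0,x,y; 0,-q,p] with hU₂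
  have hU₂det : IsUnit U₂.det := by
    rw [hU₂, Matrix.det_fin_three, Int.isUnit_iff]
    left
    simp [Matrix.vecHead, Matrix.vecTail]
    linarith [hbez]
  set B₂ := U₂ * B * U₂ᵀ with hB₂
  have hcong2 : Cong3 A B₂ := cong3_trans hcongAB ⟨U₂, hU₂det, rfl⟩
  have hB₂s : B₂.IsSymm := cong3_symm_mat hcong2 hs
  have hB₂det : B₂.det = 1 := by rw [cong3_det hcong2, hdet]
  have h2_00 : B₂ 0 0 = 0 := by
    rw [hB₂, cong3_entry]
    simp [hU₂, Matrix.mulVec, dotProduct, Fin.sum_univ_three, Matrix.vecHead, Matrix.vecTail, h00]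
  have h2_01 : B₂ 0 1 = 1 := by
    rw [hB₂, cong3_entry]
    simp [hU₂, Matrix.mulVec, dotProduct, Fin.sum_univ_three, Matrix.vecHead, Matrix.vecTail, h00]
    linear_combination -hbez
  have h2_02 : B₂ 0 2 = 0 := by
    rw [hB₂, cong3_entry]
    simp [hU₂, Matrix.mulVec, dotProduct, Fin.sum_univ_three, Matrix.vecHead, Matrix.vecTail, h00]
    ring
  have s2_10 : B₂ 1 0 = 1 := by rw [hB₂s.apply 0 1, h2_01]
  have s2_20 : B₂ 2 0 = 0 := by rw [hB₂s.apply 0 2, h2_02]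
  have s2_21 : B₂ 2 1 = B₂ 1 2 := hB₂s.apply 1 2
  set r := B₂ 1 1 with hr
  set sE := B₂ 1 2 with hsE
  set t := B₂ 2 2 with ht
  have hk : 2 * (r / 2) + r % 2 = r := Int.mul_ediv_add_emod r 2
  set k := r / 2 with hkd
  set r' := r % 2 with hr'
  set U₃ : M3 := !![1,0,0; -k,1,0; -sE,0,1] with hU₃
  have hU₃det : IsUnit U₃.det := by
    rw [hU₃, Matrix.det_fin_three, Int.isUnit_iff]
    left
    simp [Matrix.vecHead, Matrix.vecTail]
  set B₃ := U₃ * B₂ * U₃ᵀ with hB₃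
  have hcong3 : Cong3 A B₃ := cong3_trans hcong2 ⟨U₃, hU₃det, rfl⟩
  have hB₃det : B₃.det = 1 := by rw [cong3_det hcong3, hdet]
  have hB₃eq : B₃ = !![0,1,0; 1,r',0; 0,0,t] := by
    have expand : ∀ i j, (U₃ * B₂ * U₃ᵀ) i j = (U₃ i) ⬝ᵥ B₂.mulVec (U₃ j) := cong3_entry U₃ B₂
    ext i j
    fin_cases i <;> fin_cases j <;>
      · rw [hB₃, expand]
        simp [hU₃, Matrix.mulVec, dotProduct, Fin.sum_univ_three, Matrix.vecHead,
          Matrix.vecTail, h2_00, h2_01, h2_02, s2_10, s2_20, s2_21, ← hr, ← hsE, ← ht]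
        try linear_combination -hk
        try ring
  have ht1 : t = -1 := by
    rw [hB₃eq, Matrix.det_fin_three] at hB₃det
    simp [Matrix.vecHead, Matrix.vecTail] at hB₃det
    linarith
  rcases Int.emod_two_eq r with h | h
  · have : B₃ = !![0,1,0;1,0,0;0,0,-1] := by
      rw [hB₃eq, hr', h, ht1]
    exact cong3_trans (this ▸ hcong3) M0_target
  · have : B₃ = !![0,1,0;1,1,0;0,0,-1] := by
      rw [hB₃eq, hr', h, ht1]
    exact cong3_trans (this ▸ hcong3) M1_target
lemma cong_aniso {A X : M3} (h : Cong3 A X) (hani : ∀ v, v ≠ 0 → q3 A v ≠ 0) :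
    ∀ w, w ≠ 0 → q3 X w ≠ 0 := by
  obtain ⟨U, hU, rfl⟩ := h
  intro w hw
  rw [q3_congr]
  exact hani _ (vecMul_ne_zero3 hU hw)

lemma q3_blockM (a : ℤ) (C : M2) (xx yy zz : ℤ) :
    q3 (blockM a C) ![xx, yy, zz] = a * xx ^ 2 + q2 C ![yy, zz] := by
  simp [q3, q2, blockM, Matrix.mulVec, dotProduct, Fin.sum_univ_three, Fin.sum_univ_two,
    Matrix.vecHead, Matrix.vecTail]
  ring

lemma q2_explicit' (C : M2) (y z : ℤ) :
    q2 C ![y, z] = C 0 0 * y ^ 2 + (C 0 1 + C 1 0) * y * z + C 1 1 * z ^ 2 := by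
  simp [q2, Matrix.mulVec, dotProduct, Fin.sum_univ_two]
  ring

lemma blockM_one : blockM 1 (1 : M2) = (1 : M3) := by
  ext i j
  fin_cases i <;> fin_cases j <;> simp [blockM, Matrix.one_apply, Matrix.vecHead, Matrix.vecTail]

-- a symmetric 2x2 with det = -1 and congruent-to-aniso leads to contradiction:
lemma detneg_iso (C : M2) (hCs : C.IsSymm) (hdetC : C.det = -1) (a : ℤ) :
    ∃ w : Fin 3 → ℤ, w ≠ 0 ∧ q3 (blockM a C) w = 0 := by
  by_cases hc : C 0 0 = 0
  · refine ⟨![0, 1, 0], ?_, ?_⟩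
    · intro h0
      have := congr_fun h0 1
      simp at this
    · rw [q3_blockM, q2_explicit', hc]
      ring
  · refine ⟨![0, 1 - C 0 1, C 0 0], ?_, ?_⟩
    · intro h0
      have := congr_fun h0 2
      simp at this
      exact hc this
    · rw [q3_blockM, q2_explicit']
      have s10 : C 1 0 = C 0 1 := hCs.apply 0 1
      have hd : C 0 0 * C 1 1 - C 0 1 * C 1 0 = -1 := by
        rw [← Matrix.det_fin_two]; exact hdetC
      rw [s10] at hd ⊢
      linear_combination (C 0 0) * hd

lemma arith_m (m e : ℤ) (hm1 : 1 ≤ m) (hsq : 9 * m ^ 4 ≤ 16 * e ^ 2)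
    (hd2 : e ^ 2 ≤ 4 * m) : m ≤ 1 := by
  by_contra hgt
  push_neg at hgt
  have h2 : 2 ≤ m := hgt
  have hm0 : (0:ℤ) ≤ m := by linarith
  have h64 : 9 * m ^ 4 ≤ 64 * m := by nlinarith [hsq, hd2]
  have e1 : 2 * m ≤ m ^ 2 := by nlinarith [mul_nonneg hm0 (sub_nonneg.mpr h2)]
  have e2 : 2 * m ^ 2 ≤ m ^ 3 := by
    nlinarith [mul_nonneg (mul_nonneg hm0 hm0) (sub_nonneg.mpr h2)]
  have e3 : 2 * m ^ 3 ≤ m ^ 4 := by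
    nlinarith [mul_nonneg (mul_nonneg (mul_nonneg hm0 hm0) hm0) (sub_nonneg.mpr h2)]
  linarith [h64, e1, e2, e3, h2]

set_option maxHeartbeats 1000000 in
lemma aniso_id (A : M3) (hs : A.IsSymm) (hdet : A.det = 1)
    (hani : ∀ v, v ≠ 0 → q3 A v ≠ 0) : Cong3 A 1 := by
  have hA0 : A ≠ 0 := by rintro rfl; simp at hdet
  obtain ⟨v, hprim, hvne, hmin⟩ := exists_min3 A hs hA0
  set a0 := q3 A v with ha0
  obtain ⟨U₁, hU₁, hU₁0⟩ := completion3 v hprim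
  set B := U₁ * A * U₁ᵀ with hB
  have hcongAB : Cong3 A B := ⟨U₁, hU₁, rfl⟩
  have hBs : B.IsSymm := cong3_symm_mat hcongAB hs
  have hBdet : B.det = 1 := by rw [cong3_det hcongAB, hdet]
  have hB00 : B 0 0 = a0 := by rw [hB, cong3_entry, hU₁0]; rfl
  have hBval : ∀ w, q3 B w = q3 A (w ᵥ* U₁) := fun w => by rw [hB, q3_congr]
  have hBani : ∀ w, w ≠ 0 → q3 B w ≠ 0 := cong_aniso hcongAB hani
  have hBmin : ∀ w, q3 B w ≠ 0 → |a0| ≤ |q3 B w| := by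
    intro w hw
    rw [hBval] at hw ⊢
    exact abs_natAbs_le (hmin _ hw)
  have s10 : B 1 0 = B 0 1 := hBs.apply 0 1
  have s20 : B 2 0 = B 0 2 := hBs.apply 0 2
  have s21 : B 2 1 = B 1 2 := hBs.apply 1 2
  set p := B 0 1 with hp
  set q := B 0 2 with hq
  set D : M2 := !![a0 * B 1 1 - p * p, a0 * B 1 2 - p * q;
                   a0 * B 1 2 - p * q, a0 * B 2 2 - q * q] with hD
  have hDs : D.IsSymm := by
    unfold Matrix.IsSymm
    ext i j
    fin_cases i <;> fin_cases j <;> simp [hD]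
  have hdetB' : a0 * (B 1 1 * B 2 2 - B 1 2 * B 1 2) - p * (p * B 2 2 - q * B 1 2)
      + q * (p * B 1 2 - q * B 1 1) = 1 := by
    have h := (Matrix.det_fin_three B).symm
    rw [hBdet, hB00, s10, s20, s21] at h
    linear_combination h
  have hDdet : D.det = a0 := by
    rw [hD, Matrix.det_fin_two]
    simp [Matrix.vecHead, Matrix.vecTail]
    linear_combination a0 * hdetB'
  have hDdetne : D.det ≠ 0 := by rw [hDdet]; exact hvne
  obtain ⟨w, hwne, hwbound⟩ := binary_small D hDs hDdetne
  obtain ⟨k, hk⟩ := round_lemma (p * w 0 + q * w 1) a0 hvne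
  set u : Fin 3 → ℤ := ![k, w 0, w 1] with hu
  have hwe : ![w 0, w 1] = w := by
    funext i; fin_cases i <;> rfl
  have hune : u ≠ 0 := by
    intro h0
    apply hwne
    have h1 := congr_fun h0 1
    have h2 := congr_fun h0 2
    simp [hu] at h1 h2
    have hw0 : w = 0 := by
      rw [← hwe]
      funext i
      fin_cases i <;> simp [h1, h2]
    rw [hw0, q2_zero]
  have hqune : q3 B u ≠ 0 := hBani u hune
  have hkey : a0 * q3 B u = (a0 * k + (p * w 0 + q * w 1)) ^ 2 + q2 D w := by
    rw [← hwe, hu]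
    simp [q3, q2, hD, Matrix.mulVec, dotProduct, Fin.sum_univ_three, Fin.sum_univ_two,
      Matrix.vecHead, Matrix.vecTail, hB00, s10, s20, s21]
    ring
  set m := |a0| with hm
  have hm1 : 1 ≤ m := by
    have := abs_pos.mpr hvne
    linarith
  set s := a0 * k + (p * w 0 + q * w 1) with hsdef
  have hs2 : 2 * |s| ≤ m := by
    rw [hsdef, hm, show a0 * k + (p * w 0 + q * w 1) = p * w 0 + q * w 1 + k * a0 from by ring]
    exact hk
  set d' := q2 D w with hd'
  have h4s : 4 * s ^ 2 ≤ m ^ 2 := by nlinarith [hs2, abs_nonneg s, sq_abs s]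
  have hMm : m ≤ |q3 B u| := hBmin u hqune
  have hmm : m * m ≤ m * |q3 B u| := mul_le_mul_of_nonneg_left hMm (by linarith)
  have habs : m * |q3 B u| = |s ^ 2 + d'| := by rw [hm, ← abs_mul, hkey]
  have hub : |s ^ 2 + d'| ≤ s ^ 2 + |d'| := by
    calc |s ^ 2 + d'| ≤ |s ^ 2| + |d'| := abs_add_le _ _
      _ = s ^ 2 + |d'| := by rw [abs_of_nonneg (sq_nonneg s)]
  have hchain : m * m ≤ s ^ 2 + |d'| := by
    have h1 : m * m ≤ |s ^ 2 + d'| := by rw [← habs]; exact hmm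
    exact le_trans h1 hub
  have h3m : 3 * m ^ 2 ≤ 4 * |d'| := by nlinarith [hchain, h4s]
  have hd2 : d' ^ 2 ≤ 4 * m := by
    rw [hDdet] at hwbound
    rw [hm]
    exact hwbound
  have hsq : 9 * m ^ 4 ≤ 16 * d' ^ 2 := by
    nlinarith [mul_self_le_mul_self (by positivity : (0:ℤ) ≤ 3 * m ^ 2) h3m, sq_abs d']
  have hmle : m ≤ 1 := arith_m m d' hm1 hsq hd2
  have hm_eq : m = 1 := le_antisymm hmle hm1
  have habs1 : |a0| = 1 := by rw [← hm, hm_eq]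
  have ha1 : a0 = 1 ∨ a0 = -1 := (abs_eq (by norm_num : (0:ℤ) ≤ 1)).mp habs1
  have haa : a0 * a0 = 1 := by rcases ha1 with h | h <;> rw [h] <;> norm_num
  obtain ⟨C, hCs, hCcong, hCdet⟩ := split_off B hBs a0 haa hB00
  have hcongA : Cong3 A (blockM a0 C) := cong3_trans hcongAB hCcong
  have hCdet1 : a0 * C.det = 1 := by rw [hCdet, hBdet]
  rcases ha1 with ha | ha
  · have hCd : C.det = 1 := by rw [ha] at hCdet1; linarith
    rcases binary_unit C hCs hCd with hpos | hneg
    · have h1 := cong3_trans hcongA (cong3_block_of_cong2 hpos)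
      rw [ha, blockM_one] at h1
      exact h1
    · exfalso
      have hXcong := cong3_trans hcongA (cong3_block_of_cong2 hneg)
      have hX := cong_aniso hXcong hani
      apply hX ![1, 1, 0] (by intro h0; have := congr_fun h0 0; simp at this)
      rw [ha, q3_blockM, q2_explicit']
      norm_num
  · exfalso
    have hCd : C.det = -1 := by rw [ha] at hCdet1; linarith
    obtain ⟨w3, hw3ne, hw3⟩ := detneg_iso C hCs hCd a0
    exact cong_aniso hcongA hani w3 hw3ne hw3
end Stmt4

open Stmt4 in
/-- Every integer symmetric `3 × 3` matrix `A` with `det A = 1` is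
`GL₃(ℤ)`-congruent (`A ↦ U * A * Uᵀ`) either to `[[0,0,1],[0,-1,0],[1,0,0]]` or to the
identity matrix. -/
theorem stmt_4
    (A : Matrix (Fin 3) (Fin 3) ℤ) (hsymm : A.IsSymm) (hdet : A.det = 1) :
    ∃ U : Matrix (Fin 3) (Fin 3) ℤ, IsUnit U.det ∧
      (U * A * U.transpose = !![0, 0, 1; 0, -1, 0; 1, 0, 0] ∨
        U * A * U.transpose = 1) := by
  by_cases hiso : ∃ v, v ≠ 0 ∧ q3 A v = 0
  · obtain ⟨v, hv, hqv⟩ := hiso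
    obtain ⟨U, hU, hUeq⟩ := iso_target A hsymm hdet v hv hqv
    exact ⟨U, hU, Or.inl hUeq⟩
  · push_neg at hiso
    obtain ⟨U, hU, hUeq⟩ := aniso_id A hsymm hdet fun v hv => hiso v hv
    exact ⟨U, hU, Or.inr hUeq⟩
end

section
/- Let H be a finite elementary abelian 2-group and ε : H → {±1} a quadratic form whose associated bilinear form ⟨α,β⟩ = ε(1)ε(α)ε(β)ε(αβ) is a nondegenerate symplectic pairing on H. Let W ⊆ H be a coisotropic subgroup (i.e. W^⊥ is isotropic). Then there is exactly one coset αW of W in H on which the sum Σ_{δ ∈ αW} ε(δ) is nonzero, and on that coset the sum equals ±√|H| with a sign depending only on ε. -/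
private lemma char_sum_zero {G : Type*} [Group G] [Fintype G] (χ : G → ℤ)
    (hmul : ∀ x y, χ (x * y) = χ x * χ y) (g : G) (hg : χ g = -1) :
    ∑ x : G, χ x = 0 := by
  have h := Fintype.sum_bijective (fun x => g * x) (Group.mulLeft_bijective g)
      (fun x => χ (g * x)) (fun x => χ x) (fun x => rfl)
  have h2 : ∑ x : G, χ (g * x) = -∑ x : G, χ x := by
    simp [hmul, hg, Finset.sum_neg_distrib]
  rw [h2] at h
  linarith

open Classical in
/-- **the charmed coset lemma.** Let `H` be a finite elementary abelian 2-group
and `ε : H → {±1}` a quadratic form whose associated bilinear form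
`⟨α,β⟩ = ε(1)ε(α)ε(β)ε(αβ)` is a nondegenerate symplectic pairing on `H`.  Let `W ⊆ H` be a
coisotropic subgroup (`W ⊇ W^⊥`).  Then there is exactly one coset `αW` of `W` on which
`∑_{δ ∈ αW} ε(δ)` is nonzero, and on that coset the sum equals `± √|H|` with a sign depending
only on `ε` (not on `W`). -/
theorem stmt_7
    (H : Type*) [CommGroup H] [Fintype H]
    (htwo : ∀ x : H, x * x = 1)
    (ε : H → ℤ) (hval : ∀ x, ε x = 1 ∨ ε x = -1)
    (hbil : ∀ α β γ : H,
      ε 1 * ε (α * β) * ε γ * ε (α * β * γ)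
        = (ε 1 * ε α * ε γ * ε (α * γ)) * (ε 1 * ε β * ε γ * ε (β * γ)))
    (hnd : ∀ α : H, (∀ β : H, ε 1 * ε α * ε β * ε (α * β) = 1) → α = 1) :
    ∃ s : ℤ, (s = 1 ∨ s = -1) ∧
      ∀ W : Subgroup H,
        (∀ β : H, (∀ w ∈ W, ε 1 * ε w * ε β * ε (w * β) = 1) → β ∈ W) →
        ∃ α : H,
          (∃ r : ℕ, r ^ 2 = Fintype.card H ∧ (∑ w : W, ε (α * (w : H))) = s * r) ∧
          ∀ β : H, (∑ w : W, ε (β * (w : H))) ≠ 0 → β⁻¹ * α ∈ W := by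
  classical
  set Bf : H → H → ℤ := fun a b => ε 1 * ε a * ε b * ε (a * b) with hBf
  have hsq : ∀ x, ε x * ε x = 1 := by
    intro x; rcases hval x with h | h <;> rw [h] <;> ring
  have hBmul : ∀ a b c : H, Bf (a * b) c = Bf a c * Bf b c := hbil
  have hBval : ∀ a b : H, Bf a b = 1 ∨ Bf a b = -1 := by
    intro a b
    rcases hval 1 with h1 | h1 <;> rcases hval a with ha | ha <;>
      rcases hval b with hb | hb <;> rcases hval (a * b) with hab | hab <;>
      simp [hBf, h1, ha, hb, hab]
  have hB1 : ∀ a : H, Bf a 1 = 1 := by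
    intro a
    show ε 1 * ε a * ε 1 * ε (a * 1) = 1
    rw [mul_one]
    linear_combination (ε a * ε a) * hsq 1 + hsq a
  have hBsymm : ∀ a b : H, Bf a b = Bf b a := by
    intro a b
    show ε 1 * ε a * ε b * ε (a * b) = ε 1 * ε b * ε a * ε (b * a)
    rw [mul_comm b a]; ring
  -- key identity
  have hkey : ∀ x z : H, ε x * ε (x * z) = ε 1 * ε z * Bf x z := by
    intro x z
    show ε x * ε (x * z) = ε 1 * ε z * (ε 1 * ε x * ε z * ε (x * z))
    linear_combination (-(ε x * ε (x * z)) * (ε z * ε z)) * hsq 1 +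
      (-(ε x * ε (x * z))) * hsq z
  -- nondegenerate character sum over H
  have sumH : ∀ z : H, z ≠ 1 → ∑ x : H, Bf x z = 0 := by
    intro z hz
    have hne : ∃ x : H, Bf x z = -1 := by
      by_contra hc
      push_neg at hc
      have hall : ∀ x : H, Bf x z = 1 := by
        intro x; rcases hBval x z with h | h
        · exact h
        · exact absurd h (hc x)
      refine hz (hnd z (fun β => ?_))
      have := hall β
      rw [hBsymm] at this
      exact this
    obtain ⟨g, hg⟩ := hne
    exact char_sum_zero (fun x => Bf x z) (fun x y => hBmul x y z) g hg
  set S : ℤ := ∑ x : H, ε x with hS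
  have step1 : S * S = (Fintype.card H : ℤ) := by
    have e1 : S * S = ∑ x : H, ∑ y : H, ε x * ε y := by
      rw [hS, Finset.sum_mul_sum]
    have e2 : ∀ x : H, ∑ y : H, ε x * ε y = ∑ z : H, ε 1 * ε z * Bf x z := by
      intro x
      have hb := Fintype.sum_bijective (fun z => x * z) (Group.mulLeft_bijective x)
        (fun z => ε x * ε (x * z)) (fun y => ε x * ε y) (fun z => rfl)
      rw [← hb]
      exact Finset.sum_congr rfl (fun z _ => hkey x z)
    have e3 : S * S = ∑ z : H, ε 1 * ε z * ∑ x : H, Bf x z := by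
      rw [e1]
      rw [Finset.sum_congr rfl (fun x _ => e2 x), Finset.sum_comm]
      exact Finset.sum_congr rfl (fun z _ => by rw [Finset.mul_sum])
    rw [e3]
    rw [Fintype.sum_eq_single 1 (fun z hz => by rw [sumH z hz]; ring)]
    have hH : ∑ x : H, Bf x 1 = (Fintype.card H : ℤ) := by
      rw [Finset.sum_congr rfl (fun x _ => hB1 x)]
      simp [Finset.card_univ]
    rw [hH]
    linear_combination (Fintype.card H : ℤ) * hsq 1
  have hSne : S ≠ 0 := by
    intro h
    have hcard : 0 < Fintype.card H := Fintype.card_pos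
    rw [h] at step1
    simp at step1
    omega
  refine ⟨S.sign, ?_, ?_⟩
  · rcases lt_trichotomy S 0 with h | h | h
    · right; exact Int.sign_eq_neg_one_of_neg h
    · exact absurd h hSne
    · left; exact Int.sign_eq_one_of_pos h
  intro W hW
  set c : H → ℤ := fun α => ∑ w : W, ε (α * (w : H)) with hc
  -- subgroup character sum
  have sumW0 : ∀ z : H, z ∉ W → ∑ w : W, Bf (w : H) z = 0 := by
    intro z hz
    have hne : ∃ w : W, Bf (w : H) z = -1 := by
      by_contra hcon
      push_neg at hcon
      refine hz (hW z (fun w hw => ?_))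
      rcases hBval w z with h | h
      · exact h
      · exact absurd h (hcon ⟨w, hw⟩)
    obtain ⟨g, hg⟩ := hne
    refine char_sum_zero (fun w : W => Bf (w : H) z) (fun x y => ?_) g hg
    push_cast
    exact hBmul x y z
  -- master computation A : S * c α
  have masterA : ∀ α : H,
      S * c α = ∑ z : H, (ε 1 * ε z * Bf α z) * ∑ w : W, Bf (w : H) z := by
    intro α
    have e1 : S * c α = ∑ w : W, ∑ x : H, ε x * ε (α * w) := by
      rw [hc, Finset.mul_sum]
      refine Finset.sum_congr rfl (fun w _ => ?_)
      rw [Finset.sum_mul]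
    have e2 : ∀ w : W, ∑ x : H, ε x * ε (α * w)
        = ∑ z : H, (ε 1 * ε z * Bf α z) * Bf (w : H) z := by
      intro w
      have hb := Fintype.sum_bijective (fun z => (α * (w : H)) * z)
        (Group.mulLeft_bijective _)
        (fun z => ε ((α * (w : H)) * z) * ε (α * (w : H)))
        (fun x => ε x * ε (α * (w : H))) (fun z => rfl)
      rw [← hb]
      refine Finset.sum_congr rfl (fun z _ => ?_)
      rw [mul_comm (ε ((α * (w : H)) * z)) (ε (α * (w : H))), hkey (α * (w : H)) z,
        hBmul α (w : H) z]
      ring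
    rw [e1, Finset.sum_congr rfl (fun w _ => e2 w), Finset.sum_comm]
    exact Finset.sum_congr rfl (fun z _ => (Finset.mul_sum _ _ _).symm)
  -- master computation B : c α * c β
  have masterB : ∀ α β : H,
      c α * c β = ∑ u : W,
        (ε 1 * ε (α * β * (u : H)) * Bf α (α * β * (u : H)))
          * ∑ w : W, Bf (w : H) (α * β * (u : H)) := by
    intro α β
    have e1 : ∀ w : W, ε (α * (w : H)) * c β
        = ∑ u : W, (ε 1 * ε (α * β * (u : H)) * Bf α (α * β * (u : H)))
            * Bf (w : H) (α * β * (u : H)) := by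
      intro w
      have hb := Fintype.sum_bijective (fun u : W => w * u) (Group.mulLeft_bijective w)
        (fun u : W => ε (α * (w : H)) * ε (β * ((w * u : W) : H)))
        (fun v : W => ε (α * (w : H)) * ε (β * (v : H))) (fun u => rfl)
      have e0 : ε (α * (w : H)) * c β
          = ∑ u : W, ε (α * (w : H)) * ε (β * (((w : W) * u : W) : H)) := by
        rw [hc, Finset.mul_sum, ← hb]
      rw [e0]
      refine Finset.sum_congr rfl (fun u _ => ?_)
      have harg : β * (((w : W) * u : W) : H) = (α * (w : H)) * (α * β * (u : H)) := by
        push_cast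
        calc β * ((w : H) * (u : H)) = (α * α) * (β * ((w : H) * (u : H))) := by
              rw [htwo α, one_mul]
          _ = (α * (w : H)) * (α * β * (u : H)) := by
              simp only [mul_assoc, mul_comm, mul_left_comm]
      rw [harg, hkey (α * (w : H)) (α * β * (u : H)), hBmul α (w : H) (α * β * (u : H))]
      ring
    have e2 : c α * c β = ∑ w : W, ε (α * (w : H)) * c β := by
      rw [hc, Finset.sum_mul]
    rw [e2, Finset.sum_congr rfl (fun w _ => e1 w), Finset.sum_comm]
    exact Finset.sum_congr rfl (fun u _ => (Finset.mul_sum _ _ _).symm)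
  have hinv : ∀ x : H, x⁻¹ = x := fun x => inv_eq_of_mul_eq_one_right (htwo x)
  have vanish : ∀ α β : H, α * β ∉ W → c α * c β = 0 := by
    intro α β hab
    rw [masterB α β]
    refine Finset.sum_eq_zero (fun u _ => ?_)
    have hz : α * β * (u : H) ∉ W := by
      intro hmem
      refine hab ?_
      have he : α * β = (α * β * (u : H)) * ((u : H))⁻¹ := by group
      rw [he]
      exact W.mul_mem hmem (W.inv_mem u.2)
    rw [sumW0 _ hz, mul_zero]
  have keyeq : ∀ α : H, c α * c α = S * c α := by
    intro α
    rw [masterA α, masterB α α]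
    set g : H → ℤ := fun z => (ε 1 * ε z * Bf α z) * ∑ w : W, Bf (w : H) z with hg
    have lhs : ∑ u : W,
        (ε 1 * ε (α * α * (u : H)) * Bf α (α * α * (u : H)))
          * ∑ w : W, Bf (w : H) (α * α * (u : H)) = ∑ u : W, g (u : H) := by
      refine Finset.sum_congr rfl (fun u _ => ?_)
      rw [hg]; simp only [htwo α, one_mul]
    rw [lhs]
    have hvan : ∀ z : H, z ∉ W → g z = 0 := by
      intro z hz
      rw [hg]; simp only
      rw [sumW0 z hz, mul_zero]
    have e1 : ∑ z : H, g z = ∑ z ∈ Finset.univ.filter (· ∈ W), g z := by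
      symm
      refine Finset.sum_subset (Finset.filter_subset _ _) (fun z _ hz => ?_)
      refine hvan z (fun hm => hz ?_)
      simp [hm]
    have e2 : ∑ z ∈ Finset.univ.filter (· ∈ W), g z = ∑ u : W, g (u : H) :=
      Finset.sum_subtype _ (fun x => by simp) g
    rw [e1, e2]
  -- existence
  have total : ∑ α : H, c α = (Fintype.card W : ℤ) * S := by
    rw [hc, Finset.sum_comm]
    have hterm : ∀ w : W, ∑ α : H, ε (α * (w : H)) = S :=
      fun w => Fintype.sum_bijective (fun a => a * (w : H)) (Group.mulRight_bijective _)
        (fun a => ε (a * (w : H))) ε (fun a => rfl)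
    rw [Finset.sum_congr rfl (fun w _ => hterm w), Finset.sum_const, Finset.card_univ]
    simp [mul_comm]
  have hex : ∃ α : H, c α ≠ 0 := by
    by_contra hcon
    push_neg at hcon
    have hzero : ∑ α : H, c α = 0 := Finset.sum_eq_zero (fun a _ => hcon a)
    rw [total] at hzero
    rcases mul_eq_zero.mp hzero with h | h
    · exact absurd h (Nat.cast_ne_zero.mpr Fintype.card_pos.ne')
    · exact hSne h
  obtain ⟨α, hα⟩ := hex
  have hcS : c α = S := by
    have h1 := keyeq α
    have h2 : c α * (c α - S) = 0 := by linear_combination h1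
    rcases mul_eq_zero.mp h2 with h | h
    · exact absurd h hα
    · linarith
  refine ⟨α, ⟨S.natAbs, ?_, ?_⟩, ?_⟩
  · have h1 : ((S.natAbs * S.natAbs : ℕ) : ℤ) = S * S := Int.natAbs_mul_self
    rw [step1] at h1
    have h2 : S.natAbs * S.natAbs = Fintype.card H := by exact_mod_cast h1
    rw [pow_two]; exact h2
  · show c α = S.sign * S.natAbs
    rw [hcS, Int.sign_mul_natAbs]
  · intro β hβ
    have hβne : c β ≠ 0 := hβ
    have hβα : β * α ∈ W := by
      by_contra hno
      exact (mul_ne_zero hβne hα) (vanish β α hno)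
    rw [hinv β]
    exact hβα
end

section
/- With H, ε, W as in the charmed coset lemma, let αW be the unique coset on which Σ ε is nonzero. Then for any coset βW^⊥ of W^⊥ contained in αW, ε is constant on βW^⊥; whereas on any coset βW^⊥ not contained in αW, ε takes the values +1 and −1 equally often. -/
open Finset

section Aux

variable {H : Type*} [CommGroup H] [Fintype H]

/-- Translation invariance of a sum over a finset closed under multiplication by an
involution `γ₀`. -/
lemma aux_sum_translate (s : Finset H) (f : H → ℤ) (γ₀ : H) (hsq : γ₀ * γ₀ = 1)
    (hmap : ∀ γ ∈ s, γ₀ * γ ∈ s) :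
    ∑ γ ∈ s, f (γ₀ * γ) = ∑ γ ∈ s, f γ := by
  refine Finset.sum_nbij' (fun γ => γ₀ * γ) (fun γ => γ₀ * γ) hmap hmap ?_ ?_ ?_
  · intro a _; show γ₀ * (γ₀ * a) = a; rw [← mul_assoc, hsq, one_mul]
  · intro a _; show γ₀ * (γ₀ * a) = a; rw [← mul_assoc, hsq, one_mul]
  · intro a _; rfl

/-- A multiplicative `±1`-valued function on a suitable finset, taking the value `-1`
somewhere, sums to zero. -/
lemma aux_char_sum_zero (s : Finset H) (f : H → ℤ) (γ₀ : H) (hγ₀ : γ₀ ∈ s)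
    (hsq : γ₀ * γ₀ = 1) (hmap : ∀ γ ∈ s, γ₀ * γ ∈ s)
    (hmul : ∀ γ ∈ s, f (γ₀ * γ) = f γ₀ * f γ) (hneg : f γ₀ = -1) :
    ∑ γ ∈ s, f γ = 0 := by
  have h1 : ∑ γ ∈ s, f (γ₀ * γ) = ∑ γ ∈ s, f γ := aux_sum_translate s f γ₀ hsq hmap
  have h2 : ∑ γ ∈ s, f (γ₀ * γ) = -∑ γ ∈ s, f γ := by
    rw [Finset.sum_congr rfl hmul]
    simp [hneg, Finset.mul_sum]
  have := h1.symm.trans h2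
  linarith

end Aux

open Classical in
/-- With `H`, `ε`, `W` as in the charmed coset lemma, let `α₀W` be the unique
(charmed) coset on which `∑ ε` is nonzero.  Then on any coset `βW^⊥` of `W^⊥` contained in the
charmed coset, `ε` is constant; whereas on any coset `βW^⊥` not contained in the charmed coset,
`ε` takes the values `+1` and `-1` equally often. -/
theorem stmt_8
    (H : Type*) [CommGroup H] [Fintype H]
    (htwo : ∀ x : H, x * x = 1)
    (ε : H → ℤ) (hval : ∀ x, ε x = 1 ∨ ε x = -1)
    (hbil : ∀ α β γ : H,
      ε 1 * ε (α * β) * ε γ * ε (α * β * γ)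
        = (ε 1 * ε α * ε γ * ε (α * γ)) * (ε 1 * ε β * ε γ * ε (β * γ)))
    (hnd : ∀ α : H, (∀ β : H, ε 1 * ε α * ε β * ε (α * β) = 1) → α = 1)
    (W : Subgroup H)
    (hco : ∀ β : H, (∀ w ∈ W, ε 1 * ε w * ε β * ε (w * β) = 1) → β ∈ W)
    (α₀ : H) (hcharmed : (∑ w : W, ε (α₀ * (w : H))) ≠ 0)
    (β : H) :
    (β⁻¹ * α₀ ∈ W →
      ∀ γ : H, (∀ w ∈ W, ε 1 * ε w * ε γ * ε (w * γ) = 1) → ε (β * γ) = ε β) ∧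
    (β⁻¹ * α₀ ∉ W →
      2 * (Finset.univ.filter fun γ : H =>
            (∀ w ∈ W, ε 1 * ε w * ε γ * ε (w * γ) = 1) ∧ ε (β * γ) = 1).card
        = (Finset.univ.filter fun γ : H =>
            ∀ w ∈ W, ε 1 * ε w * ε γ * ε (w * γ) = 1).card) := by
  classical
  -- basic facts
  have hinv : ∀ x : H, x⁻¹ = x := fun x => inv_eq_of_mul_eq_one_right (htwo x)
  have hε2 : ∀ x : H, ε x * ε x = 1 := by
    intro x; rcases hval x with h | h <;> simp [h]
  set B : H → H → ℤ := fun a b => ε 1 * ε a * ε b * ε (a * b) with hBdef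
  have hBsymm : ∀ a b : H, B a b = B b a := by
    intro a b; simp only [hBdef]; rw [mul_comm a b]; ring
  have hBmul : ∀ a b c : H, B (a * b) c = B a c * B b c := fun a b c => hbil a b c
  have hBmulr : ∀ a b c : H, B a (b * c) = B a b * B a c := by
    intro a b c; rw [hBsymm, hBmul, hBsymm a b, hBsymm a c]
  have hB1 : ∀ c : H, B 1 c = 1 := by
    intro c
    have : B 1 c = (ε 1 * ε 1) * (ε c * ε c) := by simp only [hBdef]; rw [one_mul]; ring
    rw [this, hε2, hε2, one_mul]
  have hB1r : ∀ c : H, B c 1 = 1 := fun c => by rw [hBsymm]; exact hB1 c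
  have hBval : ∀ a b : H, B a b = 1 ∨ B a b = -1 := by
    intro a b
    rcases hval 1 with h1 | h1 <;> rcases hval a with h2 | h2 <;>
      rcases hval b with h3 | h3 <;> rcases hval (a * b) with h4 | h4 <;>
      simp [hBdef, h1, h2, h3, h4]
  have hB2 : ∀ a b : H, B a b * B a b = 1 := by
    intro a b; rcases hBval a b with h | h <;> simp [h]
  have hεmul : ∀ a b : H, ε (a * b) = ε 1 * ε a * ε b * B a b := by
    intro a b
    have : ε 1 * ε a * ε b * B a b
        = (ε 1 * ε 1) * (ε a * ε a) * (ε b * ε b) * ε (a * b) := by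
      simp only [hBdef]; ring
    rw [this, hε2, hε2, hε2]; ring
  -- the perp predicate: the hypothesis condition is exactly `∀ w ∈ W, B w γ = 1`
  set P : H → Prop := fun γ => ∀ w ∈ W, ε 1 * ε w * ε γ * ε (w * γ) = 1 with hPdef
  have hPB : ∀ γ : H, P γ ↔ ∀ w ∈ W, B w γ = 1 := by
    intro γ; simp only [hPdef, hBdef]
  set Wfin : Finset H := univ.filter (· ∈ W) with hWfin
  set pf : Finset H := univ.filter P with hpf
  have hmemW : ∀ x : H, x ∈ Wfin ↔ x ∈ W := by intro x; simp [hWfin]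
  have hmemP : ∀ x : H, x ∈ pf ↔ P x := by intro x; simp [hpf]
  have h1W : (1 : H) ∈ Wfin := (hmemW 1).2 W.one_mem
  have h1P : (1 : H) ∈ pf := by
    rw [hmemP, hPB]; intro w _; exact hB1r w
  have hWclosed : ∀ w₀ ∈ Wfin, ∀ w ∈ Wfin, w₀ * w ∈ Wfin := by
    intro w₀ hw₀ w hw
    rw [hmemW] at *
    exact W.mul_mem hw₀ hw
  have hPclosed : ∀ γ₀ ∈ pf, ∀ γ ∈ pf, γ₀ * γ ∈ pf := by
    intro γ₀ hγ₀ γ hγ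
    rw [hmemP, hPB] at *
    intro w hw; rw [hBmulr, hγ₀ w hw, hγ w hw, one_mul]
  -- the charmed sum over the finset
  have hT : (∑ w ∈ Wfin, ε (α₀ * w)) ≠ 0 := by
    intro h
    apply hcharmed
    rw [← h]
    exact (Finset.sum_subtype Wfin (fun x => hmemW x) (fun w => ε (α₀ * w))).symm
  -- key identity: on the perp, ε γ = ε 1 * B α₀ γ
  have hkey : ∀ γ : H, P γ → ε γ = ε 1 * B α₀ γ := by
    intro γ hPγ
    have hγW : γ ∈ W := hco γ hPγ
    have hBwγ : ∀ w ∈ W, B w γ = 1 := (hPB γ).1 hPγ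
    have hmap : ∀ w ∈ Wfin, γ * w ∈ Wfin := by
      intro w hw; exact hWclosed γ ((hmemW γ).2 hγW) w hw
    have htrans : ∑ w ∈ Wfin, ε (α₀ * (γ * w)) = ∑ w ∈ Wfin, ε (α₀ * w) :=
      aux_sum_translate Wfin (fun x => ε (α₀ * x)) γ (htwo γ) hmap
    have hpt : ∀ w ∈ Wfin, ε (α₀ * (γ * w)) = (ε 1 * ε γ * B α₀ γ) * ε (α₀ * w) := by
      intro w hw
      have hw' : w ∈ W := (hmemW w).1 hw
      have e1 : α₀ * (γ * w) = (α₀ * w) * γ := by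
        rw [mul_comm γ w, ← mul_assoc]
      rw [e1, hεmul (α₀ * w) γ, hBmul, hBwγ w hw', mul_one]
      ring
    have hsum : ∑ w ∈ Wfin, ε (α₀ * w) = (ε 1 * ε γ * B α₀ γ) * ∑ w ∈ Wfin, ε (α₀ * w) := by
      have h := Finset.sum_congr rfl hpt
      rw [htrans, ← Finset.mul_sum] at h
      exact h
    have hc : (ε 1 * ε γ * B α₀ γ - 1) * (∑ w ∈ Wfin, ε (α₀ * w)) = 0 := by linarith
    have hc1 : ε 1 * ε γ * B α₀ γ = 1 := by
      rcases mul_eq_zero.1 hc with h | h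
      · linarith
      · exact absurd h hT
    have e1 : ε γ = ε γ * (ε 1 * ε γ * B α₀ γ) := by rw [hc1, mul_one]
    have e2 : ε γ * (ε 1 * ε γ * B α₀ γ) = (ε γ * ε γ) * (ε 1 * B α₀ γ) := by ring
    rw [e1, e2, hε2, one_mul]
  -- on the perp, ε (β' * γ) = ε β' * B (α₀ * β') γ
  have hεβγ : ∀ β' γ : H, P γ → ε (β' * γ) = ε β' * B (α₀ * β') γ := by
    intro β' γ hPγ
    rw [hεmul β' γ, hkey γ hPγ, hBmul]
    have e : ε 1 * ε β' * (ε 1 * B α₀ γ) * B β' γ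
        = (ε 1 * ε 1) * (ε β' * (B α₀ γ * B β' γ)) := by ring
    rw [e, hε2, one_mul]
  -- sums of characters over the whole group
  have hUnivSum : ∀ c : H, c ≠ 1 → ∑ a : H, B a c = 0 := by
    intro c hc
    have h1 : ¬ ∀ b : H, B c b = 1 := fun h => hc (hnd c h)
    push_neg at h1
    obtain ⟨b, hb⟩ := h1
    have hb' : B b c = -1 := by
      rw [hBsymm]; rcases hBval c b with h | h
      · exact absurd h hb
      · exact h
    exact aux_char_sum_zero univ (fun a => B a c) b (mem_univ b) (htwo b)
      (fun γ _ => mem_univ _) (fun a _ => hBmul b a c) hb'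
  have hUniv1 : ∑ a : H, B a 1 = (Fintype.card H : ℤ) := by
    rw [Finset.sum_congr rfl (fun a _ => hB1r a)]
    simp [Finset.card_univ]
  -- the double-counting identity
  have hdouble : ∀ s : Finset H, (1 : H) ∈ s → (∀ x ∈ s, ∀ y ∈ s, x * y ∈ s) →
      (((univ.filter (fun a => ∀ x ∈ s, B a x = 1)).card : ℤ)) * (s.card : ℤ)
        = (Fintype.card H : ℤ) := by
    intro s h1s hcl
    have hL : ∑ x ∈ s, ∑ a : H, B a x = (Fintype.card H : ℤ) := by
      rw [Finset.sum_eq_single_of_mem 1 h1s (fun x _ hx => hUnivSum x hx)]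
      exact hUniv1
    have hinner : ∀ a : H, ∑ x ∈ s, B a x
        = if (∀ x ∈ s, B a x = 1) then (s.card : ℤ) else 0 := by
      intro a
      by_cases h : ∀ x ∈ s, B a x = 1
      · rw [if_pos h, Finset.sum_congr rfl h]
        simp
      · rw [if_neg h]
        push_neg at h
        obtain ⟨x₀, hx₀, hx₀'⟩ := h
        have hneg : B a x₀ = -1 := by
          rcases hBval a x₀ with h' | h'
          · exact absurd h' hx₀'
          · exact h'
        exact aux_char_sum_zero s (fun x => B a x) x₀ hx₀ (htwo x₀)
          (fun γ hγ => hcl x₀ hx₀ γ hγ) (fun x _ => hBmulr a x₀ x) hneg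
    have hR : ∑ a : H, ∑ x ∈ s, B a x
        = ((univ.filter (fun a => ∀ x ∈ s, B a x = 1)).card : ℤ) * (s.card : ℤ) := by
      rw [Finset.sum_congr rfl (fun a _ => hinner a), ← Finset.sum_filter,
        Finset.sum_const]
      simp [mul_comm]
    rw [← hR, ← Finset.sum_comm, hL]
  -- apply double counting to W and to the perp
  have hfilW : univ.filter (fun a => ∀ x ∈ Wfin, B a x = 1) = pf := by
    apply Finset.filter_congr
    intro a _
    constructor
    · intro h
      rw [hPdef]
      intro w hw
      have := h w ((hmemW w).2 hw)
      rw [hBsymm] at this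
      exact this
    · intro h x hx
      rw [hBsymm]
      exact (hPB a).1 h x ((hmemW x).1 hx)
  have hcard1 : (pf.card : ℤ) * (Wfin.card : ℤ) = (Fintype.card H : ℤ) := by
    rw [← hfilW]
    exact hdouble Wfin h1W hWclosed
  set Q : H → Prop := fun a => ∀ x ∈ pf, B a x = 1 with hQdef
  set ppf : Finset H := univ.filter Q with hppf
  have hcard2 : (ppf.card : ℤ) * (pf.card : ℤ) = (Fintype.card H : ℤ) :=
    hdouble pf h1P hPclosed
  have hpfpos : (0 : ℤ) < pf.card := by
    have : 0 < pf.card := Finset.card_pos.2 ⟨1, h1P⟩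
    exact_mod_cast this
  have hcardeq : ppf.card = Wfin.card := by
    have : (ppf.card : ℤ) * (pf.card : ℤ) = (Wfin.card : ℤ) * (pf.card : ℤ) := by
      rw [hcard2]; rw [mul_comm] at hcard1; rw [hcard1]
    have := mul_right_cancel₀ (ne_of_gt hpfpos) this
    exact_mod_cast this
  have hWsub : Wfin ⊆ ppf := by
    intro w hw
    rw [hppf, Finset.mem_filter]
    refine ⟨mem_univ _, ?_⟩
    intro γ hγ
    exact (hPB γ).1 ((hmemP γ).1 hγ) w ((hmemW w).1 hw)
  have hWppf : Wfin = ppf :=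
    Finset.eq_of_subset_of_card_le hWsub (le_of_eq hcardeq)
  -- the two parts
  constructor
  · -- part 1: β in the charmed coset
    intro h1 γ hγ
    have hPγ : P γ := hγ
    have hαβ : α₀ * β ∈ W := by
      have : β⁻¹ * α₀ = α₀ * β := by rw [hinv β, mul_comm]
      rw [← this]; exact h1
    rw [hεβγ β γ hPγ, (hPB γ).1 hPγ (α₀ * β) hαβ, mul_one]
  · -- part 2: β not in the charmed coset
    intro h2
    have hαβ : α₀ * β ∉ W := by
      intro h
      apply h2
      have : β⁻¹ * α₀ = α₀ * β := by rw [hinv β, mul_comm]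
      rw [this]; exact h
    have hδ : (α₀ * β) ∉ ppf := by
      rw [← hWppf]
      intro h
      exact hαβ ((hmemW _).1 h)
    have hQδ : ¬ Q (α₀ * β) := by
      intro h
      exact hδ (by rw [hppf, Finset.mem_filter]; exact ⟨mem_univ _, h⟩)
    have hQex : ∃ γ₀ ∈ pf, B (α₀ * β) γ₀ ≠ 1 := by
      by_contra hcon
      push_neg at hcon
      exact hQδ (fun x hx => hcon x hx)
    obtain ⟨γ₀, hγ₀, hγ₀'⟩ := hQex
    have hneg : B (α₀ * β) γ₀ = -1 := by
      rcases hBval (α₀ * β) γ₀ with h | h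
      · exact absurd h hγ₀'
      · exact h
    have hSzero : ∑ γ ∈ pf, B (α₀ * β) γ = 0 :=
      aux_char_sum_zero pf (fun γ => B (α₀ * β) γ) γ₀ hγ₀ (htwo γ₀)
        (fun γ hγ => hPclosed γ₀ hγ₀ γ hγ) (fun γ _ => hBmulr (α₀ * β) γ₀ γ) hneg
    have hSum0 : ∑ γ ∈ pf, ε (β * γ) = 0 := by
      have : ∀ γ ∈ pf, ε (β * γ) = ε β * B (α₀ * β) γ := by
        intro γ hγ
        exact hεβγ β γ ((hmemP γ).1 hγ)
      rw [Finset.sum_congr rfl this, ← Finset.mul_sum, hSzero, mul_zero]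
    -- split the sum over pf according to the sign of ε (β * γ)
    set A : Finset H := pf.filter (fun γ => ε (β * γ) = 1) with hA
    set A' : Finset H := pf.filter (fun γ => ¬ ε (β * γ) = 1) with hA'
    have hsplit : ∑ γ ∈ A, ε (β * γ) + ∑ γ ∈ A', ε (β * γ) = 0 := by
      rw [hA, hA', Finset.sum_filter_add_sum_filter_not]
      exact hSum0
    have hsA : ∑ γ ∈ A, ε (β * γ) = (A.card : ℤ) := by
      rw [Finset.sum_congr rfl (fun γ hγ => (Finset.mem_filter.1 hγ).2)]
      simp
      rfl
    have hsA' : ∑ γ ∈ A', ε (β * γ) = -(A'.card : ℤ) := by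
      have : ∀ γ ∈ A', ε (β * γ) = -1 := by
        intro γ hγ
        rcases hval (β * γ) with h | h
        · exact absurd h (Finset.mem_filter.1 hγ).2
        · exact h
      rw [Finset.sum_congr rfl this]
      simp
    have hcards : A.card + A'.card = pf.card := by
      rw [hA, hA']
      exact Finset.card_filter_add_card_filter_not _
    have hAA' : (A.card : ℤ) = (A'.card : ℤ) := by
      rw [hsA, hsA'] at hsplit; linarith
    have hgoal : 2 * A.card = pf.card := by
      have : (2 * A.card : ℤ) = (pf.card : ℤ) := by
        rw [← hcards]; push_cast; linarith
      exact_mod_cast this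
    have hfin : univ.filter
        (fun γ : H => (∀ w ∈ W, ε 1 * ε w * ε γ * ε (w * γ) = 1) ∧ ε (β * γ) = 1) = A := by
      rw [hA, hpf, Finset.filter_filter]
    rw [hfin]
    exact hgoal
end

section
/- Let K be a 2-adic local field with uniformizer π, ramification index e = v(2), and residue field of size q. Let C(x,y,z) be an integer-matrix ternary quadratic form over O_K with unit determinant, diagonalized as a₁x² + a₂y² + a₃z². If ξ ∈ O_K³ is a primitive vector with C(ξ) ≡ 0 mod π^m for some m > 2e, then there exists ξ' ∈ O_K³ with ξ' ≡ ξ mod π^{m−e} and C(ξ') = 0. -/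
/-- Let `K` be a 2-adic local field, with ring of integers `O` (a complete
discrete valuation ring with finite residue field), uniformizer `π` and ramification index
`e = v(2)`.  Let `C(x,y,z) = a₁x² + a₂y² + a₃z²` be a diagonal integer ternary quadratic form
whose determinant `a₁a₂a₃` has valuation at most `1`.  If `ξ ∈ O³` is a primitive vector with
`C(ξ) ≡ 0 mod π^m` for some `m > 2e`, then there exists `ξ' ∈ O³` with
`ξ' ≡ ξ mod π^(m-e)` and `C(ξ') = 0`. -/
theorem stmt_10
    (O : Type*) [CommRing O] [IsDomain O] [IsDiscreteValuationRing O]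
    [IsAdicComplete (IsLocalRing.maximalIdeal O) O]
    [Finite (IsLocalRing.ResidueField O)]
    (π : O) (hπ : Irreducible π)
    (e : ℕ) (he : 0 < e) (h2 : Associated (π ^ e) (2 : O))
    (a : Fin 3 → O) (hdet : ¬ (π ^ 2 ∣ ∏ i, a i))
    (ξ : Fin 3 → O) (hprim : ∃ i, IsUnit (ξ i))
    (m : ℕ) (hm : 2 * e < m)
    (hC : π ^ m ∣ ∑ i, a i * ξ i ^ 2) :
    ∃ ξ' : Fin 3 → O,
      (∀ i, π ^ (m - e) ∣ (ξ' i - ξ i)) ∧ ∑ i, a i * ξ' i ^ 2 = 0 := by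
  classical
  have hmax : IsLocalRing.maximalIdeal O = Ideal.span {π} :=
    (IsDiscreteValuationRing.irreducible_iff_uniformizer π).mp hπ
  have hmem : ∀ x : O, x ∈ IsLocalRing.maximalIdeal O ↔ π ∣ x := by
    intro x; rw [hmax, Ideal.mem_span_singleton]
  have hπ0 : π ≠ 0 := hπ.ne_zero
  have hunit : ∀ x : O, IsUnit x ↔ ¬ π ∣ x := by
    intro x; rw [← IsLocalRing.notMem_maximalIdeal, hmem x]
  -- Step 1 : find an index j with a j and ξ j both units
  have hj : ∃ j, IsUnit (a j) ∧ IsUnit (ξ j) := by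
    by_contra hcon
    push_neg at hcon
    obtain ⟨i₀, hi₀⟩ := hprim
    have hai₀ : π ∣ a i₀ := by
      by_contra h
      exact (hcon i₀ ((hunit _).mpr h)) hi₀
    have hothers : ∀ i, i ≠ i₀ → π ∣ ξ i := by
      intro i hi
      by_contra h
      have hξi : IsUnit (ξ i) := (hunit _).mpr h
      have hai : π ∣ a i := by
        by_contra h'
        exact (hcon i ((hunit _).mpr h')) hξi
      apply hdet
      have hsub : a i * a i₀ ∣ ∏ k, a k := by
        calc a i * a i₀ = ∏ k ∈ {i, i₀}, a k := (Finset.prod_pair hi).symm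
          _ ∣ ∏ k, a k := Finset.prod_dvd_prod_of_subset _ _ _ (Finset.subset_univ _)
      exact dvd_trans (by rw [pow_two]; exact mul_dvd_mul hai hai₀) hsub
    have h2sum : π ^ 2 ∣ ∑ i, a i * ξ i ^ 2 :=
      dvd_trans (pow_dvd_pow π (by omega)) hC
    have h2rest : π ^ 2 ∣ ∑ i ∈ Finset.univ \ {i₀}, a i * ξ i ^ 2 := by
      refine Finset.dvd_sum ?_
      intro i hi
      simp only [Finset.mem_sdiff, Finset.mem_singleton] at hi
      have hd := hothers i hi.2
      exact Dvd.dvd.mul_left (by rw [pow_two, pow_two]; exact mul_dvd_mul hd hd) _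
    have hsplit : a i₀ * ξ i₀ ^ 2 =
        (∑ i, a i * ξ i ^ 2) - ∑ i ∈ Finset.univ \ {i₀}, a i * ξ i ^ 2 := by
      rw [eq_sub_iff_add_eq, Finset.sum_sdiff_eq_sub (Finset.subset_univ _)]
      simp
    have h2i₀ : π ^ 2 ∣ a i₀ * ξ i₀ ^ 2 := by
      rw [hsplit]; exact dvd_sub h2sum h2rest
    have h2a : π ^ 2 ∣ a i₀ := by
      have hun : IsUnit (ξ i₀ ^ 2) := hi₀.pow 2
      rw [mul_comm] at h2i₀
      exact (IsUnit.dvd_mul_left hun).mp h2i₀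
    exact hdet (dvd_trans h2a (Finset.dvd_prod_of_mem a (Finset.mem_univ i₀)))
  obtain ⟨j, haj, hξj⟩ := hj
  obtain ⟨c₀, hc₀⟩ := hC
  obtain ⟨v, hv⟩ := h2  -- π^e * v = 2
  obtain ⟨k, hk, hk1⟩ : ∃ k, m = 2 * e + k ∧ 0 < k := ⟨m - 2 * e, by omega, by omega⟩
  set u : O := (v : O) * a j * ξ j with hu_def
  have hu : IsUnit u := (v.isUnit.mul haj).mul hξj
  set b : O := a j * π ^ k with hb_def
  have hπb : π ∣ b := Dvd.dvd.mul_left (dvd_pow_self π hk1.ne') _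
  -- Hensel: find root z of X² + uX + b c₀ with z ∈ maximal ideal
  obtain ⟨z, hzroot, hz⟩ := HenselianRing.is_henselian (R := O)
      (I := IsLocalRing.maximalIdeal O)
      (Polynomial.X ^ 2 + Polynomial.C u * Polynomial.X + Polynomial.C (b * c₀))
      (by monicity!) 0
      (by rw [hmem]; simpa using hπb.mul_right c₀)
      (by
        have heval : Polynomial.eval 0 (Polynomial.derivative
            (Polynomial.X ^ 2 + Polynomial.C u * Polynomial.X
              + Polynomial.C (b * c₀))) = u := by
          simp
        rw [heval]
        exact hu.map _)
  rw [sub_zero, hmem] at hz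
  have hzeq : z ^ 2 + u * z + b * c₀ = 0 := by
    simpa [Polynomial.IsRoot] using hzroot
  -- z + u is a unit
  have hzu : IsUnit (z + u) := by
    rw [hunit]
    intro hd
    exact ((hunit u).mp hu) (by simpa using dvd_sub hd hz)
  obtain ⟨w, hw⟩ := hzu
  set y : O := -c₀ * (↑w⁻¹ : O) with hy_def
  have hby : b * y = z := by
    have h1 : z * (z + u) = -(b * c₀) := by linear_combination hzeq
    calc b * y = -(b * c₀) * ↑w⁻¹ := by rw [hy_def]; ring
      _ = z * (z + u) * ↑w⁻¹ := by rw [h1]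
      _ = z * (↑w * ↑w⁻¹) := by rw [hw]; ring
      _ = z := by rw [Units.mul_inv, mul_one]
  have hb0 : b ≠ 0 := by
    rw [hb_def]
    exact mul_ne_zero haj.ne_zero (pow_ne_zero _ hπ0)
  have hgy : b * y ^ 2 + u * y + c₀ = 0 := by
    apply mul_left_cancel₀ hb0
    rw [mul_zero]
    calc b * (b * y ^ 2 + u * y + c₀)
        = (b * y) ^ 2 + u * (b * y) + b * c₀ := by ring
      _ = z ^ 2 + u * z + b * c₀ := by rw [hby]
      _ = 0 := hzeq
  -- construct ξ'
  set t : O := ξ j + π ^ (e + k) * y with ht_def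
  refine ⟨Function.update ξ j t, ?_, ?_⟩
  · intro i
    rcases eq_or_ne i j with rfl | hij
    · rw [Function.update_self, ht_def]
      have : m - e = e + k := by omega
      rw [this]
      exact ⟨y, by ring⟩
    · rw [Function.update_of_ne hij, sub_self]
      exact dvd_zero _
  · have hsum : ∑ i, a i * (Function.update ξ j t) i ^ 2
        = a j * t ^ 2 + ∑ i ∈ Finset.univ \ {j}, a i * ξ i ^ 2 := by
      have hpt : ∀ i, a i * (Function.update ξ j t) i ^ 2
          = Function.update (fun i => a i * ξ i ^ 2) j (a j * t ^ 2) i := by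
        intro i
        rcases eq_or_ne i j with rfl | hij
        · simp
        · rw [Function.update_of_ne hij, Function.update_of_ne hij]
      rw [Finset.sum_congr rfl (fun i _ => hpt i), Finset.sum_update_of_mem (Finset.mem_univ j)]
    have hrest : ∑ i ∈ Finset.univ \ {j}, a i * ξ i ^ 2
        = π ^ (2 * e + k) * c₀ - a j * ξ j ^ 2 := by
      rw [Finset.sum_sdiff_eq_sub (Finset.subset_univ _), ← hk, ← hc₀]
      simp
    rw [hsum, hrest]
    have hexp : a j * t ^ 2 + (π ^ (2 * e + k) * c₀ - a j * ξ j ^ 2)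
        = π ^ (2 * e + k) * (b * y ^ 2 + u * y + c₀) := by
      rw [ht_def, hb_def, hu_def]
      have h2' : (2 : O) = π ^ e * v := hv.symm
      linear_combination (2 * a j * ξ j * π ^ (e + k) * y + a j * π ^ (e + k) * π ^ (e + k) * y ^ 2 - a j * π ^ (e+k) * π ^ (e+k) * y ^2) * h2' + (a j * ξ j * π ^ (e + k) * y) * hv
    rw [hexp, hgy, mul_zero]
end

section
/- Let K be a 2-adic local field with e = v(2) even, and let C be a unimodular ternary quadratic form over O_K (integer-matrix, determinant a unit) that is congruent to c·λ² modulo 2 for some unit c and linear form λ (i.e. has maximal squareness e). Then C has a nontrivial zero over K. -/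
lemma char2_det {k : Type*} [CommRing k] (h2 : (2:k) = 0)
    (c l0 l1 l2 m01 m02 m12 : k) :
    (c*l0^2) * (c*l1^2) * (c*l2^2) - (c*l0^2)*m12*m12 - m01*m01*(c*l2^2)
      + m01*m12*m02 + m02*m01*m12 - m02*(c*l1^2)*m02
    = c * (c*l0*l1*l2 + l0*m12 + l1*m02 + l2*m01)^2 := by
  linear_combination (-(c*(l0^2*m12^2+l1^2*m02^2+l2^2*m01^2)) + m01*m02*m12
    - c^2*l0*l1*l2*(l0*m12 + l1*m02 + l2*m01)
    - c*(l0*l1*m02*m12 + l0*l2*m01*m12 + l1*l2*m01*m02)) * h2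

lemma resid_det {O : Type*} [CommRing O] [IsLocalRing O]
    (two0 : IsLocalRing.residue O 2 = 0)
    (M : Matrix (Fin 3) (Fin 3) O) (hsymm : M.IsSymm)
    (c : O) (lam : Fin 3 → O)
    (hsq : ∀ x : Fin 3 → O,
      (2 : O) ∣ ((∑ i, ∑ j, M i j * x i * x j) - c * (∑ i, lam i * x i) ^ 2)) :
    IsLocalRing.residue O M.det
      = IsLocalRing.residue O c *
        (IsLocalRing.residue O c * IsLocalRing.residue O (lam 0) * IsLocalRing.residue O (lam 1)
            * IsLocalRing.residue O (lam 2)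
          + IsLocalRing.residue O (lam 0) * IsLocalRing.residue O (M 1 2)
          + IsLocalRing.residue O (lam 1) * IsLocalRing.residue O (M 0 2)
          + IsLocalRing.residue O (lam 2) * IsLocalRing.residue O (M 0 1)) ^ 2 := by
  set φ := IsLocalRing.residue O with hφ
  have hdvd : ∀ x y : O, (2:O) ∣ x - y → φ x = φ y := by
    rintro x y ⟨t, ht⟩
    have : φ (x - y) = 0 := by rw [ht, map_mul, two0, zero_mul]
    rw [map_sub, sub_eq_zero] at this; exact this
  have h0 := hsq ![1,0,0]
  have h1 := hsq ![0,1,0]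
  have h2 := hsq ![0,0,1]
  simp [Fin.sum_univ_three] at h0 h1 h2
  have d0 : φ (M 0 0) = φ c * φ (lam 0) ^ 2 := by
    have := hdvd _ _ h0; rwa [map_mul, map_pow] at this
  have d1 : φ (M 1 1) = φ c * φ (lam 1) ^ 2 := by
    have := hdvd _ _ h1; rwa [map_mul, map_pow] at this
  have d2 : φ (M 2 2) = φ c * φ (lam 2) ^ 2 := by
    have := hdvd _ _ h2; rwa [map_mul, map_pow] at this
  have s10 : φ (M 1 0) = φ (M 0 1) := congrArg φ (hsymm.apply 0 1)
  have s20 : φ (M 2 0) = φ (M 0 2) := congrArg φ (hsymm.apply 0 2)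
  have s21 : φ (M 2 1) = φ (M 1 2) := congrArg φ (hsymm.apply 1 2)
  rw [Matrix.det_fin_three]
  simp only [map_sub, map_add, map_mul]
  rw [s10, s20, s21, d0, d1, d2]
  exact char2_det two0 _ _ _ _ _ _ _

lemma sq_surj {k : Type*} [Field k] [Finite k] (h2 : (2:k) = 0) (z : k) :
    ∃ y : k, y ^ 2 = z := by
  have hinj : Function.Injective (fun x : k => x ^ 2) := by
    intro x y hxy
    simp only at hxy
    have : (x - y) ^ 2 = 0 := by linear_combination hxy + (y^2 - x*y)*h2
    have := pow_eq_zero_iff (n := 2) (by norm_num) |>.mp this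
    exact sub_eq_zero.mp this
  exact (Finite.injective_iff_surjective.mp hinj) z


open Polynomial in
lemma aux_zero
    (O K : Type*) [CommRing O] [IsDomain O] [IsDiscreteValuationRing O]
    [IsAdicComplete (IsLocalRing.maximalIdeal O) O]
    [Finite (IsLocalRing.ResidueField O)]
    [Field K] [Algebra O K] [IsFractionRing O K]
    (π : O) (hπ : Irreducible π)
    (h : ℕ) (hhpos : 0 < h) (h2 : Associated (π ^ (h+h)) (2 : O))
    (M : Matrix (Fin 3) (Fin 3) O) (hsymm : M.IsSymm) (hdet : IsUnit M.det)
    (c : O) (hc : IsUnit c) (lam : Fin 3 → O)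
    (hsq : ∀ x : Fin 3 → O,
      (2 : O) ∣ ((∑ i, ∑ j, M i j * x i * x j) - c * (∑ i, lam i * x i) ^ 2))
    (hl0 : IsUnit (lam 0)) :
    ∃ ξ : Fin 3 → K, ξ ≠ 0 ∧ ∑ i, ∑ j, algebraMap O K (M i j) * ξ i * ξ j = 0 := by
  obtain ⟨u, hu⟩ := h2
  set v : O := (u : O) with hvdef
  have hv : π^h * π^h * v = 2 := by rw [← pow_add]; exact hu
  set ι : O := ((hl0.unit⁻¹ : Oˣ) : O) with hιdef
  have hι : lam 0 * ι = 1 := by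
    rw [← hl0.unit_spec]; exact hl0.unit.mul_inv
  -- residue field facts
  set φ := IsLocalRing.residue O with hφdef
  have hπ0 : φ π = 0 := by
    by_contra hne
    exact hπ.not_isUnit ((IsLocalRing.residue_ne_zero_iff_isUnit π).mp hne)
  have two0 : φ 2 = 0 := by
    rw [← hv, map_mul, map_mul, map_pow, hπ0, zero_pow hhpos.ne', zero_mul, zero_mul]
  have two0' : (2 : IsLocalRing.ResidueField O) = 0 := by
    rw [← map_ofNat φ 2]
    exact two0
  -- witnesses from the squareness hypothesis
  have Hq := hsq ![-(ι*lam 1), 1, 0]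
  have Hd := hsq ![-(ι*lam 2), 0, 1]
  have Hm := hsq ![1, 0, 0]
  simp only [Fin.sum_univ_three, Matrix.cons_val_zero, Matrix.cons_val_one, Matrix.head_cons,
    Matrix.cons_val_two, Matrix.tail_cons, mul_one, mul_zero, zero_mul, add_zero, zero_add,
    one_mul, one_pow, mul_neg, neg_mul, neg_neg] at Hq Hd Hm
  obtain ⟨q', hq'⟩ := Hq
  obtain ⟨d', hd'⟩ := Hd
  obtain ⟨m', hm'⟩ := Hm
  -- diagonal residue relation
  have hd0 : φ (M 0 0) = φ c * φ (lam 0) ^ 2 := by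
    have h := congrArg φ hm'
    rw [map_sub, map_mul, map_mul, map_pow, two0, zero_mul, sub_eq_zero] at h
    exact h
  have hιk : φ (lam 0) * φ ι = 1 := by
    have := congrArg φ hι; rwa [map_mul, map_one] at this
  -- the key unit δ
  have hδ := resid_det two0 M hsymm c lam hsq
  have hdet0 : φ M.det ≠ 0 := (IsLocalRing.residue_ne_zero_iff_isUnit _).mpr hdet
  set δ := φ c * φ (lam 0) * φ (lam 1) * φ (lam 2)
    + φ (lam 0) * φ (M 1 2) + φ (lam 1) * φ (M 0 2) + φ (lam 2) * φ (M 0 1) with hδdef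
  have hδ0 : δ ≠ 0 := by
    intro hz
    rw [hδ, hz] at hdet0
    simp at hdet0
  -- choose w with  c w² + v q' ≡ 0  mod π
  have hcne : φ c ≠ 0 := (IsLocalRing.residue_ne_zero_iff_isUnit _).mpr hc
  obtain ⟨y, hy⟩ := sq_surj two0 (-(φ v * φ q') / φ c)
  obtain ⟨w, hw⟩ := IsLocalRing.residue_surjective (R := O) y
  have hkey : φ c * φ w ^ 2 + φ v * φ q' = 0 := by
    rw [hw, hy]
    field_simp
    ring
  -- the three scalars for the Hensel step
  obtain ⟨A, hA_def⟩ : ∃ A : O, A = c*w^2 + v*(q' + w*(π^h*(ι*(M 0 1 - M 0 0*(ι*lam 1))))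
      + w^2*(π^h*π^h)*(ι^2*m')) := ⟨_, rfl⟩
  obtain ⟨B, hB_def⟩ : ∃ B : O, B = v*(M 0 0*(ι*(π^h*w - lam 1))*(-(ι*lam 2))
      + M 0 2*(ι*(π^h*w - lam 1)) + M 0 1*(-(ι*lam 2)) + M 1 2) := ⟨_, rfl⟩
  obtain ⟨G, hG_def⟩ : ∃ G : O, G = v * d' := ⟨_, rfl⟩
  have hπh0 : φ (π ^ h) = 0 := by rw [map_pow, hπ0, zero_pow hhpos.ne']
  have hA0 : φ A = 0 := by
    rw [hA_def]
    simp only [map_add, map_mul, map_pow, map_sub, hπ0, hπh0]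
    linear_combination hkey
  have hB0 : φ B = φ v * (φ ι * δ) := by
    rw [hB_def, hδdef]
    simp only [map_add, map_mul, map_sub, map_neg, hπh0]
    linear_combination (φ v * φ ι^2 * φ (lam 1) * φ (lam 2))*hd0
      + (φ v * (φ c * φ ι * φ (lam 0) * φ (lam 1) * φ (lam 2) - φ (M 1 2)))*hιk
      + (-(φ v * (φ ι * φ (lam 1) * φ (M 0 2) + φ ι * φ (lam 2) * φ (M 0 1))))*two0'
  have hvu : IsUnit v := u.isUnit
  have hιu : IsUnit ι := (hl0.unit⁻¹).isUnit
  have hφBne : φ B ≠ 0 := by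
    rw [hB0]
    exact mul_ne_zero ((IsLocalRing.residue_ne_zero_iff_isUnit v).mpr hvu)
      (mul_ne_zero ((IsLocalRing.residue_ne_zero_iff_isUnit ι).mpr hιu) hδ0)
  have hBu : IsUnit B := (IsLocalRing.residue_ne_zero_iff_isUnit B).mp hφBne
  -- Hensel's lemma
  have hAGm : A * G ∈ IsLocalRing.maximalIdeal O := by
    apply Ideal.Quotient.eq_zero_iff_mem.mp
    show φ (A * G) = 0
    rw [map_mul, hA0, zero_mul]
  have hmon : (X^2 + (C B * X + C (A*G))).Monic := by
    apply Polynomial.monic_X_pow_add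
    apply lt_of_le_of_lt (Polynomial.degree_add_le _ _)
    rw [max_lt_iff]
    exact ⟨lt_of_le_of_lt (Polynomial.degree_C_mul_X_le _) (by norm_num),
      lt_of_le_of_lt Polynomial.degree_C_le (by norm_num)⟩
  obtain ⟨a, ha, -⟩ := HenselianRing.is_henselian (I := IsLocalRing.maximalIdeal O)
    (X^2 + (C B * X + C (A*G))) hmon 0 (by simpa using hAGm) (by
      have hev : Polynomial.eval 0 (Polynomial.derivative (X ^ 2 + (C B * X + C (A * G)))) = B := by
        simp
      rw [hev]
      exact isUnit_iff_ne_zero.mpr hφBne)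
  have haa : a^2 + B*a + A*G = 0 := by
    have h2 := ha
    simp [Polynomial.IsRoot] at h2
    linear_combination h2
  -- pass to K
  set φK := algebraMap O K with hφKdef
  have injK : Function.Injective φK := IsFractionRing.injective O K
  have hBK : φK B ≠ 0 := by
    rw [map_ne_zero_iff φK injK]
    exact hBu.ne_zero
  obtain ⟨t, hroot⟩ : ∃ t : K, φK A + φK B * t + φK G * t^2 = 0 := by
    rcases eq_or_ne G 0 with hG | hG
    · refine ⟨-(φK A / φK B), ?_⟩
      rw [hG, map_zero]
      field_simp
      ring
    · have hGK : φK G ≠ 0 := by rw [map_ne_zero_iff φK injK]; exact hG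
      refine ⟨φK a / φK G, ?_⟩
      have hK := congrArg φK haa
      simp only [map_add, map_mul, map_pow, map_zero] at hK
      have expand : φK A + φK B * (φK a / φK G) + φK G * (φK a / φK G)^2
          = (φK a^2 + φK B*φK a + φK A*φK G)/φK G := by
        field_simp
        ring
      rw [expand, hK, zero_div]
  -- the zero of the quadratic form
  refine ⟨![φK ι * (φK π^h * φK w - φK (lam 1)) + t * (-(φK ι * φK (lam 2))), 1, t], ?_, ?_⟩
  · intro hzero
    have := congrFun hzero 1
    simp at this
  · -- map all the O-identities into K
    have Kq' := congrArg φK hq'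
    have Kd' := congrArg φK hd'
    have Km' := congrArg φK hm'
    have Kι := congrArg φK hι
    have Kv := congrArg φK hv
    have Ks10 := congrArg φK (hsymm.apply 0 1)
    have Ks20 := congrArg φK (hsymm.apply 0 2)
    have Ks21 := congrArg φK (hsymm.apply 1 2)
    have KA := congrArg φK hA_def
    have KB := congrArg φK hB_def
    have KG := congrArg φK hG_def
    simp only [map_add, map_mul, map_sub, map_neg, map_pow, map_one, map_zero, map_ofNat] at Kq' Kd' Km' Kι Kv Ks10 Ks20 Ks21 KA KB KG
    simp only [Fin.sum_univ_three, Matrix.cons_val_zero, Matrix.cons_val_one, Matrix.head_cons,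
      Matrix.cons_val_two, Matrix.tail_cons]
    linear_combination
      -- comb_A
      Kq' + (φK c*φK (lam 1)^2*(φK (lam 0)*φK ι - 1))*Kι
      + (φK ι^2*(φK π^h)^2*φK w^2)*Km'
      + (φK c*(φK π^h)^2*φK w^2*(φK (lam 0)*φK ι + 1))*Kι
      + (-(φK q') + φK (M 0 0)*φK ι^2*φK (lam 1)*(φK π^h)*φK w
          - φK ι*(φK π^h)*φK w*φK (M 0 1) - φK m'*φK ι^2*(φK π^h)^2*φK w^2)*Kv
      + (φK ι*(φK π^h)*φK w)*Ks10
      -- comb_S (times t)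
      + t*((-(φK (M 0 0)*(φK ι*(φK π^h*φK w - φK (lam 1)))*(-(φK ι*φK (lam 2)))
            + φK (M 0 2)*(φK ι*(φK π^h*φK w - φK (lam 1)))
            + φK (M 0 1)*(-(φK ι*φK (lam 2))) + φK (M 1 2)))*Kv
          + (-(φK ι*φK (lam 2)))*Ks10 + (φK ι*(φK π^h*φK w - φK (lam 1)))*Ks20 + Ks21)
      -- comb_C (times t²)
      + t^2*(Kd' + (φK c*φK (lam 2)^2*(φK (lam 0)*φK ι - 1))*Kι + (-(φK d'))*Kv)
      -- the root
      + (φK π^h*φK π^h)*hroot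
      - (φK π^h*φK π^h)*KA - (φK π^h*φK π^h)*t*KB - (φK π^h*φK π^h)*t^2*KG

lemma sum_reindex {R : Type*} [CommRing R] (σ : Equiv.Perm (Fin 3))
    (N : Matrix (Fin 3) (Fin 3) R) (x : Fin 3 → R) :
    (∑ i, ∑ j, N (σ i) (σ j) * x i * x j)
      = ∑ i, ∑ j, N i j * (x ∘ σ.symm) i * (x ∘ σ.symm) j := by
  rw [← Equiv.sum_comp σ (fun i => ∑ j, N i j * (x ∘ σ.symm) i * (x ∘ σ.symm) j)]
  refine Finset.sum_congr rfl fun i _ => ?_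
  rw [← Equiv.sum_comp σ (fun j => N (σ i) j * (x ∘ σ.symm) (σ i) * (x ∘ σ.symm) j)]
  simp

lemma sum_reindex_lin {R : Type*} [CommRing R] (σ : Equiv.Perm (Fin 3))
    (lam : Fin 3 → R) (x : Fin 3 → R) :
    (∑ i, lam (σ i) * x i) = ∑ i, lam i * (x ∘ σ.symm) i := by
  rw [← Equiv.sum_comp σ (fun i => lam i * (x ∘ σ.symm) i)]
  simp

/-- Let `K` be a 2-adic local field with `e = v(2)` even, ring of integers
`O`, and let `C` be a unimodular integer-matrix ternary quadratic form over `O` (determinant a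
unit) that is congruent to `c·λ²` modulo `2` (`= π^e`) for some unit `c` and linear form `λ`
(i.e. it has maximal squareness `e`).  Then `C` has a nontrivial zero over `K`. -/
theorem stmt_11
    (O K : Type*) [CommRing O] [IsDomain O] [IsDiscreteValuationRing O]
    [IsAdicComplete (IsLocalRing.maximalIdeal O) O]
    [Finite (IsLocalRing.ResidueField O)]
    [Field K] [Algebra O K] [IsFractionRing O K]
    (π : O) (hπ : Irreducible π)
    (e : ℕ) (he : 0 < e) (heven : Even e) (h2 : Associated (π ^ e) (2 : O))
    (M : Matrix (Fin 3) (Fin 3) O) (hsymm : M.IsSymm) (hdet : IsUnit M.det)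
    (c : O) (hc : IsUnit c) (lam : Fin 3 → O)
    (hsq : ∀ x : Fin 3 → O,
      (2 : O) ∣ ((∑ i, ∑ j, M i j * x i * x j) - c * (∑ i, lam i * x i) ^ 2)) :
    ∃ ξ : Fin 3 → K, ξ ≠ 0 ∧ ∑ i, ∑ j, algebraMap O K (M i j) * ξ i * ξ j = 0 := by
  obtain ⟨h, rfl⟩ := heven
  have hhpos : 0 < h := by omega
  -- find an index where lam is a unit
  set φ := IsLocalRing.residue O with hφdef
  have hπ0 : φ π = 0 := by
    by_contra hne
    exact hπ.not_isUnit ((IsLocalRing.residue_ne_zero_iff_isUnit π).mp hne)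
  obtain ⟨u, hu⟩ := h2
  have two0 : φ 2 = 0 := by
    rw [← hu, map_mul, map_pow, hπ0, zero_pow (by omega : h + h ≠ 0), zero_mul]
  have hδ := resid_det two0 M hsymm c lam hsq
  have hdet0 : φ M.det ≠ 0 := (IsLocalRing.residue_ne_zero_iff_isUnit _).mpr hdet
  have hex : ∃ i : Fin 3, IsUnit (lam i) := by
    by_contra hno
    push_neg at hno
    have hz : ∀ i, φ (lam i) = 0 := fun i => by
      by_contra hne
      exact hno i ((IsLocalRing.residue_ne_zero_iff_isUnit _).mp hne)
    rw [hδ, hz 0, hz 1, hz 2] at hdet0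
    simp at hdet0
  obtain ⟨i, hi⟩ := hex
  set σ : Equiv.Perm (Fin 3) := Equiv.swap 0 i with hσdef
  have hsq' : ∀ x : Fin 3 → O,
      (2 : O) ∣ ((∑ i, ∑ j, (M.submatrix σ σ) i j * x i * x j)
        - c * (∑ i, (lam ∘ σ) i * x i) ^ 2) := by
    intro x
    have e1 : (∑ i, ∑ j, (M.submatrix σ σ) i j * x i * x j)
        = ∑ i, ∑ j, M i j * (x ∘ σ.symm) i * (x ∘ σ.symm) j := sum_reindex σ M x
    have e2 : (∑ i, (lam ∘ σ) i * x i) = ∑ i, lam i * (x ∘ σ.symm) i :=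
      sum_reindex_lin σ lam x
    rw [e1, e2]
    exact hsq (x ∘ σ.symm)
  have hl0 : IsUnit ((lam ∘ σ) 0) := by
    simpa [hσdef, Equiv.swap_apply_left] using hi
  obtain ⟨ξ', hne, hzero⟩ := aux_zero O K π hπ h hhpos ⟨u, hu⟩ (M.submatrix σ σ)
    (hsymm.submatrix σ) (by rwa [Matrix.det_submatrix_equiv_self]) c hc (lam ∘ σ) hsq' hl0
  refine ⟨ξ' ∘ σ.symm, ?_, ?_⟩
  · intro hz
    apply hne
    funext j
    have := congrFun hz (σ j)
    simpa using this
  · have e1 : (∑ i, ∑ j, algebraMap O K (M i j) * (ξ' ∘ σ.symm) i * (ξ' ∘ σ.symm) j)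
        = ∑ i, ∑ j, algebraMap O K (M (σ i) (σ j)) * ξ' i * ξ' j :=
      (sum_reindex σ (fun i j => algebraMap O K (M i j)) ξ').symm
    rw [e1]
    exact hzero
end

section
/- Let (ρ₁,…,ρₙ) be a reduced basis of a lattice ωI as above, and let (ρ'₁,…,ρ'ₙ) be another basis of ωI sorted by increasing valuation. Then v(ρ'_k) ≤ v(ρ_k) for every k. Consequently two reduced bases have equal valuation sequences, and the change-of-basis matrix [c_{ij}] between two reduced bases satisfies v(c_{ij}) ≥ v(ρᵢ) − v(ρⱼ) for all i, j. -/
/-- The valuation of a vector in `K̄ⁿ`: the minimum of the valuations of its coordinates. -/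
noncomputable def vecVal {F : Type*} [Field F] {n : ℕ} (v : F → WithTop ℚ)
    (x : Fin n → F) : WithTop ℚ :=
  Finset.univ.inf fun i => v (x i)

/-- `ρ` is a reduced basis of the full `O`-lattice `I ⊆ Fⁿ`. -/
def IsReducedBasis {F : Type*} [Field F] {n : ℕ} (v : F → WithTop ℚ) (K : Subfield F)
    (O : Type*) [CommRing O] [Algebra O F]
    (I : Submodule O (Fin n → F)) (ρ : Fin n → Fin n → F) : Prop :=
  (∀ i, ρ i ∈ I) ∧
  Submodule.span O (Set.range ρ) = I ∧
  LinearIndependent F ρ ∧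
  (∀ i j : Fin n, i ≤ j → vecVal v (ρ i) ≤ vecVal v (ρ j)) ∧
  (∀ c : Fin n → F, (∀ i, c i ∈ K) →
    ∀ i, vecVal v (∑ j, c j • ρ j) ≤ vecVal v (c i • ρ i))

section Aux

variable {F : Type*} [Field F]

lemma v_sum_le {ι : Type*} (v : F → WithTop ℚ)
    (hv0 : ∀ x : F, v x = ⊤ ↔ x = 0)
    (hvadd : ∀ x y : F, min (v x) (v y) ≤ v (x + y))
    (s : Finset ι) (f : ι → F) (c : WithTop ℚ)
    (h : ∀ i ∈ s, c ≤ v (f i)) : c ≤ v (∑ i ∈ s, f i) := by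
  induction s using Finset.cons_induction with
  | empty => simp [(hv0 0).mpr rfl]
  | cons a s ha ih =>
    rw [Finset.sum_cons]
    exact le_trans (le_min (h a (Finset.mem_cons_self a s))
      (ih fun i hi => h i (Finset.mem_cons_of_mem hi))) (hvadd _ _)

lemma v_prod_nonneg {ι : Type*} (v : F → WithTop ℚ)
    (hv1 : v 1 = 0)
    (hvmul : ∀ x y : F, v (x * y) = v x + v y)
    (s : Finset ι) (f : ι → F)
    (h : ∀ i ∈ s, 0 ≤ v (f i)) : 0 ≤ v (∏ i ∈ s, f i) := by
  induction s using Finset.cons_induction with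
  | empty => simp [hv1]
  | cons a s ha ih =>
    rw [Finset.prod_cons, hvmul]
    exact add_nonneg (h a (Finset.mem_cons_self a s))
      (ih fun i hi => h i (Finset.mem_cons_of_mem hi))

lemma v_neg_one (v : F → WithTop ℚ)
    (hv1 : v 1 = 0)
    (hvmul : ∀ x y : F, v (x * y) = v x + v y) : v (-1 : F) = 0 := by
  have h : v (-1 : F) + v (-1 : F) = 0 := by
    rw [← hvmul]
    simpa using hv1
  cases hh : v (-1 : F) with
  | top => rw [hh] at h; simp at h
  | coe q =>
    rw [hh] at h
    have hq : q + q = 0 := by exact_mod_cast h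
    have : q = 0 := by linarith
    rw [this]; rfl

lemma vecVal_smul {n : ℕ} (hn : 0 < n) (v : F → WithTop ℚ)
    (hvmul : ∀ x y : F, v (x * y) = v x + v y) (a : F) (x : Fin n → F) :
    vecVal v (a • x) = v a + vecVal v x := by
  have hne : (Finset.univ : Finset (Fin n)).Nonempty := ⟨⟨0, hn⟩, Finset.mem_univ _⟩
  unfold vecVal
  have h1 : ∀ i, v ((a • x) i) = v a + v (x i) := fun i => by
    simp [Pi.smul_apply, smul_eq_mul, hvmul]
  apply le_antisymm
  · obtain ⟨i, _, hi⟩ := Finset.exists_mem_eq_inf Finset.univ hne (fun i => v (x i))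
    calc Finset.univ.inf (fun i => v ((a • x) i)) ≤ v ((a • x) i) :=
          Finset.inf_le (Finset.mem_univ i)
      _ = v a + v (x i) := h1 i
      _ = v a + Finset.univ.inf (fun i => v (x i)) := by rw [hi]
  · apply Finset.le_inf
    intro i _
    rw [h1 i]
    exact add_le_add (le_refl _) (Finset.inf_le (Finset.mem_univ i))

lemma key_lemma
    {F : Type*} [Field F] {n : ℕ} (hn : 0 < n)
    (v : F → WithTop ℚ)
    (hv0 : ∀ x : F, v x = ⊤ ↔ x = 0)
    (hv1 : v 1 = 0)
    (hvmul : ∀ x y : F, v (x * y) = v x + v y)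
    (hvadd : ∀ x y : F, min (v x) (v y) ≤ v (x + y))
    (K : Subfield F)
    (O : Type*) [CommRing O] [Algebra O F]
    (hOval : ∀ a : O, algebraMap O F a ∈ K ∧ 0 ≤ v (algebraMap O F a))
    (I : Submodule O (Fin n → F))
    (hfull : Submodule.span F (I : Set (Fin n → F)) = ⊤)
    (ρ ρ' : Fin n → Fin n → F)
    (hρ : IsReducedBasis v K O I ρ)
    (hmem : ∀ i, ρ' i ∈ I)
    (hspan : Submodule.span O (Set.range ρ') = I)
    (hsorted : ∀ i j : Fin n, i ≤ j → vecVal v (ρ' i) ≤ vecVal v (ρ' j)) :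
    ∀ k, vecVal v (ρ' k) ≤ vecVal v (ρ k) := by
  obtain ⟨hρmem, hρspan, hρind, hρsorted, hρred⟩ := hρ
  -- ρ' is F-linearly independent
  have hsub : (I : Set (Fin n → F)) ⊆ (Submodule.span F (Set.range ρ') : Set (Fin n → F)) := by
    intro x hx
    rw [← hspan] at hx
    induction hx using Submodule.span_induction with
    | mem x hx => exact Submodule.subset_span hx
    | zero => exact (Submodule.span F _).zero_mem
    | add x y _ _ hx hy => exact add_mem hx hy
    | smul a x _ hx =>
      rw [← algebraMap_smul F a x]
      exact Submodule.smul_mem _ _ hx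
  have htop : ⊤ ≤ Submodule.span F (Set.range ρ') := by
    rw [← hfull]
    exact Submodule.span_le.mpr hsub
  have hind' : LinearIndependent F ρ' :=
    linearIndependent_of_top_le_span_of_card_eq_finrank htop
      (by simp [Module.finrank_fin_fun])
  -- coefficient matrices
  have hAex : ∀ j, ∃ a : Fin n → O, ∑ i, algebraMap O F (a i) • ρ i = ρ' j := by
    intro j
    have hx : ρ' j ∈ Submodule.span O (Set.range ρ) := by rw [hρspan]; exact hmem j
    obtain ⟨c, hc⟩ := (Submodule.mem_span_range_iff_exists_fun O).mp hx
    exact ⟨c, by simpa [algebraMap_smul] using hc⟩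
  choose a ha using hAex
  have hBex : ∀ i, ∃ b : Fin n → O, ∑ m, algebraMap O F (b m) • ρ' m = ρ i := by
    intro i
    have hx : ρ i ∈ Submodule.span O (Set.range ρ') := by rw [hspan]; exact hρmem i
    obtain ⟨c, hc⟩ := (Submodule.mem_span_range_iff_exists_fun O).mp hx
    exact ⟨c, by simpa [algebraMap_smul] using hc⟩
  choose b hb using hBex
  set A : Matrix (Fin n) (Fin n) F := Matrix.of fun j i => algebraMap O F (a j i) with hAdef
  set B : Matrix (Fin n) (Fin n) F := Matrix.of fun i m => algebraMap O F (b i m) with hBdef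
  have hAval : ∀ j i, 0 ≤ v (A j i) := fun j i => (hOval _).2
  have hBval : ∀ i m, 0 ≤ v (B i m) := fun i m => (hOval _).2
  have haA : ∀ j, ∑ i, A j i • ρ i = ρ' j := fun j => ha j
  have hbB : ∀ i, ∑ m, B i m • ρ' m = ρ i := fun i => hb i
  -- reducedness inequality
  have hred' : ∀ j i, vecVal v (ρ' j) ≤ v (A j i) + vecVal v (ρ i) := by
    intro j i
    have h := hρred (fun i => A j i) (fun i => (hOval _).1) i
    rw [haA j] at h
    calc vecVal v (ρ' j) ≤ vecVal v (A j i • ρ i) := h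
      _ = v (A j i) + vecVal v (ρ i) := vecVal_smul hn v hvmul _ _
  -- A * B = 1
  have hAB : A * B = 1 := by
    ext j m
    have e1 : ∑ m, (∑ i, A j i * B i m) • ρ' m = ρ' j := by
      calc ∑ m, (∑ i, A j i * B i m) • ρ' m
          = ∑ m, ∑ i, (A j i * B i m) • ρ' m := by
            simp [Finset.sum_smul]
        _ = ∑ i, ∑ m, (A j i * B i m) • ρ' m := Finset.sum_comm
        _ = ∑ i, A j i • ∑ m, B i m • ρ' m := by
            simp [Finset.smul_sum, mul_smul]
        _ = ∑ i, A j i • ρ i := by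
            simp only [hbB]
        _ = ρ' j := haA j
    have e2 : ∑ m, (if j = m then (1 : F) else 0) • ρ' m = ρ' j := by
      simp
    have h0 : ∑ m, ((∑ i, A j i * B i m) - (if j = m then (1 : F) else 0)) • ρ' m = 0 := by
      simp only [sub_smul, Finset.sum_sub_distrib, e1, e2, sub_self]
    have h1 := Fintype.linearIndependent_iff.mp hind' _ h0 m
    have h2 : (∑ i, A j i * B i m) = (if j = m then (1 : F) else 0) := by
      exact sub_eq_zero.mp h1
    simp [Matrix.mul_apply, Matrix.one_apply, h2]
  -- determinant valuations
  have vdet : ∀ M : Matrix (Fin n) (Fin n) F, (∀ i j, 0 ≤ v (M i j)) → 0 ≤ v M.det := by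
    intro M hM
    rw [Matrix.det_apply']
    apply v_sum_le v hv0 hvadd
    intro σ _
    rw [hvmul]
    refine add_nonneg ?_ (v_prod_nonneg v hv1 hvmul _ _ fun i _ => hM _ _)
    rcases Int.units_eq_one_or (Equiv.Perm.sign σ) with h | h <;>
      simp [h, hv1, v_neg_one v hv1 hvmul]
  have hdet1 : A.det * B.det = 1 := by rw [← Matrix.det_mul, hAB, Matrix.det_one]
  have hdetA0 : v A.det = 0 := by
    have h0 : v A.det + v B.det = 0 := by rw [← hvmul, hdet1, hv1]
    have hle : v A.det ≤ 0 := by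
      calc v A.det ≤ v A.det + v B.det := le_add_of_nonneg_right (vdet B hBval)
        _ = 0 := h0
    exact le_antisymm hle (vdet A hAval)
  -- main argument
  intro k
  by_contra hcon
  push_neg at hcon
  have hApos : ∀ j i, k ≤ j → i ≤ k → 0 < v (A j i) := by
    intro j i hkj hik
    rcases lt_or_ge 0 (v (A j i)) with h | h
    · exact h
    have h0 : v (A j i) = 0 := le_antisymm h (hAval j i)
    have hle : vecVal v (ρ' k) ≤ vecVal v (ρ k) := by
      calc vecVal v (ρ' k) ≤ vecVal v (ρ' j) := hsorted k j hkj
        _ ≤ v (A j i) + vecVal v (ρ i) := hred' j i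
        _ = vecVal v (ρ i) := by rw [h0, zero_add]
        _ ≤ vecVal v (ρ k) := hρsorted i k hik
    exact absurd hle (not_le.mpr hcon)
  have hterm : ∀ σ : Equiv.Perm (Fin n),
      0 < v (((Equiv.Perm.sign σ : ℤ) : F) * ∏ i, A (σ i) i) := by
    intro σ
    have hex : ∃ i, i ≤ k ∧ k ≤ σ i := by
      by_contra hcc
      push_neg at hcc
      have hmaps : ∀ i ∈ Finset.Iic k, σ i ∈ Finset.Iio k := fun i hi =>
        Finset.mem_Iio.mpr (hcc i (Finset.mem_Iic.mp hi))
      have hcard := Finset.card_le_card_of_injOn σ hmaps σ.injective.injOn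
      have hlt : (Finset.Iio k).card < (Finset.Iic k).card := by
        apply Finset.card_lt_card
        constructor
        · exact Finset.Iio_subset_Iic_self
        · intro hsub
          exact absurd (hsub (Finset.mem_Iic.mpr le_rfl)) (by simp)
      omega
    obtain ⟨i0, hi0, hσi0⟩ := hex
    rw [hvmul]
    have hsign : v (((Equiv.Perm.sign σ : ℤ) : F)) = 0 := by
      rcases Int.units_eq_one_or (Equiv.Perm.sign σ) with h | h <;>
        simp [h, hv1, v_neg_one v hv1 hvmul]
    rw [hsign, zero_add, ← Finset.mul_prod_erase Finset.univ _ (Finset.mem_univ i0), hvmul]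
    calc (0 : WithTop ℚ) < v (A (σ i0) i0) := hApos _ _ hσi0 hi0
      _ ≤ v (A (σ i0) i0) + v (∏ x ∈ Finset.univ.erase i0, A (σ x) x) :=
        le_add_of_nonneg_right (v_prod_nonneg v hv1 hvmul _ _ fun i _ => hAval _ _)
  have hpos : 0 < v A.det := by
    rw [Matrix.det_apply']
    have hinf : (0 : WithTop ℚ) <
        Finset.univ.inf (fun σ : Equiv.Perm (Fin n) =>
          v (((Equiv.Perm.sign σ : ℤ) : F) * ∏ i, A (σ i) i)) :=
      (Finset.lt_inf_iff (by simp)).mpr (fun σ _ => hterm σ)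
    exact lt_of_lt_of_le hinf (v_sum_le v hv0 hvadd _ _ _
      (fun σ _ => Finset.inf_le (Finset.mem_univ σ)))
  rw [hdetA0] at hpos
  exact lt_irrefl _ hpos

end Aux

/-- Let `ρ` be a reduced basis of a full lattice `I` and `ρ'` any other basis
of `I` sorted by increasing valuation.  Then `v(ρ'_k) ≤ v(ρ_k)` for every `k` (valuations of a
reduced basis are maximal).  Consequently two reduced bases have equal valuation sequences, and
the change-of-basis matrix `[c i j]` between two reduced bases satisfies
`v(c i j) ≥ v(ρ i) − v(ρ j)` for all `i, j`. -/
theorem stmt_15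
    (F : Type*) [Field F] (n : ℕ) (hn : 0 < n)
    (v : F → WithTop ℚ)
    (hv0 : ∀ x : F, v x = ⊤ ↔ x = 0)
    (hv1 : v 1 = 0)
    (hvmul : ∀ x y : F, v (x * y) = v x + v y)
    (hvadd : ∀ x y : F, min (v x) (v y) ≤ v (x + y))
    (K : Subfield F)
    (hdisc : ∀ x : F, x ∈ K → x ≠ 0 → ∃ k : ℤ, v x = (k : ℚ))
    (π : F) (hπK : π ∈ K) (hπ : v π = (1 : ℚ))
    (O : Type*) [CommRing O] [Algebra O F]
    (hinj : Function.Injective (algebraMap O F))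
    (hOval : ∀ a : O, algebraMap O F a ∈ K ∧ 0 ≤ v (algebraMap O F a))
    (hOsurj : ∀ y : F, y ∈ K → 0 ≤ v y → ∃ a : O, algebraMap O F a = y)
    (I : Submodule O (Fin n → F)) (hFG : I.FG)
    (hfull : Submodule.span F (I : Set (Fin n → F)) = ⊤)
    (ρ ρ' : Fin n → Fin n → F)
    (hρ : IsReducedBasis v K O I ρ)
    (hmem : ∀ i, ρ' i ∈ I)
    (hspan : Submodule.span O (Set.range ρ') = I)
    (hsorted : ∀ i j : Fin n, i ≤ j → vecVal v (ρ' i) ≤ vecVal v (ρ' j)) :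
    (∀ k, vecVal v (ρ' k) ≤ vecVal v (ρ k)) ∧
    (IsReducedBasis v K O I ρ' →
      (∀ k, vecVal v (ρ' k) = vecVal v (ρ k)) ∧
      ∀ c : Fin n → Fin n → F, (∀ i j, c i j ∈ K) →
        (∀ i, ρ' i = ∑ j, c i j • ρ j) →
        ∀ i j, vecVal v (ρ i) ≤ v (c i j) + vecVal v (ρ j)) := by
  have part1 := key_lemma hn v hv0 hv1 hvmul hvadd K O hOval I hfull ρ ρ' hρ hmem hspan hsorted
  refine ⟨part1, fun hρ' => ?_⟩
  have part1' := key_lemma hn v hv0 hv1 hvmul hvadd K O hOval I hfull ρ' ρ hρ'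
    hρ.1 hρ.2.1 hρ.2.2.2.1
  have heq : ∀ k, vecVal v (ρ' k) = vecVal v (ρ k) := fun k =>
    le_antisymm (part1 k) (part1' k)
  refine ⟨heq, ?_⟩
  intro c hc hrel i j
  have h1 := hρ.2.2.2.2 (c i) (hc i) j
  rw [← hrel i] at h1
  calc vecVal v (ρ i) = vecVal v (ρ' i) := (heq i).symm
    _ ≤ vecVal v (c i j • ρ j) := h1
    _ = v (c i j) + vecVal v (ρ j) := vecVal_smul hn v hvmul _ _
end

section
/- Let p ≥ 5 be prime, K = Q_p, R = Q_p⁴, and let χ : Q_p^× → F_p^× be a homomorphism extending the reduction map Z_p^× → F_p^×. Define ψ : R^× → F_p^× by ψ(a,b,c,d) = χ(ab/(cd)). Then ψ vanishes on the diagonally embedded Q_p^×, the orders O₁ = {(a,b,c,d) ∈ Z_p⁴ : a ≡ c, b ≡ d mod p} and O₂ = {(a,b,c,d) ∈ Z_p⁴ : a ≡ d, b ≡ c mod p} each satisfy ψ(Oᵢ^×) = 1, but there is no order O ⊆ Z_p⁴ containing both O₁ and O₂ with ψ(O^×) = 1. -/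
namespace Stmt16Aux
variable {p : ℕ} [Fact p.Prime]

lemma toZMod_congr {z w : ℤ_[p]} (h : ‖(z : ℚ_[p]) - (w : ℚ_[p])‖ ≤ (p : ℝ)⁻¹) :
    PadicInt.toZMod z = PadicInt.toZMod w := by
  have hp1 : (1 : ℝ) < p := by exact_mod_cast (Fact.out : p.Prime).one_lt
  have hlt : ‖z - w‖ < 1 := by
    rw [PadicInt.norm_def]
    push_cast
    calc ‖(z : ℚ_[p]) - (w : ℚ_[p])‖ ≤ (p : ℝ)⁻¹ := h
    _ < 1 := inv_lt_one_of_one_lt₀ hp1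
  have hker : z - w ∈ RingHom.ker (PadicInt.toZMod (p := p)) := by
    rw [PadicInt.ker_toZMod]
    exact PadicInt.not_isUnit_iff.2 hlt
  have h0 : PadicInt.toZMod (z - w) = 0 := hker
  rw [map_sub, sub_eq_zero] at h0
  exact h0

lemma exists_lift (x : ℚ_[p]ˣ) (h1 : ‖(x : ℚ_[p])‖ ≤ 1)
    (h2 : ‖((x⁻¹ : ℚ_[p]ˣ) : ℚ_[p])‖ ≤ 1) :
    ∃ u : ℤ_[p]ˣ, Units.map (PadicInt.Coe.ringHom (p := p)).toMonoidHom u = x := by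
  refine ⟨⟨⟨(x : ℚ_[p]), h1⟩, ⟨((x⁻¹ : ℚ_[p]ˣ) : ℚ_[p]), h2⟩, ?_, ?_⟩, ?_⟩
  · exact Subtype.ext (by show (x:ℚ_[p]) * ((x⁻¹:ℚ_[p]ˣ):ℚ_[p]) = 1; exact x.mul_inv)
  · exact Subtype.ext (by show ((x⁻¹:ℚ_[p]ˣ):ℚ_[p]) * (x:ℚ_[p]) = 1; exact x.inv_mul)
  · exact Units.ext rfl

lemma chi_eq_one (χ : ℚ_[p]ˣ →* (ZMod p)ˣ)
    (hχ : ∀ u : ℤ_[p]ˣ,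
      χ (Units.map (PadicInt.Coe.ringHom (p := p)).toMonoidHom u)
        = Units.map (PadicInt.toZMod (p := p)).toMonoidHom u)
    (a b c d : ℚ_[p]ˣ)
    (ha : ‖(a : ℚ_[p])‖ ≤ 1) (ha' : ‖((a⁻¹ : ℚ_[p]ˣ) : ℚ_[p])‖ ≤ 1)
    (hb : ‖(b : ℚ_[p])‖ ≤ 1) (hb' : ‖((b⁻¹ : ℚ_[p]ˣ) : ℚ_[p])‖ ≤ 1)
    (hc : ‖(c : ℚ_[p])‖ ≤ 1) (hc' : ‖((c⁻¹ : ℚ_[p]ˣ) : ℚ_[p])‖ ≤ 1)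
    (hd : ‖(d : ℚ_[p])‖ ≤ 1) (hd' : ‖((d⁻¹ : ℚ_[p]ˣ) : ℚ_[p])‖ ≤ 1)
    (hac : ‖(a : ℚ_[p]) - (c : ℚ_[p])‖ ≤ (p : ℝ)⁻¹)
    (hbd : ‖(b : ℚ_[p]) - (d : ℚ_[p])‖ ≤ (p : ℝ)⁻¹) :
    χ (a * b * (c * d)⁻¹) = 1 := by
  obtain ⟨A, hA⟩ := exists_lift a ha ha'
  obtain ⟨B, hB⟩ := exists_lift b hb hb'
  obtain ⟨C, hC⟩ := exists_lift c hc hc'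
  obtain ⟨D, hD⟩ := exists_lift d hd hd'
  have hAv : ((A : ℤ_[p]) : ℚ_[p]) = (a : ℚ_[p]) := congrArg Units.val hA
  have hBv : ((B : ℤ_[p]) : ℚ_[p]) = (b : ℚ_[p]) := congrArg Units.val hB
  have hCv : ((C : ℤ_[p]) : ℚ_[p]) = (c : ℚ_[p]) := congrArg Units.val hC
  have hDv : ((D : ℤ_[p]) : ℚ_[p]) = (d : ℚ_[p]) := congrArg Units.val hD
  have key : a * b * (c * d)⁻¹
      = Units.map (PadicInt.Coe.ringHom (p := p)).toMonoidHom (A * B * (C * D)⁻¹) := by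
    simp only [map_mul, map_inv, hA, hB, hC, hD]
  rw [key, hχ]
  have hAC : Units.map (PadicInt.toZMod (p := p)).toMonoidHom A
      = Units.map (PadicInt.toZMod (p := p)).toMonoidHom C :=
    Units.ext (toZMod_congr (by rw [hAv, hCv]; exact hac))
  have hBD : Units.map (PadicInt.toZMod (p := p)).toMonoidHom B
      = Units.map (PadicInt.toZMod (p := p)).toMonoidHom D :=
    Units.ext (toZMod_congr (by rw [hBv, hDv]; exact hbd))
  simp only [map_mul, map_inv, hAC, hBD]
  exact mul_inv_cancel _

lemma norm_natCast_eq_one {n : ℕ} (h : ¬ p ∣ n) : ‖((n : ℕ) : ℚ_[p])‖ = 1 := by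
  have hle : ‖((n : ℤ) : ℚ_[p])‖ ≤ 1 := Padic.norm_int_le_one _
  have hnlt : ¬ ‖((n : ℤ) : ℚ_[p])‖ < 1 := by
    rw [Padic.norm_intCast_lt_one_iff]
    exact_mod_cast h
  push_cast at hle hnlt ⊢
  exact le_antisymm hle (not_lt.1 hnlt)

end Stmt16Aux


/-- The order `O₁ = {(a,b,c,d) ∈ ℤ_p⁴ : a ≡ c, b ≡ d mod p}`, as a subset of `ℚ_p⁴`. -/
def orderSet₁ (p : ℕ) [Fact p.Prime] : Set (Fin 4 → ℚ_[p]) :=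
  {x | (∀ i, ‖x i‖ ≤ 1) ∧ ‖x 0 - x 2‖ ≤ (p : ℝ)⁻¹ ∧ ‖x 1 - x 3‖ ≤ (p : ℝ)⁻¹}

/-- The order `O₂ = {(a,b,c,d) ∈ ℤ_p⁴ : a ≡ d, b ≡ c mod p}`, as a subset of `ℚ_p⁴`. -/
def orderSet₂ (p : ℕ) [Fact p.Prime] : Set (Fin 4 → ℚ_[p]) :=
  {x | (∀ i, ‖x i‖ ≤ 1) ∧ ‖x 0 - x 3‖ ≤ (p : ℝ)⁻¹ ∧ ‖x 1 - x 2‖ ≤ (p : ℝ)⁻¹}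

set_option maxHeartbeats 800000 in
/-- Let `p ≥ 5` be prime, `K = ℚ_p`, `R = ℚ_p⁴`, and `χ : ℚ_p^× → 𝔽_p^×` a
homomorphism extending the reduction map `ℤ_p^× → 𝔽_p^×`.  Define `ψ : R^× → 𝔽_p^×` by
`ψ(a,b,c,d) = χ(ab/(cd))`.  Then `ψ` vanishes on the diagonally embedded `ℚ_p^×`; the orders
`O₁` and `O₂` above are admissible for `ψ` (i.e. `ψ(Oᵢ^×) = 1`); but there is no order
`O ⊆ ℤ_p⁴` containing both `O₁` and `O₂` with `ψ(O^×) = 1` — so `ψ` has no conductor ring. -/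
theorem stmt_16 (p : ℕ) [Fact p.Prime] (hp : 5 ≤ p)
    (χ : ℚ_[p]ˣ →* (ZMod p)ˣ)
    (hχ : ∀ u : ℤ_[p]ˣ,
      χ (Units.map (PadicInt.Coe.ringHom (p := p)).toMonoidHom u)
        = Units.map (PadicInt.toZMod (p := p)).toMonoidHom u) :
    (∀ t : ℚ_[p]ˣ, χ (t * t * (t * t)⁻¹) = 1) ∧
    (∀ a b c d : ℚ_[p]ˣ,
      (![(a : ℚ_[p]), (b : ℚ_[p]), (c : ℚ_[p]), (d : ℚ_[p])] ∈ orderSet₁ p) →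
      (![((a⁻¹ : ℚ_[p]ˣ) : ℚ_[p]), ((b⁻¹ : ℚ_[p]ˣ) : ℚ_[p]),
         ((c⁻¹ : ℚ_[p]ˣ) : ℚ_[p]), ((d⁻¹ : ℚ_[p]ˣ) : ℚ_[p])] ∈ orderSet₁ p) →
      χ (a * b * (c * d)⁻¹) = 1) ∧
    (∀ a b c d : ℚ_[p]ˣ,
      (![(a : ℚ_[p]), (b : ℚ_[p]), (c : ℚ_[p]), (d : ℚ_[p])] ∈ orderSet₂ p) →
      (![((a⁻¹ : ℚ_[p]ˣ) : ℚ_[p]), ((b⁻¹ : ℚ_[p]ˣ) : ℚ_[p]),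
         ((c⁻¹ : ℚ_[p]ˣ) : ℚ_[p]), ((d⁻¹ : ℚ_[p]ˣ) : ℚ_[p])] ∈ orderSet₂ p) →
      χ (a * b * (c * d)⁻¹) = 1) ∧
    ¬ ∃ S : Subring (Fin 4 → ℚ_[p]),
        orderSet₁ p ⊆ S ∧ orderSet₂ p ⊆ S ∧
        (∀ x ∈ S, ∀ i, ‖x i‖ ≤ 1) ∧
        (∀ a b c d : ℚ_[p]ˣ,
          (![(a : ℚ_[p]), (b : ℚ_[p]), (c : ℚ_[p]), (d : ℚ_[p])] ∈ S) →
          (![((a⁻¹ : ℚ_[p]ˣ) : ℚ_[p]), ((b⁻¹ : ℚ_[p]ˣ) : ℚ_[p]),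
             ((c⁻¹ : ℚ_[p]ˣ) : ℚ_[p]), ((d⁻¹ : ℚ_[p]ˣ) : ℚ_[p])] ∈ S) →
          χ (a * b * (c * d)⁻¹) = 1) := by
  have hprime : p.Prime := Fact.out
  have hpinv : (0:ℝ) ≤ (p : ℝ)⁻¹ := by positivity
  have h2n : ‖(2 : ℚ_[p])‖ = 1 := by
    have := Stmt16Aux.norm_natCast_eq_one (p := p) (n := 2)
      (fun h => by have := Nat.le_of_dvd (by norm_num) h; omega)
    simpa using this
  have h4n : ‖(4 : ℚ_[p])‖ = 1 := by
    have := Stmt16Aux.norm_natCast_eq_one (p := p) (n := 4)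
      (fun h => by have := Nat.le_of_dvd (by norm_num) h; omega)
    simpa using this
  refine ⟨fun t => by rw [mul_inv_cancel, map_one], ?_, ?_, ?_⟩
  · -- O₁ admissible
    intro a b c d hm hm'
    obtain ⟨hn, h02, h13⟩ := hm
    obtain ⟨hn', _, _⟩ := hm'
    exact Stmt16Aux.chi_eq_one χ hχ a b c d
      (by simpa using hn 0) (by simpa using hn' 0)
      (by simpa using hn 1) (by simpa using hn' 1)
      (by simpa using hn 2) (by simpa using hn' 2)
      (by simpa using hn 3) (by simpa using hn' 3)
      (by simpa using h02) (by simpa using h13)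
  · -- O₂ admissible
    intro a b c d hm hm'
    obtain ⟨hn, h03, h12⟩ := hm
    obtain ⟨hn', _, _⟩ := hm'
    have := Stmt16Aux.chi_eq_one χ hχ a b d c
      (by simpa using hn 0) (by simpa using hn' 0)
      (by simpa using hn 1) (by simpa using hn' 1)
      (by simpa using hn 3) (by simpa using hn' 3)
      (by simpa using hn 2) (by simpa using hn' 2)
      (by simpa using h03) (by simpa using h12)
    rwa [mul_comm (d : ℚ_[p]ˣ) c] at this
  · -- no conductor ring
    rintro ⟨S, hS1, hS2, _hbound, hψ⟩
    set a : ℚ_[p]ˣ := 1 with ha_def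
    set b : ℚ_[p]ˣ := -1 with hb_def
    set c : ℚ_[p]ˣ := Units.mk0 (2 : ℚ_[p]) two_ne_zero with hc_def
    set d : ℚ_[p]ˣ := -c with hd_def
    have hn2 : ‖(-2 : ℚ_[p])‖ ≤ 1 := by rw [norm_neg, h2n]
    have h2in : ‖(2 : ℚ_[p])⁻¹‖ = 1 := by rw [norm_inv, h2n, inv_one]
    have hn2i : ‖(-(2 : ℚ_[p])⁻¹)‖ ≤ 1 := by rw [norm_neg, h2in]
    have e1 : ![(1:ℚ_[p]), -2, 1, -2] ∈ orderSet₁ p := by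
      refine ⟨fun i => ?_, ?_, ?_⟩
      · fin_cases i <;> simp [hn2, h2n.le]
      · simp only [Matrix.cons_val_zero, Matrix.cons_val_one, Matrix.head_cons, Matrix.cons_val_two, Matrix.tail_cons, Matrix.cons_val_three, sub_self, norm_zero]; exact hpinv
      · simp only [Matrix.cons_val_zero, Matrix.cons_val_one, Matrix.head_cons, Matrix.cons_val_two, Matrix.tail_cons, Matrix.cons_val_three, sub_self, norm_zero]; exact hpinv
    have e2 : ![(0:ℚ_[p]), 1, 1, 0] ∈ orderSet₂ p := by
      refine ⟨fun i => ?_, ?_, ?_⟩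
      · fin_cases i <;> simp
      · simp only [Matrix.cons_val_zero, Matrix.cons_val_one, Matrix.head_cons, Matrix.cons_val_two, Matrix.tail_cons, Matrix.cons_val_three, sub_self, norm_zero]; exact hpinv
      · simp only [Matrix.cons_val_zero, Matrix.cons_val_one, Matrix.head_cons, Matrix.cons_val_two, Matrix.tail_cons, Matrix.cons_val_three, sub_self, norm_zero]; exact hpinv
    have f1 : ![(1:ℚ_[p]), -(2:ℚ_[p])⁻¹, 1, -(2:ℚ_[p])⁻¹] ∈ orderSet₁ p := by
      refine ⟨fun i => ?_, ?_, ?_⟩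
      · fin_cases i <;> simp [h2n]
      · simp only [Matrix.cons_val_zero, Matrix.cons_val_one, Matrix.head_cons, Matrix.cons_val_two, Matrix.tail_cons, Matrix.cons_val_three, sub_self, norm_zero]; exact hpinv
      · simp only [Matrix.cons_val_zero, Matrix.cons_val_one, Matrix.head_cons, Matrix.cons_val_two, Matrix.tail_cons, Matrix.cons_val_three, sub_self, norm_zero]; exact hpinv
    have f2 : ![(0:ℚ_[p]), -(2:ℚ_[p])⁻¹, -(2:ℚ_[p])⁻¹, 0] ∈ orderSet₂ p := by
      refine ⟨fun i => ?_, ?_, ?_⟩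
      · fin_cases i <;> simp [h2n]
      · simp only [Matrix.cons_val_zero, Matrix.cons_val_one, Matrix.head_cons, Matrix.cons_val_two, Matrix.tail_cons, Matrix.cons_val_three, sub_self, norm_zero]; exact hpinv
      · simp only [Matrix.cons_val_zero, Matrix.cons_val_one, Matrix.head_cons, Matrix.cons_val_two, Matrix.tail_cons, Matrix.cons_val_three, sub_self, norm_zero]; exact hpinv
    have hva : (a : ℚ_[p]) = 1 := rfl
    have hvb : (b : ℚ_[p]) = -1 := rfl
    have hvc : (c : ℚ_[p]) = 2 := rfl
    have hvd : (d : ℚ_[p]) = -2 := by rw [hd_def, Units.val_neg, hvc]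
    have hia : ((a⁻¹ : ℚ_[p]ˣ) : ℚ_[p]) = 1 := by rw [ha_def, inv_one, Units.val_one]
    have hib : ((b⁻¹ : ℚ_[p]ˣ) : ℚ_[p]) = -1 := by
      rw [Units.val_inv_eq_inv_val, hvb, inv_neg, inv_one]
    have hic : ((c⁻¹ : ℚ_[p]ˣ) : ℚ_[p]) = (2:ℚ_[p])⁻¹ := by
      rw [Units.val_inv_eq_inv_val, hvc]
    have hid : ((d⁻¹ : ℚ_[p]ˣ) : ℚ_[p]) = -(2:ℚ_[p])⁻¹ := by
      rw [Units.val_inv_eq_inv_val, hvd, inv_neg]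
    have hkey : (2:ℚ_[p])⁻¹ + (2:ℚ_[p])⁻¹ = 1 := by
      rw [← two_mul, mul_inv_cancel₀ (two_ne_zero)]
    have s0 : (1:ℚ_[p]) + 0 = (a : ℚ_[p]) := by rw [hva, add_zero]
    have s1 : (-2:ℚ_[p]) + 1 = (b : ℚ_[p]) := by rw [hvb]; ring
    have s2 : (1:ℚ_[p]) + 1 = (c : ℚ_[p]) := by rw [hvc]; ring
    have s3 : (-2:ℚ_[p]) + 0 = (d : ℚ_[p]) := by rw [hvd, add_zero]
    have mem1 : ![(a : ℚ_[p]), (b : ℚ_[p]), (c : ℚ_[p]), (d : ℚ_[p])] ∈ S := by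
      have heq : ![(1:ℚ_[p]), -2, 1, -2] + ![(0:ℚ_[p]), 1, 1, 0]
          = ![(a : ℚ_[p]), (b : ℚ_[p]), (c : ℚ_[p]), (d : ℚ_[p])] := by
        rw [Matrix.cons_add_cons, Matrix.cons_add_cons, Matrix.cons_add_cons,
          Matrix.cons_add_cons, Matrix.empty_add_empty, s0, s1, s2, s3]
      rw [← heq]
      exact S.add_mem (hS1 e1) (hS2 e2)
    have t0 : (1:ℚ_[p]) + 0 = ((a⁻¹ : ℚ_[p]ˣ) : ℚ_[p]) := by rw [hia, add_zero]
    have t1 : -(2:ℚ_[p])⁻¹ + -(2:ℚ_[p])⁻¹ = ((b⁻¹ : ℚ_[p]ˣ) : ℚ_[p]) := by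
      rw [hib, ← hkey]; ring
    have t2 : (1:ℚ_[p]) + -(2:ℚ_[p])⁻¹ = ((c⁻¹ : ℚ_[p]ˣ) : ℚ_[p]) := by
      rw [hic, ← hkey]; ring
    have t3 : -(2:ℚ_[p])⁻¹ + 0 = ((d⁻¹ : ℚ_[p]ˣ) : ℚ_[p]) := by rw [hid, add_zero]
    have mem2 : ![((a⁻¹ : ℚ_[p]ˣ) : ℚ_[p]), ((b⁻¹ : ℚ_[p]ˣ) : ℚ_[p]),
         ((c⁻¹ : ℚ_[p]ˣ) : ℚ_[p]), ((d⁻¹ : ℚ_[p]ˣ) : ℚ_[p])] ∈ S := by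
      have heq : ![(1:ℚ_[p]), -(2:ℚ_[p])⁻¹, 1, -(2:ℚ_[p])⁻¹]
            + ![(0:ℚ_[p]), -(2:ℚ_[p])⁻¹, -(2:ℚ_[p])⁻¹, 0]
          = ![((a⁻¹ : ℚ_[p]ˣ) : ℚ_[p]), ((b⁻¹ : ℚ_[p]ˣ) : ℚ_[p]),
            ((c⁻¹ : ℚ_[p]ˣ) : ℚ_[p]), ((d⁻¹ : ℚ_[p]ˣ) : ℚ_[p])] := by
        rw [Matrix.cons_add_cons, Matrix.cons_add_cons, Matrix.cons_add_cons,
          Matrix.cons_add_cons, Matrix.empty_add_empty, t0, t1, t2, t3]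
      rw [← heq]
      exact S.add_mem (hS1 f1) (hS2 f2)
    have hone : χ (a * b * (c * d)⁻¹) = 1 := hψ a b c d mem1 mem2
    have hxval : ((a * b * (c * d)⁻¹ : ℚ_[p]ˣ) : ℚ_[p]) = (4 : ℚ_[p])⁻¹ := by
      simp only [Units.val_mul, Units.val_inv_eq_inv_val]
      rw [hva, hvb, hvc, hvd]
      rw [one_mul, show ((2:ℚ_[p]) * -2) = -(4:ℚ_[p]) by norm_num, inv_neg,
        neg_mul_neg, one_mul]
    set y : ℚ_[p]ˣ := (a * b * (c * d)⁻¹)⁻¹ with hy_def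
    have hyval : ((y : ℚ_[p]ˣ) : ℚ_[p]) = (4 : ℚ_[p]) := by
      rw [hy_def, Units.val_inv_eq_inv_val, hxval, inv_inv]
    have hy1 : χ y = 1 := by rw [hy_def, map_inv, hone, inv_one]
    obtain ⟨U, hU⟩ := Stmt16Aux.exists_lift y
      (by rw [hyval, h4n])
      (by rw [inv_inv, hxval, norm_inv, h4n, inv_one])
    have hUv : ((U : ℤ_[p]) : ℚ_[p]) = (4 : ℚ_[p]) := by
      have := congrArg Units.val hU
      simp [hyval] at this
      exact this
    have hU4 : PadicInt.toZMod (U : ℤ_[p]) = PadicInt.toZMod ((4 : ℕ) : ℤ_[p]) :=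
      Stmt16Aux.toZMod_congr (by
        rw [hUv, PadicInt.coe_natCast, Nat.cast_ofNat, sub_self, norm_zero]
        positivity)
    have hmap : Units.map (PadicInt.toZMod (p := p)).toMonoidHom U = 1 := by
      rw [← hχ U, hU, hy1]
    have hval4 : PadicInt.toZMod (U : ℤ_[p]) = 1 := congrArg Units.val hmap
    rw [hU4] at hval4
    have hfour : ((4 : ℕ) : ZMod p) = 1 := by
      rw [← map_natCast (PadicInt.toZMod (p := p)) 4]
      exact hval4
    have h3 : ((3 : ℕ) : ZMod p) = 0 := by
      have : ((3 : ℕ) : ZMod p) = ((4 : ℕ) : ZMod p) - 1 := by push_cast; ring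
      rw [this, hfour, sub_self]
    have := (ZMod.natCast_eq_zero_iff 3 p).1 h3
    have := Nat.le_of_dvd (by norm_num) this
    omega
end
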